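/- arXiv:1707.00520 — 4 statements merged into one kernel-verified Lean document; each statement's English description precedes it below -/
import Mathlib

section
/- Exponential-decay induction via φ_p(S). Fix d ≥ 1, p ∈ [0,1], L ≥ 1 and a finite set S ⊆ Z^d with 0 ∈ S ⊆ Λ_{L−1}. Then for every k ≥ 1, ℙ_p[0 ↔ ∂Λ_{kL}] ≤ φ_p(S)^k. In particular, if φ_p(S) < 1 then ℙ_p[0 ↔ ∂Λ_n] decays exponentially in n. -/
open scoped BigOperators Classical ENNReal
open MeasureTheory

namespace Stmt13

/-- The `i`-th unit vector of `ℤ^d`. -/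
def unit (d : ℕ) (i : Fin d) : Fin d → ℤ := fun j => if j = i then 1 else 0

/-- Adjacency by an open edge; the edge `(x, i)` joins `x` and `x + unit i`. -/
def adj (d : ℕ) (ω : ((Fin d → ℤ) × Fin d) → Bool) (x y : Fin d → ℤ) : Prop :=
  ∃ i : Fin d, (ω (x, i) = true ∧ y = x + unit d i) ∨ (ω (y, i) = true ∧ x = y + unit d i)

/-- Connectivity by open paths. -/
def conn (d : ℕ) (ω : ((Fin d → ℤ) × Fin d) → Bool) : (Fin d → ℤ) → (Fin d → ℤ) → Prop :=
  Relation.ReflTransGen (adj d ω)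

/-- Connectivity by open paths using only edges with both endpoints in `S`. -/
def connIn (d : ℕ) (S : Set (Fin d → ℤ)) (ω : ((Fin d → ℤ) × Fin d) → Bool) :
    (Fin d → ℤ) → (Fin d → ℤ) → Prop :=
  Relation.ReflTransGen fun a b => adj d ω a b ∧ a ∈ S ∧ b ∈ S

/-- Membership in the box `Λ_n = [-n,n]^d`. -/
def inBox (d : ℕ) (n : ℕ) (x : Fin d → ℤ) : Prop := ∀ i : Fin d, |x i| ≤ (n : ℤ)

/-- Nearest-neighbor adjacency of the lattice `ℤ^d`. -/
def latAdj (d : ℕ) (x y : Fin d → ℤ) : Prop :=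
  ∃ i : Fin d, y = x + unit d i ∨ x = y + unit d i

/-- The inner vertex boundary `∂Λ_n` of the box. -/
def sphere (d : ℕ) (n : ℕ) : Set (Fin d → ℤ) :=
  {x | inBox d n x ∧ ∃ y, latAdj d x y ∧ ¬inBox d n y}

/-- The one-arm event `{0 ↔ ∂Λ_n}`. -/
def oneArm (d : ℕ) (n : ℕ) : Set (((Fin d → ℤ) × Fin d) → Bool) :=
  {ω | ∃ y ∈ sphere d n, conn d ω 0 y}

/-- `φ_p(S) = p ∑_{xy ∈ ΔS} ℙ_p[0 ↔^S x]`: for each edge of the edge-boundary of `S`,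
the probability that `0` is connected inside `S` to its endpoint lying in `S`. -/
noncomputable def phiS (d : ℕ) (P : Measure (((Fin d → ℤ) × Fin d) → Bool)) (p : ℝ)
    (S : Finset (Fin d → ℤ)) : ℝ :=
  p * ∑ x ∈ S, ∑ i : Fin d,
    ((if x + unit d i ∉ S then (P {ω | connIn d (↑S) ω 0 x}).toReal else 0) +
      (if x - unit d i ∉ S then (P {ω | connIn d (↑S) ω 0 x}).toReal else 0))

-- ## Auxiliary definitions

/-- vertices -/
abbrev Vt (d : ℕ) := Fin d → ℤ
/-- edges -/
abbrev Ed (d : ℕ) := (Fin d → ℤ) × Fin d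
/-- configurations -/
abbrev Cfg (d : ℕ) := Ed d → Bool

noncomputable def pr (p : ℝ) : Bool → ℝ≥0∞ :=
  fun b => if b then ENNReal.ofReal p else ENNReal.ofReal (1 - p)

def Cyl {d : ℕ} (T : Finset (Ed d)) (η : Cfg d) : Set (Cfg d) := {ω | ∀ e ∈ T, ω e = η e}

def BasedOn {d : ℕ} (T : Set (Ed d)) (A : Set (Cfg d)) : Prop :=
  ∀ ω ω' : Cfg d, (∀ e ∈ T, ω e = ω' e) → ω ∈ A → ω' ∈ A

/-- open-path step along edges in the allowed set `A` -/
def rE (d : ℕ) (A : Set (Ed d)) (ω : Cfg d) (u v : Vt d) : Prop :=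
  ∃ i : Fin d, ((u, i) ∈ A ∧ ω (u, i) = true ∧ v = u + unit d i) ∨
    ((v, i) ∈ A ∧ ω (v, i) = true ∧ u = v + unit d i)

noncomputable def boxF (d m : ℕ) : Finset (Vt d) :=
  Fintype.piFinset fun _ => Finset.Icc (-(m : ℤ)) (m : ℤ)

noncomputable def GE (d m : ℕ) : Finset (Ed d) := boxF d m ×ˢ Finset.univ

def shiftc (d : ℕ) (y : Vt d) (ω : Cfg d) : Cfg d := fun e => ω (e.1 + y, e.2)


section Prob
variable {d : ℕ} {P : Measure (Cfg d)} {p : ℝ}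

def IsBer (d : ℕ) (P : Measure (Cfg d)) (p : ℝ) : Prop :=
  ∀ (T : Finset (Ed d)) (η : Cfg d),
    P {ω | ∀ e ∈ T, ω e = η e}
      = ∏ e ∈ T, if η e then ENNReal.ofReal p else ENNReal.ofReal (1 - p)

lemma P_cyl (hBer : IsBer d P p) (T : Finset (Ed d)) (η : Cfg d) :
    P (Cyl T η) = ∏ e ∈ T, pr p (η e) := hBer T η

lemma measurableSet_cyl (T : Finset (Ed d)) (η : Cfg d) : MeasurableSet (Cyl T η) := by
  have : Cyl T η = ⋂ e ∈ T, (fun ω : Cfg d => ω e) ⁻¹' {η e} := by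
    ext ω; simp only [Cyl, Set.mem_setOf_eq, Set.mem_iInter, Set.mem_preimage,
      Set.mem_singleton_iff]
  rw [this]
  exact MeasurableSet.biInter T.countable_toSet
    fun e _ => (measurable_pi_apply e) (measurableSet_singleton (η e))

noncomputable def extT (T : Finset (Ed d)) (σ : {x // x ∈ T} → Bool) : Cfg d :=
  fun e => if h : e ∈ T then σ ⟨e, h⟩ else false

noncomputable def sel (T : Finset (Ed d)) (A : Set (Cfg d)) : Finset ({x // x ∈ T} → Bool) :=
  Finset.univ.filter fun σ => extT T σ ∈ A

lemma based_eq_biUnion {T : Finset (Ed d)} {A : Set (Cfg d)} (hA : BasedOn (↑T) A) :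
    A = ⋃ σ ∈ sel T A, Cyl T (extT T σ) := by
  ext ω
  constructor
  · intro hω
    have hsel : (fun t : {x // x ∈ T} => ω ↑t) ∈ sel T A := by
      simp only [sel, Finset.mem_filter, Finset.mem_univ, true_and]
      exact hA ω _ (fun e he => by simp [extT, Finset.mem_coe.1 he]) hω
    exact Set.mem_biUnion hsel (fun e he => by simp [extT, he])
  · intro h
    simp only [Set.mem_iUnion] at h
    obtain ⟨σ, hσ, hmem⟩ := h
    simp only [sel, Finset.mem_filter, Finset.mem_univ, true_and] at hσ
    exact hA (extT T σ) ω (fun e he => (hmem e he).symm) hσ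

lemma cyl_extT_disjoint {T : Finset (Ed d)} {σ τ : {x // x ∈ T} → Bool} (h : σ ≠ τ) :
    Disjoint (Cyl T (extT T σ)) (Cyl T (extT T τ)) := by
  rw [Set.disjoint_left]
  intro ω h1 h2
  apply h; funext t
  have h3 := (h1 t t.2).symm.trans (h2 t t.2)
  simpa [extT, t.2] using h3

lemma measurableSet_based {T : Finset (Ed d)} {A : Set (Cfg d)} (hA : BasedOn (↑T) A) :
    MeasurableSet A := by
  rw [based_eq_biUnion hA]
  exact (sel T A).measurableSet_biUnion fun σ _ => measurableSet_cyl _ _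

lemma P_based_eq_sum {T : Finset (Ed d)} {A : Set (Cfg d)} (hA : BasedOn (↑T) A) :
    P A = ∑ σ ∈ sel T A, P (Cyl T (extT T σ)) := by
  conv_lhs => rw [based_eq_biUnion hA]
  exact measure_biUnion_finset
    (fun σ _ τ _ h => cyl_extT_disjoint h) (fun σ _ => measurableSet_cyl _ _)

lemma cyl_inter_cyl {T U : Finset (Ed d)} (hTU : Disjoint T U) (a b : Cfg d) :
    Cyl T a ∩ Cyl U b = Cyl (T ∪ U) (fun e => if e ∈ T then a e else b e) := by
  ext ω
  simp only [Cyl, Set.mem_inter_iff, Set.mem_setOf_eq, Finset.mem_union]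
  constructor
  · rintro ⟨h1, h2⟩ e he
    rcases he with he | he
    · simp [he, h1 e he]
    · have : e ∉ T := fun hT => (Finset.disjoint_left.1 hTU) hT he
      simp [this, h2 e he]
  · intro h
    constructor
    · intro e he; simpa [he] using h e (Or.inl he)
    · intro e he
      have hT : e ∉ T := fun hT => (Finset.disjoint_left.1 hTU) hT he
      simpa [hT] using h e (Or.inr he)

lemma P_cyl_inter_cyl (hBer : IsBer d P p) {T U : Finset (Ed d)} (hTU : Disjoint T U)
    (a b : Cfg d) : P (Cyl T a ∩ Cyl U b) = P (Cyl T a) * P (Cyl U b) := by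
  rw [cyl_inter_cyl hTU, P_cyl hBer, P_cyl hBer, P_cyl hBer, Finset.prod_union hTU]
  congr 1
  · exact Finset.prod_congr rfl fun e he => by simp [he]
  · refine Finset.prod_congr rfl fun e he => ?_
    have hT : e ∉ T := fun hT => (Finset.disjoint_left.1 hTU) hT he
    simp [hT]

lemma P_indep (hBer : IsBer d P p) {T U : Finset (Ed d)} (hTU : Disjoint T U)
    {A B : Set (Cfg d)} (hA : BasedOn (↑T) A) (hB : BasedOn (↑U) B) :
    P (A ∩ B) = P A * P B := by
  have hAB : A ∩ B = ⋃ σ ∈ sel T A, (Cyl T (extT T σ) ∩ B) := by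
    conv_lhs => rw [based_eq_biUnion hA]
    rw [Set.iUnion₂_inter]
  have hBU : ∀ σ, Cyl T (extT T σ) ∩ B = ⋃ τ ∈ sel U B, (Cyl T (extT T σ) ∩ Cyl U (extT U τ)) := by
    intro σ
    conv_lhs => rw [based_eq_biUnion hB]
    rw [Set.inter_iUnion₂]
  rw [hAB]
  rw [measure_biUnion_finset (fun σ _ τ _ h =>
      ((cyl_extT_disjoint h).mono Set.inter_subset_left Set.inter_subset_left))
    (fun σ _ => ((measurableSet_cyl _ _).inter (measurableSet_based hB)))]
  have hterm : ∀ σ, P (Cyl T (extT T σ) ∩ B) = P (Cyl T (extT T σ)) * P B := by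
    intro σ
    rw [hBU σ]
    rw [measure_biUnion_finset (fun τ _ τ' _ h =>
        ((cyl_extT_disjoint h).mono Set.inter_subset_right Set.inter_subset_right))
      (fun τ _ => ((measurableSet_cyl _ _).inter (measurableSet_cyl _ _)))]
    rw [P_based_eq_sum hB, Finset.mul_sum]
    exact Finset.sum_congr rfl fun τ _ => P_cyl_inter_cyl hBer hTU _ _
  rw [Finset.sum_congr rfl fun σ _ => hterm σ, ← Finset.sum_mul, ← P_based_eq_sum hA]

end Prob

section Paths
variable {d : ℕ}

lemma rE_mono {A B : Set (Ed d)} (h : A ⊆ B) {ω : Cfg d} {u v : Vt d} :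
    rE d A ω u v → rE d B ω u v := by
  rintro ⟨i, ⟨hA, hω, hv⟩ | ⟨hA, hω, hu⟩⟩
  · exact ⟨i, Or.inl ⟨h hA, hω, hv⟩⟩
  · exact ⟨i, Or.inr ⟨h hA, hω, hu⟩⟩

lemma rE_univ_iff_adj {ω : Cfg d} {u v : Vt d} : rE d Set.univ ω u v ↔ adj d ω u v := by
  constructor
  · rintro ⟨i, ⟨-, hω, hv⟩ | ⟨-, hω, hu⟩⟩
    · exact ⟨i, Or.inl ⟨hω, hv⟩⟩
    · exact ⟨i, Or.inr ⟨hω, hu⟩⟩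
  · rintro ⟨i, ⟨hω, hv⟩ | ⟨hω, hu⟩⟩
    · exact ⟨i, Or.inl ⟨trivial, hω, hv⟩⟩
    · exact ⟨i, Or.inr ⟨trivial, hω, hu⟩⟩

lemma adj_latAdj {ω : Cfg d} {u v : Vt d} : adj d ω u v → latAdj d u v := by
  rintro ⟨i, ⟨-, hv⟩ | ⟨-, hu⟩⟩
  · exact ⟨i, Or.inl hv⟩
  · exact ⟨i, Or.inr hu⟩

lemma rE_adj {A : Set (Ed d)} {ω : Cfg d} {u v : Vt d} : rE d A ω u v → adj d ω u v :=
  fun h => rE_univ_iff_adj.1 (rE_mono (Set.subset_univ A) h)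

lemma rE_congr {A : Set (Ed d)} {ω ω' : Cfg d} (h : ∀ e ∈ A, ω e = ω' e) {u v : Vt d} :
    rE d A ω u v → rE d A ω' u v := by
  rintro ⟨i, ⟨hA, hω, hv⟩ | ⟨hA, hω, hu⟩⟩
  · exact ⟨i, Or.inl ⟨hA, (h _ hA) ▸ hω, hv⟩⟩
  · exact ⟨i, Or.inr ⟨hA, (h _ hA) ▸ hω, hu⟩⟩

lemma basedOn_reach (A : Set (Ed d)) (Z : Set (Vt d)) (a : Vt d) :
    BasedOn A {ω : Cfg d | ∃ z ∈ Z, Relation.ReflTransGen (rE d A ω) a z} := by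
  rintro ω ω' hagree ⟨z, hz, hpath⟩
  exact ⟨z, hz, Relation.ReflTransGen.mono (fun u v h => rE_congr hagree h) _ _ hpath⟩

lemma mem_boxF {m : ℕ} {x : Vt d} : x ∈ boxF d m ↔ inBox d m x := by
  simp [boxF, inBox, Fintype.mem_piFinset, Finset.mem_Icc, abs_le]

lemma GE_mono {m m' : ℕ} (h : m ≤ m') : GE d m ⊆ GE d m' := by
  intro e he
  rw [GE, Finset.mem_product] at he ⊢
  refine ⟨?_, he.2⟩
  rw [mem_boxF] at *
  intro i
  exact (he.1 i).trans (by exact_mod_cast Int.ofNat_le.2 h)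

lemma exists_mem_GE (e : Ed d) : ∃ m : ℕ, e ∈ GE d m := by
  refine ⟨Finset.univ.sup fun j => (e.1 j).natAbs, ?_⟩
  rw [GE, Finset.mem_product]
  refine ⟨mem_boxF.2 fun i => ?_, Finset.mem_univ _⟩
  rw [Int.abs_eq_natAbs]
  exact Int.ofNat_le.2 (Finset.le_sup (f := fun j => (e.1 j).natAbs) (Finset.mem_univ i))

lemma reach_bounded {A : Set (Ed d)} {ω : Cfg d} {a b : Vt d}
    (h : Relation.ReflTransGen (rE d A ω) a b) :
    ∃ m : ℕ, Relation.ReflTransGen (rE d (A ∩ ↑(GE d m)) ω) a b := by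
  induction h with
  | refl => exact ⟨0, Relation.ReflTransGen.refl⟩
  | @tail u v _ hbc ih =>
    obtain ⟨m₁, h₁⟩ := ih
    obtain ⟨i, hcase⟩ := hbc
    have key : ∃ m₂, rE d (A ∩ ↑(GE d m₂)) ω u v := by
      rcases hcase with ⟨hA, hω, hv⟩ | ⟨hA, hω, hu⟩
      · obtain ⟨m₂, hm⟩ := exists_mem_GE (d := d) (u, i)
        exact ⟨m₂, i, Or.inl ⟨⟨hA, hm⟩, hω, hv⟩⟩
      · obtain ⟨m₂, hm⟩ := exists_mem_GE (d := d) (v, i)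
        exact ⟨m₂, i, Or.inr ⟨⟨hA, hm⟩, hω, hu⟩⟩
    obtain ⟨m₂, h₂⟩ := key
    refine ⟨max m₁ m₂, Relation.ReflTransGen.tail
      (Relation.ReflTransGen.mono (fun u v h => rE_mono (Set.inter_subset_inter_right _ ?_) h) _ _ h₁)
      (rE_mono (Set.inter_subset_inter_right _ ?_) h₂)⟩
    · exact Finset.coe_subset.2 (GE_mono (le_max_left _ _))
    · exact Finset.coe_subset.2 (GE_mono (le_max_right _ _))

lemma conn_iff_exists_bounded {ω : Cfg d} {a b : Vt d} :
    conn d ω a b ↔ ∃ m : ℕ, Relation.ReflTransGen (rE d ↑(GE d m) ω) a b := by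
  constructor
  · intro h
    obtain ⟨m, hm⟩ := reach_bounded (A := Set.univ) (ω := ω)
      (Relation.ReflTransGen.mono (fun u v huv => rE_univ_iff_adj.2 huv) _ _ h)
    exact ⟨m, Relation.ReflTransGen.mono (fun u v huv => rE_mono (by simp) huv) _ _ hm⟩
  · rintro ⟨m, hm⟩
    exact Relation.ReflTransGen.mono (fun u v huv => rE_adj huv) _ _ hm

lemma latAdj_sub {u v y : Vt d} (h : latAdj d u v) : latAdj d (u - y) (v - y) := by
  obtain ⟨i, h | h⟩ := h
  · exact ⟨i, Or.inl (by rw [h, add_sub_right_comm])⟩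
  · exact ⟨i, Or.inr (by rw [h, add_sub_right_comm])⟩

lemma sphere_coord {n : ℕ} {z : Vt d} (hz : z ∈ sphere d n) : ∃ j, |z j| = (n : ℤ) := by
  obtain ⟨hin, y, ⟨i, hcase⟩, hout⟩ := hz
  rw [inBox] at hout
  push_neg at hout
  obtain ⟨j, hj⟩ := hout
  refine ⟨j, le_antisymm (hin j) ?_⟩
  have hyz : |y j - z j| ≤ 1 := by
    rcases hcase with h | h
    · rw [h]
      simp only [Pi.add_apply, unit, add_sub_cancel_left]
      split <;> simp
    · rw [h]
      simp only [Pi.add_apply, unit, sub_add_cancel_left]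
      split <;> simp
  have h2 : |y j| - |z j| ≤ 1 := (abs_sub_abs_le_abs_sub _ _).trans hyz
  omega

lemma mem_sphere_of_coord {n : ℕ} {z : Vt d} (hin : inBox d n z) (j : Fin d)
    (hj : |z j| = (n : ℤ)) : z ∈ sphere d n := by
  refine ⟨hin, ?_⟩
  by_cases hz : 0 ≤ z j
  · refine ⟨z + unit d j, ⟨j, Or.inl rfl⟩, fun hbox => ?_⟩
    have := hbox j
    simp only [Pi.add_apply, unit, if_pos rfl, eq_self_iff_true, if_true] at this
    rw [abs_of_nonneg hz] at hj
    have h2 : z j + 1 ≤ |z j + 1| := le_abs_self _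
    omega
  · refine ⟨z - unit d j, ⟨j, Or.inr (by ring)⟩, fun hbox => ?_⟩
    have := hbox j
    simp only [Pi.sub_apply, unit, if_pos rfl, eq_self_iff_true, if_true] at this
    rw [abs_of_neg (not_le.1 hz)] at hj
    have h2 : -(z j - 1) ≤ |z j - 1| := neg_le_abs _
    omega

lemma exit_lemma {r : Vt d → Vt d → Prop} (hr : ∀ u v, r u v → latAdj d u v)
    {y a b : Vt d} {n : ℕ} (h : Relation.ReflTransGen r a b)
    (ha : inBox d n (a - y)) (hb : ¬ inBox d n (b - y)) :
    ∃ c, Relation.ReflTransGen r a c ∧ (c - y) ∈ sphere d n := by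
  induction h using Relation.ReflTransGen.head_induction_on with
  | refl => exact absurd ha hb
  | @head a' c' h' hrest ih =>
    by_cases hc : inBox d n (c' - y)
    · obtain ⟨c, hc1, hc2⟩ := ih hc
      exact ⟨c, hc1.head h', hc2⟩
    · exact ⟨a', Relation.ReflTransGen.refl, ha, c' - y, latAdj_sub (hr _ _ h'), hc⟩

lemma last_exit {r : Vt d → Vt d → Prop} {Cs : Set (Vt d)} {a b : Vt d}
    (h : Relation.ReflTransGen r a b) (hb : b ∉ Cs) :
    (a ∉ Cs ∧ Relation.ReflTransGen (fun u v => r u v ∧ u ∉ Cs ∧ v ∉ Cs) a b) ∨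
    (∃ v w, v ∈ Cs ∧ w ∉ Cs ∧ r v w ∧
      Relation.ReflTransGen (fun u v => r u v ∧ u ∉ Cs ∧ v ∉ Cs) w b) := by
  induction h using Relation.ReflTransGen.head_induction_on with
  | refl => exact Or.inl ⟨hb, Relation.ReflTransGen.refl⟩
  | @head a' c' h' hrest ih =>
    rcases ih with ⟨ha', hpath⟩ | ⟨v, w, h1, h2, h3, h4⟩
    · by_cases hc : a' ∈ Cs
      · exact Or.inr ⟨a', c', hc, ha', h', hpath⟩
      · exact Or.inl ⟨hc, hpath.head ⟨h', hc, ha'⟩⟩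
    · exact Or.inr ⟨v, w, h1, h2, h3, h4⟩

lemma oneArm_anti {m n : ℕ} (h : m ≤ n) : oneArm d n ⊆ oneArm d m := by
  rintro ω ⟨z, hz, hpath⟩
  by_cases hbox : inBox d m z
  · obtain ⟨j, hj⟩ := sphere_coord hz
    have hmn : (n : ℤ) ≤ (m : ℤ) := hj ▸ hbox j
    have : m = n := le_antisymm h (by exact_mod_cast hmn)
    exact ⟨z, this ▸ hz, hpath⟩
  · have h0 : inBox d m ((0 : Vt d) - 0) := by
      intro i; simp
    have hz0 : ¬ inBox d m (z - 0) := by simpa using hbox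
    obtain ⟨c, hc1, hc2⟩ := exit_lemma (fun u v huv => adj_latAdj huv) hpath h0 hz0
    exact ⟨c, by simpa using hc2, hc1⟩

end Paths

section Shift
variable {d : ℕ} {P : Measure (Cfg d)} {p : ℝ}

lemma adj_shift {y : Vt d} {ω : Cfg d} {u v : Vt d} :
    adj d (shiftc d y ω) u v ↔ adj d ω (u + y) (v + y) := by
  unfold adj shiftc
  constructor
  · rintro ⟨i, ⟨hω, hv⟩ | ⟨hω, hu⟩⟩
    · exact ⟨i, Or.inl ⟨hω, by rw [hv, add_right_comm]⟩⟩
    · exact ⟨i, Or.inr ⟨hω, by rw [hu, add_right_comm]⟩⟩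
  · rintro ⟨i, ⟨hω, hv⟩ | ⟨hω, hu⟩⟩
    · refine ⟨i, Or.inl ⟨hω, add_right_cancel (b := y) ?_⟩⟩
      rw [hv, add_right_comm]
    · refine ⟨i, Or.inr ⟨hω, add_right_cancel (b := y) ?_⟩⟩
      rw [hu, add_right_comm]

lemma conn_shift {y : Vt d} {ω : Cfg d} {a b : Vt d} :
    conn d (shiftc d y ω) a b ↔ conn d ω (a + y) (b + y) := by
  constructor
  · intro h
    induction h with
    | refl => exact Relation.ReflTransGen.refl
    | tail _ h2 ih => exact ih.tail (adj_shift.1 h2)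
  · intro h
    have key : ∀ u v : Vt d, Relation.ReflTransGen (adj d ω) u v →
        Relation.ReflTransGen (adj d (shiftc d y ω)) (u - y) (v - y) := by
      intro u v huv
      induction huv with
      | refl => exact Relation.ReflTransGen.refl
      | tail _ h2 ih => exact ih.tail (adj_shift.2 (by simpa using h2))
    have h2 := key _ _ h
    simpa [conn] using h2

def shiftE (d : ℕ) (y : Vt d) (e : Ed d) : Ed d := (e.1 + y, e.2)

lemma shiftE_inj (y : Vt d) : Function.Injective (shiftE d y) := by
  rintro ⟨u, i⟩ ⟨v, j⟩ h
  simp only [shiftE, Prod.mk.injEq] at h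
  exact Prod.ext (by have := h.1; exact add_right_cancel this) h.2

lemma shift_preimage_cyl (y : Vt d) (T : Finset (Ed d)) (η : Cfg d) :
    (shiftc d y) ⁻¹' (Cyl T η) = Cyl (T.image (shiftE d y)) (fun e => η (e.1 - y, e.2)) := by
  ext ω
  simp only [Cyl, Set.mem_preimage, Set.mem_setOf_eq, Finset.mem_image, shiftc, shiftE]
  constructor
  · rintro h e ⟨e', he', rfl⟩
    simpa using h e' he'
  · intro h e he
    have := h (e.1 + y, e.2) ⟨e, he, rfl⟩
    simpa using this

lemma basedOn_shift_preimage {T : Finset (Ed d)} {A : Set (Cfg d)} (hA : BasedOn (↑T) A)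
    (y : Vt d) : BasedOn (↑(T.image (shiftE d y))) ((shiftc d y) ⁻¹' A) := by
  intro ω ω' hagree hω
  refine hA (shiftc d y ω) (shiftc d y ω') (fun e he => ?_) hω
  exact hagree (shiftE d y e) (by exact_mod_cast Finset.mem_image_of_mem _ he)

lemma P_shift_based (hBer : IsBer d P p) {T : Finset (Ed d)} {A : Set (Cfg d)}
    (hA : BasedOn (↑T) A) (y : Vt d) : P ((shiftc d y) ⁻¹' A) = P A := by
  have hdecomp : (shiftc d y) ⁻¹' A
      = ⋃ σ ∈ sel T A, (shiftc d y) ⁻¹' (Cyl T (extT T σ)) := by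
    conv_lhs => rw [based_eq_biUnion hA]
    simp [Set.preimage_iUnion]
  rw [hdecomp, measure_biUnion_finset (fun σ _ τ _ h =>
      Disjoint.preimage _ (cyl_extT_disjoint h))
    (fun σ _ => by rw [shift_preimage_cyl]; exact measurableSet_cyl _ _)]
  rw [P_based_eq_sum hA]
  refine Finset.sum_congr rfl fun σ _ => ?_
  rw [shift_preimage_cyl, P_cyl hBer, P_cyl hBer, Finset.prod_image
    (fun a _ b _ h => shiftE_inj y h)]
  refine Finset.prod_congr rfl fun e _ => ?_
  simp [shiftE]

def Arm (d n m : ℕ) : Set (Cfg d) :=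
  {ω | ∃ z ∈ sphere d n, Relation.ReflTransGen (rE d (↑(GE d m)) ω) 0 z}

lemma basedOn_Arm (n m : ℕ) : BasedOn (↑(GE d m)) (Arm d n m) := basedOn_reach _ _ _

lemma Arm_mono (n : ℕ) : Monotone (fun m => Arm d n m) := by
  intro m m' hm ω hω
  obtain ⟨z, hz, hpath⟩ := hω
  exact ⟨z, hz, Relation.ReflTransGen.mono (fun u v h =>
    rE_mono (Finset.coe_subset.2 (GE_mono hm)) h) _ _ hpath⟩

lemma oneArm_eq_iUnion (n : ℕ) : oneArm d n = ⋃ m, Arm d n m := by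
  ext ω
  simp only [oneArm, Set.mem_setOf_eq, Set.mem_iUnion, Arm]
  constructor
  · rintro ⟨z, hz, hconn⟩
    obtain ⟨m, hm⟩ := conn_iff_exists_bounded.1 hconn
    exact ⟨m, z, hz, hm⟩
  · rintro ⟨m, z, hz, hm⟩
    exact ⟨z, hz, conn_iff_exists_bounded.2 ⟨m, hm⟩⟩

lemma P_shift_oneArm (hBer : IsBer d P p) (y : Vt d) (n : ℕ) :
    P ((shiftc d y) ⁻¹' (oneArm d n)) = P (oneArm d n) := by
  rw [oneArm_eq_iUnion, Set.preimage_iUnion]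
  rw [Monotone.measure_iUnion (fun m m' h => Set.preimage_mono (Arm_mono n h))]
  rw [Monotone.measure_iUnion (Arm_mono n)]
  exact iSup_congr fun m => P_shift_based hBer (basedOn_Arm n m) y

lemma shift_preimage_oneArm_eq (y : Vt d) (n : ℕ) :
    (shiftc d y) ⁻¹' (oneArm d n) = {ω | ∃ z, z - y ∈ sphere d n ∧ conn d ω y z} := by
  ext ω
  simp only [oneArm, Set.mem_preimage, Set.mem_setOf_eq]
  constructor
  · rintro ⟨w, hw, hconn⟩
    refine ⟨w + y, by simpa using hw, ?_⟩
    have := conn_shift.1 hconn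
    simpa using this
  · rintro ⟨z, hz, hconn⟩
    exact ⟨z - y, hz, conn_shift.2 (by simpa using hconn)⟩

end Shift

section Cluster
variable {d : ℕ}

noncomputable def clus (d : ℕ) (S : Finset (Vt d)) (ω : Cfg d) : Finset (Vt d) :=
  S.filter fun x => connIn d (↑S) ω 0 x

noncomputable def F1 (d : ℕ) (S C : Finset (Vt d)) : Finset (Ed d) :=
  (S ×ˢ (Finset.univ : Finset (Fin d))).filter
    fun e => e.1 + unit d e.2 ∈ S ∧ (e.1 ∈ C ∨ e.1 + unit d e.2 ∈ C)

lemma mem_clus_iff {S : Finset (Vt d)} {ω : Cfg d} {x : Vt d} :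
    x ∈ clus d S ω ↔ x ∈ S ∧ connIn d (↑S) ω 0 x := Finset.mem_filter

lemma connIn_step_transfer {S C : Finset (Vt d)} {ω ω' : Cfg d}
    (hagree : ∀ e ∈ (↑(F1 d S C) : Set (Ed d)), ω e = ω' e)
    {u v : Vt d} (hu : u ∈ C)
    (hstep : adj d ω u v ∧ u ∈ (↑S : Set (Vt d)) ∧ v ∈ (↑S : Set (Vt d))) :
    adj d ω' u v ∧ u ∈ (↑S : Set (Vt d)) ∧ v ∈ (↑S : Set (Vt d)) := by
  obtain ⟨⟨i, hcase⟩, hus, hvs⟩ := hstep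
  refine ⟨⟨i, ?_⟩, hus, hvs⟩
  rcases hcase with ⟨hω, hv⟩ | ⟨hω, hu'⟩
  · have hmem : (u, i) ∈ F1 d S C := by
      refine Finset.mem_filter.2 ⟨Finset.mem_product.2 ⟨Finset.mem_coe.1 hus,
        Finset.mem_univ _⟩, ?_, Or.inl hu⟩
      exact hv ▸ Finset.mem_coe.1 hvs
    exact Or.inl ⟨(hagree _ (Finset.mem_coe.2 hmem)) ▸ hω, hv⟩
  · have hmem : (v, i) ∈ F1 d S C := by
      refine Finset.mem_filter.2 ⟨Finset.mem_product.2 ⟨Finset.mem_coe.1 hvs,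
        Finset.mem_univ _⟩, ?_, Or.inr (hu' ▸ hu)⟩
      exact hu' ▸ Finset.mem_coe.1 hus
    exact Or.inr ⟨(hagree _ (Finset.mem_coe.2 hmem)) ▸ hω, hu'⟩

lemma clus_eq_transfer {S C : Finset (Vt d)} (h0 : (0 : Vt d) ∈ S) {ω ω' : Cfg d}
    (hagree : ∀ e ∈ (↑(F1 d S C) : Set (Ed d)), ω e = ω' e) (hclus : clus d S ω = C) :
    clus d S ω' = C := by
  have h0C : (0 : Vt d) ∈ C := hclus ▸ mem_clus_iff.2 ⟨h0, Relation.ReflTransGen.refl⟩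
  have main : ∀ b, connIn d (↑S) ω 0 b → b ∈ S → (b ∈ C ∧ connIn d (↑S) ω' 0 b) := by
    intro b hb
    induction hb with
    | refl => exact fun _ => ⟨h0C, Relation.ReflTransGen.refl⟩
    | @tail b c hpath hstep ih =>
      intro _
      have hbS : b ∈ S := Finset.mem_coe.1 hstep.2.1
      obtain ⟨hbC, hconn'⟩ := ih hbS
      have hstep' := connIn_step_transfer hagree hbC hstep
      refine ⟨?_, hconn'.tail hstep'⟩
      exact hclus ▸ mem_clus_iff.2 ⟨Finset.mem_coe.1 hstep.2.2, hpath.tail hstep⟩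
  have main' : ∀ b, connIn d (↑S) ω' 0 b → b ∈ C := by
    intro b hb
    induction hb with
    | refl => exact h0C
    | @tail b c hpath hstep ih =>
      have hbC : b ∈ C := ih
      have hωb : connIn d (↑S) ω 0 b := (mem_clus_iff.1 (hclus ▸ hbC : b ∈ clus d S ω)).2
      have hstep' := connIn_step_transfer (fun e he => (hagree e he).symm) hbC hstep
      have : connIn d (↑S) ω 0 c := hωb.tail hstep'
      exact hclus ▸ mem_clus_iff.2 ⟨Finset.mem_coe.1 hstep.2.2, this⟩
  ext x
  constructor
  · intro hx
    exact main' x (mem_clus_iff.1 hx).2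
  · intro hx
    have hxω : x ∈ clus d S ω := hclus ▸ hx
    obtain ⟨hxS, hxconn⟩ := mem_clus_iff.1 hxω
    exact mem_clus_iff.2 ⟨hxS, (main x hxconn hxS).2⟩

lemma basedOn_clus (S C : Finset (Vt d)) (h0 : (0 : Vt d) ∈ S) :
    BasedOn (↑(F1 d S C)) {ω : Cfg d | clus d S ω = C} :=
  fun _ω _ω' hagree hω => clus_eq_transfer h0 hagree hω

lemma clusEv_disjoint {S : Finset (Vt d)} {C C' : Finset (Vt d)} (h : C ≠ C') :
    Disjoint {ω : Cfg d | clus d S ω = C} {ω : Cfg d | clus d S ω = C'} := by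
  rw [Set.disjoint_left]
  intro ω h1 h2
  exact h (h1.symm.trans h2)

lemma sum_clus_le {P : Measure (Cfg d)} (S : Finset (Vt d)) (h0 : (0 : Vt d) ∈ S) (x : Vt d) :
    ∑ C ∈ S.powerset.filter (fun C => x ∈ C), P {ω : Cfg d | clus d S ω = C}
      ≤ P {ω : Cfg d | connIn d (↑S) ω 0 x} := by
  rw [← measure_biUnion_finset (fun C _ C' _ h => clusEv_disjoint h)
    (fun C _ => measurableSet_based (basedOn_clus S C h0))]
  refine measure_mono ?_
  intro ω hω
  simp only [Set.mem_iUnion] at hω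
  obtain ⟨C, hC, hωC⟩ := hω
  have hxC : x ∈ C := (Finset.mem_filter.1 hC).2
  have : x ∈ clus d S ω := hωC ▸ hxC
  exact (mem_clus_iff.1 this).2

end Cluster

section Dev
variable {d : ℕ} {P : Measure (Cfg d)} {p : ℝ}

def EoffS (d : ℕ) (C : Finset (Vt d)) : Set (Ed d) :=
  {e | e.1 ∉ C ∧ e.1 + unit d e.2 ∉ C}

noncomputable def Goff (d : ℕ) (C : Finset (Vt d)) (m : ℕ) : Finset (Ed d) :=
  (GE d m).filter (fun e => e ∈ EoffS d C)

lemma coe_Goff (C : Finset (Vt d)) (m : ℕ) :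
    (↑(Goff d C m) : Set (Ed d)) = EoffS d C ∩ ↑(GE d m) := by
  ext e
  simp only [Goff, Finset.coe_filter, Set.mem_setOf_eq, Set.mem_inter_iff, Finset.mem_coe]
  exact and_comm

def Dev (d : ℕ) (C : Finset (Vt d)) (y : Vt d) (n m : ℕ) : Set (Cfg d) :=
  {ω | ∃ z, z - y ∈ sphere d n ∧ Relation.ReflTransGen (rE d (↑(Goff d C m)) ω) y z}

lemma basedOn_Dev (C : Finset (Vt d)) (y : Vt d) (n m : ℕ) :
    BasedOn (↑(Goff d C m)) (Dev d C y n m) := by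
  rintro ω ω' hagree ⟨z, hz, hpath⟩
  exact ⟨z, hz, Relation.ReflTransGen.mono (fun u v h => rE_congr hagree h) _ _ hpath⟩

lemma Goff_mono (C : Finset (Vt d)) {m m' : ℕ} (h : m ≤ m') : Goff d C m ⊆ Goff d C m' :=
  Finset.filter_subset_filter _ (GE_mono h)

lemma Dev_mono (C : Finset (Vt d)) (y : Vt d) (n : ℕ) :
    Monotone (fun m => Dev d C y n m) := by
  rintro m m' h ω ⟨z, hz, hpath⟩
  exact ⟨z, hz, Relation.ReflTransGen.mono (fun u v huv =>
    rE_mono (Finset.coe_subset.2 (Goff_mono C h)) huv) _ _ hpath⟩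

lemma Dev_le (hBer : IsBer d P p) (C : Finset (Vt d)) (y : Vt d) (n m : ℕ) :
    P (Dev d C y n m) ≤ P (oneArm d n) := by
  have hsub : Dev d C y n m ⊆ (shiftc d y) ⁻¹' (oneArm d n) := by
    rw [shift_preimage_oneArm_eq]
    rintro ω ⟨z, hz, hpath⟩
    exact ⟨z, hz, Relation.ReflTransGen.mono (fun u v huv => rE_adj huv) _ _ hpath⟩
  calc P (Dev d C y n m) ≤ P ((shiftc d y) ⁻¹' (oneArm d n)) := measure_mono hsub
    _ = P (oneArm d n) := P_shift_oneArm hBer y n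

lemma basedOn_mono {T T' : Set (Ed d)} (h : T ⊆ T') {A : Set (Cfg d)} (hA : BasedOn T A) :
    BasedOn T' A :=
  fun ω ω' hagree hω => hA ω ω' (fun e he => hagree e (h he)) hω

lemma basedOn_inter {T U : Set (Ed d)} {A B : Set (Cfg d)} (hA : BasedOn T A)
    (hB : BasedOn U B) : BasedOn (T ∪ U) (A ∩ B) := by
  intro ω ω' hagree hω
  exact ⟨basedOn_mono Set.subset_union_left hA ω ω' hagree hω.1,
    basedOn_mono Set.subset_union_right hB ω ω' hagree hω.2⟩

lemma basedOn_edge (e : Ed d) : BasedOn (↑({e} : Finset (Ed d))) {ω : Cfg d | ω e = true} := by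
  intro ω ω' hagree hω
  rw [Set.mem_setOf_eq, ← hagree e (by simp)]
  exact hω

lemma P_edge (hBer : IsBer d P p) (e : Ed d) :
    P {ω : Cfg d | ω e = true} = ENNReal.ofReal p := by
  have : {ω : Cfg d | ω e = true} = Cyl {e} (fun _ => true) := by
    ext ω; simp [Cyl]
  rw [this, P_cyl hBer, Finset.prod_singleton, pr, if_pos rfl]

lemma term_bound (hBer : IsBer d P p) (S C : Finset (Vt d)) (h0 : (0 : Vt d) ∈ S)
    (estar : Ed d) (hinC : estar.1 ∈ C ∨ estar.1 + unit d estar.2 ∈ C)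
    (hnotF1 : estar ∉ F1 d S C) (y : Vt d) (n : ℕ) :
    P (({ω | clus d S ω = C} ∩ {ω | ω estar = true}) ∩ ⋃ m, Dev d C y n m)
      ≤ P {ω | clus d S ω = C} * (ENNReal.ofReal p * P (oneArm d n)) := by
  have hABbased : BasedOn (↑(F1 d S C ∪ {estar})) ({ω : Cfg d | clus d S ω = C} ∩ {ω | ω estar = true}) := by
    rw [Finset.coe_union]
    exact basedOn_inter (basedOn_clus S C h0) (basedOn_edge estar)
  have hdisj : ∀ m, Disjoint (F1 d S C ∪ {estar}) (Goff d C m) := by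
    intro m
    rw [Finset.disjoint_union_left]
    constructor
    · rw [Finset.disjoint_left]
      intro e heF heG
      have h1 := (Finset.mem_filter.1 heF).2
      have h2 : e ∈ EoffS d C := (Finset.mem_filter.1 heG).2
      rcases h1.2 with h | h
      · exact h2.1 h
      · exact h2.2 h
    · rw [Finset.disjoint_left]
      intro e heF heG
      rw [Finset.mem_singleton] at heF
      subst heF
      have h2 : e ∈ EoffS d C := (Finset.mem_filter.1 heG).2
      rcases hinC with h | h
      · exact h2.1 h
      · exact h2.2 h
  rw [Set.inter_iUnion]
  rw [Monotone.measure_iUnion (fun m m' h =>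
    Set.inter_subset_inter (subset_refl _) (Dev_mono C y n h))]
  refine iSup_le fun m => ?_
  have hsplit := P_indep hBer (hdisj m) hABbased (basedOn_Dev C y n m)
  rw [hsplit]
  have hsplit2 := P_indep hBer (Finset.disjoint_singleton_right.2 hnotF1)
    (basedOn_clus S C h0) (basedOn_edge estar)
  rw [hsplit2, P_edge hBer]
  rw [mul_assoc]
  exact mul_le_mul' le_rfl (mul_le_mul' le_rfl (Dev_le hBer C y n m))

end Dev

section Decomp
variable {d : ℕ}

lemma decomposition (L : ℕ) (hL : 1 ≤ L) (S : Finset (Vt d)) (h0 : (0 : Vt d) ∈ S)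
    (hS : ∀ x ∈ S, ∀ i : Fin d, |x i| ≤ (L : ℤ) - 1) (k : ℕ) {ω : Cfg d}
    (hω : ω ∈ oneArm d ((k + 1) * L)) :
    ∃ x ∈ S, x ∈ clus d S ω ∧
      ((∃ i, x + unit d i ∉ S ∧ ω (x, i) = true ∧
          ω ∈ ⋃ m, Dev d (clus d S ω) (x + unit d i) (k * L) m) ∨
       (∃ i, x - unit d i ∉ S ∧ ω (x - unit d i, i) = true ∧
          ω ∈ ⋃ m, Dev d (clus d S ω) (x - unit d i) (k * L) m)) := by
  obtain ⟨z, hzsph, hconn⟩ := hω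
  set C := clus d S ω with hC
  obtain ⟨j, hj⟩ := sphere_coord hzsph
  have hn1 : ((k + 1) * L : ℕ) = k * L + L := by ring
  have hzS : z ∉ S := by
    intro hzmem
    have h1 := hS z hzmem j
    rw [hn1] at hj
    push_cast at hj
    omega
  have hzC : z ∉ (↑C : Set (Vt d)) := fun h => hzS (mem_clus_iff.1 (Finset.mem_coe.1 h)).1
  rcases last_exit (Cs := (↑C : Set (Vt d))) hconn hzC with
    ⟨h0C, _⟩ | ⟨v, w, hvC, hwC, hvw, htail⟩
  · exact absurd (Finset.mem_coe.2 (mem_clus_iff.2 ⟨h0, Relation.ReflTransGen.refl⟩)) h0C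
  have hvCf : v ∈ C := Finset.mem_coe.1 hvC
  have hvS : v ∈ S := (mem_clus_iff.1 hvCf).1
  have hconn_v : connIn d (↑S) ω 0 v := (mem_clus_iff.1 hvCf).2
  have hwS : w ∉ S := by
    intro hmem
    exact hwC (Finset.mem_coe.2 (mem_clus_iff.2 ⟨hmem,
      hconn_v.tail ⟨hvw, Finset.mem_coe.2 hvS, Finset.mem_coe.2 hmem⟩⟩))
  have hlat := adj_latAdj hvw
  have hwbound : ∀ j' : Fin d, |w j'| ≤ (L : ℤ) := by
    intro j'
    have hvj := hS v hvS j'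
    have habs : |w j' - v j'| ≤ 1 := by
      obtain ⟨i, h | h⟩ := hlat
      · rw [h]
        simp only [Pi.add_apply, unit, add_sub_cancel_left]
        split <;> simp
      · rw [h]
        simp only [Pi.add_apply, unit, sub_add_cancel_left, abs_neg]
        split <;> simp
    have h3 := abs_sub_abs_le_abs_sub (w j') (v j')
    omega
  have htail' : Relation.ReflTransGen (rE d (EoffS d C) ω) w z := by
    refine Relation.ReflTransGen.mono (fun u u' h => ?_) _ _ htail
    obtain ⟨⟨i, hcase⟩, huC, hu'C⟩ := h
    rcases hcase with ⟨hωe, hv'⟩ | ⟨hωe, hu'⟩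
    · exact ⟨i, Or.inl ⟨⟨fun hc => huC (Finset.mem_coe.2 hc),
        fun hc => hu'C (Finset.mem_coe.2 (show u' ∈ C by rw [hv']; exact hc))⟩, hωe, hv'⟩⟩
    · exact ⟨i, Or.inr ⟨⟨fun hc => hu'C (Finset.mem_coe.2 hc),
        fun hc => huC (Finset.mem_coe.2 (show u ∈ C by rw [hu']; exact hc))⟩, hωe, hu'⟩⟩
  obtain ⟨m, hm⟩ := reach_bounded htail'
  have hm' : Relation.ReflTransGen (rE d (↑(Goff d C m)) ω) w z := by
    refine Relation.ReflTransGen.mono (fun u u' huv => rE_mono ?_ huv) _ _ hm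
    rw [coe_Goff]
  have hDev : ω ∈ ⋃ m', Dev d C w (k * L) m' := by
    by_cases hbox : inBox d (k * L) (z - w)
    · have hzwj : |z j - w j| = ((k * L : ℕ) : ℤ) := by
        have h2 := abs_sub_abs_le_abs_sub (z j) (w j)
        have h3 := hbox j
        have h4 := hwbound j
        rw [Pi.sub_apply] at h3
        rw [hn1] at hj
        push_cast at hj h3 ⊢
        omega
      have hsph : z - w ∈ sphere d (k * L) := by
        refine mem_sphere_of_coord hbox j ?_
        rw [Pi.sub_apply]
        exact hzwj
      exact Set.mem_iUnion.2 ⟨m, z, hsph, hm'⟩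
    · have h0box : inBox d (k * L) (w - w) := by
        intro i'
        simp only [Pi.sub_apply, sub_self, abs_zero]
        positivity
      obtain ⟨c, hc1, hc2⟩ := exit_lemma (fun u u' h => adj_latAdj (rE_adj h)) hm' h0box hbox
      exact Set.mem_iUnion.2 ⟨m, c, hc2, hc1⟩
  obtain ⟨i, ⟨hωe, hw'⟩ | ⟨hωe, hv'⟩⟩ := hvw
  · refine ⟨v, hvS, hvCf, Or.inl ⟨i, ?_, hωe, ?_⟩⟩
    · rw [← hw']; exact hwS
    · rw [← hw']; exact hDev
  · have hw2 : v - unit d i = w := by rw [hv']; abel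
    refine ⟨v, hvS, hvCf, Or.inr ⟨i, ?_, ?_, ?_⟩⟩
    · rw [hw2]; exact hwS
    · rw [hw2]; exact hωe
    · rw [hw2]; exact hDev

end Decomp

section Step
variable {d : ℕ} {P : Measure (Cfg d)} {p : ℝ}

noncomputable def evP (d : ℕ) (S C : Finset (Vt d)) (x : Vt d) (i : Fin d) (n : ℕ) :
    Set (Cfg d) :=
  if x ∈ C ∧ x + unit d i ∉ S then
    ({ω | clus d S ω = C} ∩ {ω | ω (x, i) = true}) ∩ ⋃ m, Dev d C (x + unit d i) n m
  else ∅

noncomputable def evM (d : ℕ) (S C : Finset (Vt d)) (x : Vt d) (i : Fin d) (n : ℕ) :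
    Set (Cfg d) :=
  if x ∈ C ∧ x - unit d i ∉ S then
    ({ω | clus d S ω = C} ∩ {ω | ω (x - unit d i, i) = true}) ∩ ⋃ m, Dev d C (x - unit d i) n m
  else ∅


lemma if_toReal_nonneg {c : Prop} [Decidable c] (a : ℝ≥0∞) :
    (0 : ℝ) ≤ (if c then a.toReal else 0) := by
  split_ifs
  · exact ENNReal.toReal_nonneg
  · exact le_rfl

lemma evP_bound (hBer : IsBer d P p) (S C : Finset (Vt d)) (h0 : (0 : Vt d) ∈ S)
    (x : Vt d) (i : Fin d) (n : ℕ) :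
    P (evP d S C x i n) ≤
      (if x ∈ C ∧ x + unit d i ∉ S then P {ω : Cfg d | clus d S ω = C} else 0)
        * (ENNReal.ofReal p * P (oneArm d n)) := by
  unfold evP
  split_ifs with h
  · refine term_bound hBer S C h0 (x, i) (Or.inl h.1) ?_ _ n
    intro hmem
    exact h.2 (Finset.mem_filter.1 hmem).2.1
  · simp

lemma evM_bound (hBer : IsBer d P p) (S C : Finset (Vt d)) (h0 : (0 : Vt d) ∈ S)
    (x : Vt d) (i : Fin d) (n : ℕ) :
    P (evM d S C x i n) ≤
      (if x ∈ C ∧ x - unit d i ∉ S then P {ω : Cfg d | clus d S ω = C} else 0)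
        * (ENNReal.ofReal p * P (oneArm d n)) := by
  unfold evM
  split_ifs with h
  · refine term_bound hBer S C h0 (x - unit d i, i) (Or.inr ?_) ?_ _ n
    · show x - unit d i + unit d i ∈ C
      rw [sub_add_cancel]
      exact h.1
    · intro hmem
      have := (Finset.mem_product.1 (Finset.mem_filter.1 hmem).1).1
      exact h.2 this
  · simp

lemma step_ineq (hBer : IsBer d P p) [IsProbabilityMeasure P] (hp0 : 0 ≤ p)
    (L : ℕ) (hL : 1 ≤ L) (S : Finset (Vt d)) (h0 : (0 : Vt d) ∈ S)
    (hS : ∀ x ∈ S, ∀ i : Fin d, |x i| ≤ (L : ℤ) - 1) (k : ℕ) :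
    P (oneArm d ((k + 1) * L)) ≤ ENNReal.ofReal (phiS d P p S) * P (oneArm d (k * L)) := by
  classical
  set n := k * L with hn
  set R : ℝ≥0∞ := ENNReal.ofReal p * P (oneArm d n) with hRdef
  -- inclusion into the union of events
  have hsub : oneArm d ((k + 1) * L) ⊆
      ⋃ C ∈ S.powerset, ⋃ x ∈ S, ⋃ i ∈ (Finset.univ : Finset (Fin d)),
        (evP d S C x i n ∪ evM d S C x i n) := by
    intro ω hω
    obtain ⟨x, hxS, hxC, hcase⟩ := decomposition L hL S h0 hS k hω
    have hCP : clus d S ω ∈ S.powerset := Finset.mem_powerset.2 (Finset.filter_subset _ _)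
    rcases hcase with ⟨i, hout, hedge, hdev⟩ | ⟨i, hout, hedge, hdev⟩
    · refine Set.mem_biUnion hCP (Set.mem_biUnion hxS (Set.mem_biUnion (Finset.mem_univ i) ?_))
      left
      rw [evP, if_pos ⟨hxC, hout⟩]
      exact ⟨⟨rfl, hedge⟩, hdev⟩
    · refine Set.mem_biUnion hCP (Set.mem_biUnion hxS (Set.mem_biUnion (Finset.mem_univ i) ?_))
      right
      rw [evM, if_pos ⟨hxC, hout⟩]
      exact ⟨⟨rfl, hedge⟩, hdev⟩
  have hstep1 : P (oneArm d ((k + 1) * L)) ≤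
      ∑ C ∈ S.powerset, ∑ x ∈ S, ∑ i : Fin d,
        (((if x ∈ C ∧ x + unit d i ∉ S then P {ω : Cfg d | clus d S ω = C} else 0) * R) +
         ((if x ∈ C ∧ x - unit d i ∉ S then P {ω : Cfg d | clus d S ω = C} else 0) * R)) := by
    refine le_trans (measure_mono hsub) ?_
    refine le_trans (measure_biUnion_finset_le _ _) (Finset.sum_le_sum fun C _ => ?_)
    refine le_trans (measure_biUnion_finset_le _ _) (Finset.sum_le_sum fun x _ => ?_)
    refine le_trans (measure_biUnion_finset_le _ _) (Finset.sum_le_sum fun i _ => ?_)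
    exact le_trans (measure_union_le _ _)
      (add_le_add (evP_bound hBer S C h0 x i n) (evM_bound hBer S C h0 x i n))
  -- rearrange the triple sum
  have hswap : ∑ C ∈ S.powerset, ∑ x ∈ S, ∑ i : Fin d,
        (((if x ∈ C ∧ x + unit d i ∉ S then P {ω : Cfg d | clus d S ω = C} else 0) * R) +
         ((if x ∈ C ∧ x - unit d i ∉ S then P {ω : Cfg d | clus d S ω = C} else 0) * R))
      = ∑ x ∈ S, ∑ i : Fin d, ∑ C ∈ S.powerset,
        (((if x ∈ C ∧ x + unit d i ∉ S then P {ω : Cfg d | clus d S ω = C} else 0) * R) +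
         ((if x ∈ C ∧ x - unit d i ∉ S then P {ω : Cfg d | clus d S ω = C} else 0) * R)) := by
    rw [Finset.sum_comm]
    exact Finset.sum_congr rfl fun x _ => Finset.sum_comm
  have hCsum : ∀ (x : Vt d) (cond : Prop) [Decidable cond],
      ∑ C ∈ S.powerset, (if x ∈ C ∧ cond then P {ω : Cfg d | clus d S ω = C} else 0)
        ≤ if cond then P {ω : Cfg d | connIn d (↑S) ω 0 x} else 0 := by
    intro x cond hdec
    by_cases hc : cond
    · rw [if_pos hc]
      have heq : ∀ C ∈ S.powerset, (if x ∈ C ∧ cond then P {ω : Cfg d | clus d S ω = C} else 0)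
          = if x ∈ C then P {ω : Cfg d | clus d S ω = C} else 0 :=
        fun C _ => if_congr (and_iff_left hc) rfl rfl
      rw [Finset.sum_congr rfl heq, ← Finset.sum_filter]
      exact sum_clus_le S h0 x
    · rw [if_neg hc]
      have heq : ∀ C ∈ S.powerset, (if x ∈ C ∧ cond then P {ω : Cfg d | clus d S ω = C} else 0)
          = 0 := fun C _ => if_neg fun hh => hc hh.2
      rw [Finset.sum_congr rfl heq, Finset.sum_const, smul_zero]
  have hstep2 : ∀ (x : Vt d) (i : Fin d), ∑ C ∈ S.powerset,
        (((if x ∈ C ∧ x + unit d i ∉ S then P {ω : Cfg d | clus d S ω = C} else 0) * R) +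
         ((if x ∈ C ∧ x - unit d i ∉ S then P {ω : Cfg d | clus d S ω = C} else 0) * R))
      ≤ ((if x + unit d i ∉ S then P {ω : Cfg d | connIn d (↑S) ω 0 x} else 0) +
         (if x - unit d i ∉ S then P {ω : Cfg d | connIn d (↑S) ω 0 x} else 0)) * R := by
    intro x i
    rw [Finset.sum_add_distrib, ← Finset.sum_mul, ← Finset.sum_mul, add_mul]
    exact add_le_add (mul_le_mul' (hCsum x _) le_rfl) (mul_le_mul' (hCsum x _) le_rfl)
  -- identify phi
  have hphi : ENNReal.ofReal (phiS d P p S)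
      = ENNReal.ofReal p * ∑ x ∈ S, ∑ i : Fin d,
        ((if x + unit d i ∉ S then P {ω : Cfg d | connIn d (↑S) ω 0 x} else 0) +
         (if x - unit d i ∉ S then P {ω : Cfg d | connIn d (↑S) ω 0 x} else 0)) := by
    rw [phiS, ENNReal.ofReal_mul hp0]
    congr 1
    rw [ENNReal.ofReal_sum_of_nonneg (fun x _ => Finset.sum_nonneg fun i _ =>
      add_nonneg (if_toReal_nonneg _) (if_toReal_nonneg _))]
    refine Finset.sum_congr rfl fun x _ => ?_
    rw [ENNReal.ofReal_sum_of_nonneg (fun i _ =>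
      add_nonneg (if_toReal_nonneg _) (if_toReal_nonneg _))]
    refine Finset.sum_congr rfl fun i _ => ?_
    rw [ENNReal.ofReal_add (if_toReal_nonneg _) (if_toReal_nonneg _)]
    congr 1 <;> split_ifs <;>
      simp [ENNReal.ofReal_toReal (measure_ne_top P _)]
  calc P (oneArm d ((k + 1) * L)) ≤ _ := hstep1
    _ = _ := hswap
    _ ≤ ∑ x ∈ S, ∑ i : Fin d,
        (((if x + unit d i ∉ S then P {ω : Cfg d | connIn d (↑S) ω 0 x} else 0) +
          (if x - unit d i ∉ S then P {ω : Cfg d | connIn d (↑S) ω 0 x} else 0)) * R) :=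
      Finset.sum_le_sum fun x _ => Finset.sum_le_sum fun i _ => hstep2 x i
    _ = (∑ x ∈ S, ∑ i : Fin d,
        ((if x + unit d i ∉ S then P {ω : Cfg d | connIn d (↑S) ω 0 x} else 0) +
         (if x - unit d i ∉ S then P {ω : Cfg d | connIn d (↑S) ω 0 x} else 0))) * R := by
      rw [Finset.sum_mul]
      exact Finset.sum_congr rfl fun x _ => (Finset.sum_mul _ _ _).symm
    _ = ENNReal.ofReal (phiS d P p S) * P (oneArm d n) := by
      rw [hphi, hRdef]
      ring

end Step

section Iter
variable {d : ℕ} {P : Measure (Cfg d)} {p : ℝ}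

lemma phi_nonneg (hp0 : 0 ≤ p) (S : Finset (Vt d)) : 0 ≤ phiS d P p S := by
  refine mul_nonneg hp0 (Finset.sum_nonneg fun x _ => Finset.sum_nonneg fun i _ =>
    add_nonneg (if_toReal_nonneg _) (if_toReal_nonneg _))

lemma part1 (hBer : IsBer d P p) [IsProbabilityMeasure P] (hp0 : 0 ≤ p)
    (L : ℕ) (hL : 1 ≤ L) (S : Finset (Vt d)) (h0 : (0 : Vt d) ∈ S)
    (hS : ∀ x ∈ S, ∀ i : Fin d, |x i| ≤ (L : ℤ) - 1) :
    ∀ k : ℕ, P (oneArm d ((k + 1) * L)) ≤ ENNReal.ofReal (phiS d P p S ^ (k + 1)) := by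
  intro k
  induction k with
  | zero =>
    refine le_trans (step_ineq hBer hp0 L hL S h0 hS 0) ?_
    rw [pow_one]
    calc ENNReal.ofReal (phiS d P p S) * P (oneArm d (0 * L))
        ≤ ENNReal.ofReal (phiS d P p S) * 1 := mul_le_mul' le_rfl prob_le_one
      _ = ENNReal.ofReal (phiS d P p S) := mul_one _
  | succ k ih =>
    refine le_trans (step_ineq hBer hp0 L hL S h0 hS (k + 1)) ?_
    calc ENNReal.ofReal (phiS d P p S) * P (oneArm d ((k + 1) * L))
        ≤ ENNReal.ofReal (phiS d P p S) * ENNReal.ofReal (phiS d P p S ^ (k + 1)) :=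
          mul_le_mul' le_rfl ih
      _ = ENNReal.ofReal (phiS d P p S ^ (k + 2)) := by
          rw [← ENNReal.ofReal_mul (phi_nonneg hp0 S)]
          congr 1
          ring

lemma straight_line (hBer : IsBer d P p) [IsProbabilityMeasure P] (hd : 1 ≤ d)
    (hp1 : p = 1) (L : ℕ) (hL : 1 ≤ L) : P (oneArm d L) = 1 := by
  classical
  set i0 : Fin d := ⟨0, hd⟩ with hi0
  set lineV : ℕ → Vt d := fun j => fun t => if t = i0 then (j : ℤ) else 0 with hlineV
  set T : Finset (Ed d) := (Finset.range L).image (fun j => (lineV j, i0)) with hT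
  have hsub : Cyl T (fun _ => true) ⊆ oneArm d L := by
    intro ω hω
    have hstep : ∀ j, j < L → adj d ω (lineV j) (lineV (j + 1)) := by
      intro j hj
      refine ⟨i0, Or.inl ⟨hω (lineV j, i0) (Finset.mem_image_of_mem _ (Finset.mem_range.2 hj)), ?_⟩⟩
      funext t
      by_cases ht : t = i0 <;> simp [hlineV, ht, unit]
    have hpath : ∀ j, j ≤ L → conn d ω 0 (lineV j) := by
      intro j
      induction j with
      | zero =>
        intro _
        have h00 : lineV 0 = 0 := by funext t; simp [hlineV]
        rw [h00]
        exact Relation.ReflTransGen.refl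
      | succ j ih =>
        intro hj
        exact (ih (Nat.le_of_succ_le hj)).tail (hstep j (Nat.lt_of_succ_le hj))
    refine ⟨lineV L, ?_, hpath L le_rfl⟩
    refine mem_sphere_of_coord (fun t => ?_) i0 (by simp [hlineV])
    by_cases ht : t = i0 <;> simp [hlineV, ht]
  have hcyl : P (Cyl T (fun _ => true)) = 1 := by
    rw [P_cyl hBer]
    have : ∀ e ∈ T, pr p true = 1 := by
      intro e _
      simp [pr, hp1]
    rw [Finset.prod_congr rfl this, Finset.prod_const_one]
  exact le_antisymm prob_le_one (hcyl ▸ measure_mono hsub)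

lemma small_bound (hBer : IsBer d P p) [IsProbabilityMeasure P] (hp0 : 0 ≤ p) (hp1 : p ≤ 1)
    (n : ℕ) (hn : 1 ≤ n) :
    P (oneArm d n) ≤ ENNReal.ofReal (1 - (1 - p) ^ (2 * d)) := by
  classical
  set T0 : Finset (Ed d) := Finset.univ.image
    (fun q : Fin d × Bool => if q.2 then ((0 : Vt d), q.1) else (-unit d q.1, q.1)) with hT0
  set A0 : Set (Cfg d) := Cyl T0 (fun _ => false) with hA0
  have hsub : oneArm d n ⊆ A0ᶜ := by
    intro ω hω hA
    obtain ⟨z, hz, hconn⟩ := hω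
    have hzne : z ≠ 0 := by
      intro h
      obtain ⟨j, hj⟩ := sphere_coord hz
      rw [h] at hj
      simp only [Pi.zero_apply, abs_zero] at hj
      omega
    rcases (Relation.ReflTransGen.cases_head hconn) with h | ⟨c, hadj, _⟩
    · exact hzne h.symm
    · obtain ⟨i, ⟨hωe, _⟩ | ⟨hωe, hc⟩⟩ := hadj
      · have hmem : ((0 : Vt d), i) ∈ T0 :=
          Finset.mem_image.2 ⟨(i, true), Finset.mem_univ _, rfl⟩
        have h2 := hA _ hmem
        rw [hωe] at h2
        exact Bool.noConfusion h2
      · have hc' : c = -unit d i := eq_neg_of_add_eq_zero_left hc.symm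
        have hmem : ((-unit d i : Vt d), i) ∈ T0 :=
          Finset.mem_image.2 ⟨(i, false), Finset.mem_univ _, rfl⟩
        have h2 := hA _ hmem
        rw [hc'] at hωe
        rw [hωe] at h2
        exact Bool.noConfusion h2
  have hA0meas : MeasurableSet A0 := measurableSet_cyl _ _
  have hcard : T0.card ≤ 2 * d := by
    calc T0.card ≤ (Finset.univ : Finset (Fin d × Bool)).card := Finset.card_image_le
      _ = 2 * d := by
        rw [Finset.card_univ, Fintype.card_prod, Fintype.card_fin, Fintype.card_bool]
        ring
  have hPA0 : P A0 = ENNReal.ofReal (1 - p) ^ T0.card := by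
    rw [hA0, P_cyl hBer, Finset.prod_congr rfl (fun e _ => by simp [pr] : ∀ e ∈ T0, pr p false = ENNReal.ofReal (1 - p)), Finset.prod_const]
  have hkey : ENNReal.ofReal ((1 - p) ^ (2 * d)) ≤ P A0 := by
    rw [hPA0, ENNReal.ofReal_pow (by linarith)]
    exact pow_le_pow_of_le_one (by positivity) (by
      simpa using ENNReal.ofReal_le_ofReal (by linarith : 1 - p ≤ 1)) hcard
  calc P (oneArm d n) ≤ P A0ᶜ := measure_mono hsub
    _ = 1 - P A0 := prob_compl_eq_one_sub hA0meas
    _ ≤ 1 - ENNReal.ofReal ((1 - p) ^ (2 * d)) := tsub_le_tsub_left hkey _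
    _ = ENNReal.ofReal (1 - (1 - p) ^ (2 * d)) := by
        rw [ENNReal.ofReal_sub _ (pow_nonneg (by linarith) _), ENNReal.ofReal_one]

end Iter

/-- Exponential-decay induction via `φ_p(S)`: if `0 ∈ S ⊆ Λ_{L-1}` then
`ℙ_p[0 ↔ ∂Λ_{kL}] ≤ φ_p(S)^k`; in particular `φ_p(S) < 1` forces exponential decay. -/
theorem exponential_decay_induction (d : ℕ) (hd : 1 ≤ d) (p : ℝ)
    (hp : p ∈ Set.Icc (0 : ℝ) 1)
    (P : Measure (((Fin d → ℤ) × Fin d) → Bool)) [IsProbabilityMeasure P]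
    (hBer : ∀ (T : Finset ((Fin d → ℤ) × Fin d)) (η : ((Fin d → ℤ) × Fin d) → Bool),
      P {ω | ∀ e ∈ T, ω e = η e}
        = ∏ e ∈ T, if η e then ENNReal.ofReal p else ENNReal.ofReal (1 - p))
    (L : ℕ) (hL : 1 ≤ L) (S : Finset (Fin d → ℤ)) (h0 : (0 : Fin d → ℤ) ∈ S)
    (hS : ∀ x ∈ S, ∀ i : Fin d, |x i| ≤ (L : ℤ) - 1) :
    (∀ k : ℕ, 1 ≤ k → P (oneArm d (k * L)) ≤ ENNReal.ofReal (phiS d P p S ^ k)) ∧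
    (phiS d P p S < 1 → ∃ c > (0 : ℝ), ∀ n : ℕ, 1 ≤ n →
      P (oneArm d n) ≤ ENNReal.ofReal (Real.exp (-c * n))) := by
  have hBer' : IsBer d P p := hBer
  obtain ⟨hp0, hp1⟩ := hp
  have hpart1 : ∀ k : ℕ, 1 ≤ k → P (oneArm d (k * L)) ≤ ENNReal.ofReal (phiS d P p S ^ k) := by
    intro k hk
    obtain ⟨k', rfl⟩ : ∃ k', k = k' + 1 := ⟨k - 1, by omega⟩
    exact part1 hBer' hp0 L hL S h0 hS k'
  refine ⟨hpart1, fun hφ => ?_⟩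
  have hplt : p < 1 := by
    by_contra h
    have hp1' : p = 1 := le_antisymm hp1 (not_lt.1 h)
    have h1 := straight_line hBer' hd hp1' L hL
    have h2 := hpart1 1 le_rfl
    rw [one_mul, h1, pow_one] at h2
    exact absurd (lt_of_le_of_lt h2 (ENNReal.ofReal_lt_one.2 hφ)) (lt_irrefl _)
  set φv := phiS d P p S with hφv
  set q0 : ℝ := 1 - (1 - p) ^ (2 * d) with hq0
  set r : ℝ := max φv q0 with hrdef
  have hφ0 : 0 ≤ φv := phi_nonneg hp0 S
  have hq00 : 0 ≤ q0 := by
    have h1 : (1 - p) ^ (2 * d) ≤ 1 := pow_le_one₀ (by linarith) (by linarith)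
    rw [hq0]; linarith
  have hr0 : 0 ≤ r := le_trans hφ0 (le_max_left _ _)
  have hr1 : r < 1 := by
    refine max_lt hφ ?_
    have h2 : 0 < (1 - p) ^ (2 * d) := pow_pos (by linarith) _
    rw [hq0]; linarith
  have hLpos : 0 < L := hL
  have hkey : ∀ n : ℕ, 1 ≤ n → P (oneArm d n) ≤ ENNReal.ofReal (r ^ (max 1 (n / L))) := by
    intro n hn
    rcases le_or_gt L n with h | h
    · have hk1 : 1 ≤ n / L := (Nat.one_le_div_iff hLpos).2 h
      rw [max_eq_right hk1]
      calc P (oneArm d n) ≤ P (oneArm d (n / L * L)) :=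
            measure_mono (oneArm_anti (Nat.div_mul_le_self n L))
        _ ≤ ENNReal.ofReal (φv ^ (n / L)) := hpart1 _ hk1
        _ ≤ ENNReal.ofReal (r ^ (n / L)) :=
            ENNReal.ofReal_le_ofReal (pow_le_pow_left₀ hφ0 (le_max_left _ _) _)
    · rw [Nat.div_eq_of_lt h]
      have hmax : max 1 0 = 1 := by norm_num
      rw [hmax, pow_one]
      calc P (oneArm d n) ≤ ENNReal.ofReal q0 := small_bound hBer' hp0 hp1 n hn
        _ ≤ ENNReal.ofReal r := ENNReal.ofReal_le_ofReal (le_max_right _ _)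
  rcases eq_or_lt_of_le hr0 with hreq | hrpos
  · refine ⟨1, one_pos, fun n hn => ?_⟩
    refine le_trans (hkey n hn) ?_
    have hne : max 1 (n / L) ≠ 0 := by positivity
    rw [← hreq, zero_pow hne, ENNReal.ofReal_zero]
    positivity
  · have hL0 : (0 : ℝ) < L := by exact_mod_cast hLpos
    refine ⟨-Real.log r / (2 * L), ?_, fun n hn => ?_⟩
    · exact div_pos (neg_pos.2 (Real.log_neg hrpos hr1)) (by positivity)
    · set c := -Real.log r / (2 * L) with hc
      set m := max 1 (n / L) with hm
      have hnat : n ≤ 2 * L * m := by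
        rcases le_or_gt L n with h | h
        · have hk1 : 1 ≤ n / L := (Nat.one_le_div_iff hLpos).2 h
          rw [hm, max_eq_right hk1]
          have h1 := Nat.div_add_mod n L
          have h2 : n % L < L := Nat.mod_lt n hLpos
          have h3 : L * 1 ≤ L * (n / L) := Nat.mul_le_mul_left L hk1
          calc n = L * (n / L) + n % L := (Nat.div_add_mod n L).symm
            _ ≤ L * (n / L) + L * 1 := by omega
            _ ≤ L * (n / L) + L * (n / L) := by omega
            _ = 2 * L * (n / L) := by ring
        · have hdiv : n / L = 0 := Nat.div_eq_of_lt h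
          rw [hm, hdiv]
          have hmax : max 1 0 = 1 := by norm_num
          rw [hmax]
          omega
      have hreal : (n : ℝ) ≤ 2 * L * m := by exact_mod_cast hnat
      have hlog : Real.log r < 0 := Real.log_neg hrpos hr1
      have hexp : r ^ m ≤ Real.exp (-c * n) := by
        have h1 : r ^ m = Real.exp (m * Real.log r) := by
          rw [← Real.exp_log hrpos, ← Real.exp_nat_mul, Real.exp_log hrpos]
        rw [h1, Real.exp_le_exp]
        have h3 : (n : ℝ) / (2 * L) ≤ m := by
          rw [div_le_iff₀ (by positivity)]
          calc (n : ℝ) ≤ 2 * L * m := hreal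
            _ = m * (2 * L) := by ring
        calc (m : ℝ) * Real.log r ≤ ((n : ℝ) / (2 * L)) * Real.log r :=
              mul_le_mul_of_nonpos_right h3 (le_of_lt hlog)
          _ = -c * n := by
              rw [hc]
              field_simp
      exact le_trans (hkey n hn) (ENNReal.ofReal_le_ofReal hexp)


end Stmt13
end

section
/- Differential inequality for one-arm probabilities (mean-field lemma). Fix d ≥ 1 and n ≥ 1, and let θ_n(p) = ℙ_p[0 ↔ ∂Λ_n] (a polynomial function of p since this event depends only on edges in E_n). Then for every p ∈ (0,1), θ_n'(p) ≥ (1/(p(1−p))) · ( inf_{S : 0 ∈ S ⊆ Λ_n} φ_p(S) ) · (1 − θ_n(p)). -/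
open scoped BigOperators Classical

namespace Stmt14

/-- The `i`-th unit vector of `ℤ^d`. -/
def unit (d : ℕ) (i : Fin d) : Fin d → ℤ := fun j => if j = i then 1 else 0

/-- The box `Λ_n = [-n,n]^d ∩ ℤ^d`. -/
noncomputable def box (d n : ℕ) : Finset (Fin d → ℤ) :=
  Fintype.piFinset fun _ : Fin d => Finset.Icc (-(n : ℤ)) (n : ℤ)

/-- The edge set `E_n` of the box: an edge is encoded by a pair `(x, i)`, joining
`x` and `x + unit i`; both endpoints must lie in the box. -/
noncomputable def boxEdges (d n : ℕ) : Finset ((Fin d → ℤ) × Fin d) :=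
  ((box d n) ×ˢ (Finset.univ : Finset (Fin d))).filter fun e => e.1 + unit d e.2 ∈ box d n

/-- Extend a configuration on the box edges by closed edges. -/
noncomputable def ext (d n : ℕ) (σ : {e // e ∈ boxEdges d n} → Bool) :
    ((Fin d → ℤ) × Fin d) → Bool :=
  fun e => if h : e ∈ boxEdges d n then σ ⟨e, h⟩ else false

/-- Adjacency by an open edge. -/
def adj (d : ℕ) (ω : ((Fin d → ℤ) × Fin d) → Bool) (x y : Fin d → ℤ) : Prop :=
  ∃ i : Fin d, (ω (x, i) = true ∧ y = x + unit d i) ∨ (ω (y, i) = true ∧ x = y + unit d i)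

/-- Connectivity by open paths. -/
def conn (d : ℕ) (ω : ((Fin d → ℤ) × Fin d) → Bool) : (Fin d → ℤ) → (Fin d → ℤ) → Prop :=
  Relation.ReflTransGen (adj d ω)

/-- The inner vertex boundary `∂Λ_n`. -/
noncomputable def bdryBox (d n : ℕ) : Finset (Fin d → ℤ) :=
  (box d n).filter fun x => ∃ i : Fin d, x + unit d i ∉ box d n ∨ x - unit d i ∉ box d n

/-- Bernoulli weight `p^{o(σ)} (1-p)^{c(σ)}` of a configuration on the box edges. -/
noncomputable def bw (d n : ℕ) (p : ℝ) (σ : {e // e ∈ boxEdges d n} → Bool) : ℝ :=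
  p ^ (Finset.univ.filter fun e : {e // e ∈ boxEdges d n} => σ e = true).card *
    (1 - p) ^ (Finset.univ.filter fun e : {e // e ∈ boxEdges d n} => σ e = false).card

/-- `θ_n(p) = ℙ_p[0 ↔ ∂Λ_n]`, as an explicit (polynomial) function of `p`. -/
noncomputable def theta (d n : ℕ) (p : ℝ) : ℝ :=
  ∑ σ : {e // e ∈ boxEdges d n} → Bool,
    if ∃ y ∈ bdryBox d n, conn d (ext d n σ) 0 y then bw d n p σ else 0

/-- The edges with both endpoints in `S`. -/
noncomputable def sEdges (d : ℕ) (S : Finset (Fin d → ℤ)) : Finset ((Fin d → ℤ) × Fin d) :=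
  (S ×ˢ (Finset.univ : Finset (Fin d))).filter fun e => e.1 + unit d e.2 ∈ S

/-- Extend a configuration on the edges inside `S` by closed edges. -/
noncomputable def extS (d : ℕ) (S : Finset (Fin d → ℤ))
    (τ : {e // e ∈ sEdges d S} → Bool) : ((Fin d → ℤ) × Fin d) → Bool :=
  fun e => if h : e ∈ sEdges d S then τ ⟨e, h⟩ else false

/-- Bernoulli weight of a configuration on the edges inside `S`. -/
noncomputable def bwS (d : ℕ) (S : Finset (Fin d → ℤ)) (p : ℝ)
    (τ : {e // e ∈ sEdges d S} → Bool) : ℝ :=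
  p ^ (Finset.univ.filter fun e : {e // e ∈ sEdges d S} => τ e = true).card *
    (1 - p) ^ (Finset.univ.filter fun e : {e // e ∈ sEdges d S} => τ e = false).card

/-- `ℙ_p[0 ↔^S x]`: the probability that `0` is connected to `x` by an open path using
only edges with both endpoints in `S`. -/
noncomputable def thetaS (d : ℕ) (S : Finset (Fin d → ℤ)) (p : ℝ) (x : Fin d → ℤ) : ℝ :=
  ∑ τ : {e // e ∈ sEdges d S} → Bool,
    if conn d (extS d S τ) 0 x then bwS d S p τ else 0

/-- `φ_p(S) = p ∑_{xy ∈ ΔS, x ∈ S} ℙ_p[0 ↔^S x]`. -/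
noncomputable def phiS (d : ℕ) (p : ℝ) (S : Finset (Fin d → ℤ)) : ℝ :=
  p * ∑ x ∈ S, ∑ i : Fin d,
    ((if x + unit d i ∉ S then thetaS d S p x else 0) +
      (if x - unit d i ∉ S then thetaS d S p x else 0))

/-- `inf_{0 ∈ S ⊆ Λ_n} φ_p(S)`. -/
noncomputable def infPhi (d n : ℕ) (p : ℝ) : ℝ :=
  sInf {r : ℝ | ∃ S : Finset (Fin d → ℤ),
    (0 : Fin d → ℤ) ∈ S ∧ S ⊆ box d n ∧ r = phiS d p S}

/-! ### auxiliary definitions -/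

abbrev Edge (d : ℕ) := (Fin d → ℤ) × Fin d
abbrev CE (d n : ℕ) := {e // e ∈ boxEdges d n}
abbrev Conf (d n : ℕ) := CE d n → Bool

noncomputable def val (p : ℝ) (b : Bool) : ℝ := if b then p else 1 - p

/-- generic weight -/
noncomputable def wgt {ι : Type*} [Fintype ι] (p : ℝ) (g : ι → Bool) : ℝ :=
  ∏ i, val p (g i)

lemma wgt_eq_pow {ι : Type*} [Fintype ι] (p : ℝ) (g : ι → Bool) :
    wgt p g = p ^ (Finset.univ.filter fun i => g i = true).card *
      (1 - p) ^ (Finset.univ.filter fun i => g i = false).card := by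
  classical
  rw [wgt]
  rw [show (fun i => val p (g i)) = fun i => if g i = true then p else 1 - p by
    funext i; cases h : g i <;> simp [val, h]]
  rw [Finset.prod_ite, Finset.prod_const, Finset.prod_const]
  congr 2
  exact congrArg Finset.card (Finset.filter_congr fun i _ => by simp)

lemma bw_eq_wgt (d n : ℕ) (p : ℝ) (σ : Conf d n) : bw d n p σ = wgt p σ := by
  rw [wgt_eq_pow]; rfl

lemma bwS_eq_wgt (d : ℕ) (S : Finset (Fin d → ℤ)) (p : ℝ) (τ : {e // e ∈ sEdges d S} → Bool) :
    bwS d S p τ = wgt p τ := by rw [wgt_eq_pow]; rfl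

lemma wgt_nonneg {ι : Type*} [Fintype ι] {p : ℝ} (h0 : 0 ≤ p) (h1 : p ≤ 1) (g : ι → Bool) :
    0 ≤ wgt p g :=
  Finset.prod_nonneg fun i _ => by cases g i <;> simp [val] <;> linarith

lemma sum_wgt {ι : Type*} [DecidableEq ι] [Fintype ι] (p : ℝ) : ∑ g : ι → Bool, wgt p g = 1 := by
  classical
  simp only [wgt]
  calc ∑ g : ι → Bool, ∏ i, val p (g i) = ∏ _i : ι, ∑ b : Bool, val p b :=
        (Fintype.prod_sum (fun (_ : ι) (b : Bool) => val p b)).symm ▸ rfl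
    _ = 1 := by simp [val]


/-! ### connectivity basics -/

lemma adj_symm {d : ℕ} {ω : Edge d → Bool} {x y : Fin d → ℤ} (h : adj d ω x y) : adj d ω y x := by
  obtain ⟨i, h | h⟩ := h
  · exact ⟨i, Or.inr h⟩
  · exact ⟨i, Or.inl h⟩

lemma conn_symm {d : ℕ} {ω : Edge d → Bool} {x y : Fin d → ℤ} (h : conn d ω x y) :
    conn d ω y x :=
  (haveI : Std.Symm (adj d ω) := ⟨fun _ _ => adj_symm⟩; Relation.ReflTransGen.symmetric.symm _ _ h)

lemma conn_mono {d : ℕ} {ω ω' : Edge d → Bool} (h : ∀ e, ω e = true → ω' e = true)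
    {x y : Fin d → ℤ} (hc : conn d ω x y) : conn d ω' x y :=
  Relation.ReflTransGen.mono (r := adj d ω) (p := adj d ω') (fun a b ⟨i, hi⟩ => ⟨i, by
    rcases hi with ⟨h1, h2⟩ | ⟨h1, h2⟩
    · exact Or.inl ⟨h _ h1, h2⟩
    · exact Or.inr ⟨h _ h1, h2⟩⟩) _ _ hc

lemma conn_trans {d : ℕ} {ω : Edge d → Bool} {x y z : Fin d → ℤ}
    (h1 : conn d ω x y) (h2 : conn d ω y z) : conn d ω x z := h1.trans h2

/-- membership preservation along paths when no open edge crosses `S` -/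
lemma conn_mem_iff {d : ℕ} {ω : Edge d → Bool} {S : Finset (Fin d → ℤ)}
    (hcr : ∀ a : Fin d → ℤ, ∀ i : Fin d, ω (a, i) = true → (a ∈ S ↔ a + unit d i ∈ S))
    {x y : Fin d → ℤ} (hc : conn d ω x y) : (x ∈ S ↔ y ∈ S) := by
  induction hc with
  | refl => rfl
  | tail _ hadj ih =>
      rename_i b c _
      obtain ⟨i, ⟨h1, h2⟩ | ⟨h1, h2⟩⟩ := hadj
      · exact ih.trans (h2 ▸ hcr b i h1)
      · exact ih.trans (h2 ▸ (hcr c i h1).symm)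

/-- paths staying outside `S` transfer between configurations agreeing outside `S` -/
lemma conn_transfer {d : ℕ} {ω ω' : Edge d → Bool} {S : Finset (Fin d → ℤ)}
    (hcr : ∀ a : Fin d → ℤ, ∀ i : Fin d, ω (a, i) = true → (a ∈ S ↔ a + unit d i ∈ S))
    (hag : ∀ a : Fin d → ℤ, ∀ i : Fin d, (a ∉ S ∨ a + unit d i ∉ S) → ω (a, i) = ω' (a, i))
    {x y : Fin d → ℤ} (hx : x ∉ S) (hc : conn d ω x y) : y ∉ S ∧ conn d ω' x y := by
  induction hc with
  | refl => exact ⟨hx, Relation.ReflTransGen.refl⟩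
  | tail _ hadj ih =>
      rename_i b c _
      obtain ⟨hb, hxb⟩ := ih
      obtain ⟨i, ⟨h1, h2⟩ | ⟨h1, h2⟩⟩ := hadj
      · have hcS : c ∉ S := fun hcmem => hb ((hcr b i h1).mpr (h2 ▸ hcmem))
        have : ω' (b, i) = true := (hag b i (Or.inl hb)).symm.trans h1
        exact ⟨hcS, hxb.tail ⟨i, Or.inl ⟨this, h2⟩⟩⟩
      · have hcS : c ∉ S := fun hcmem => hb (h2 ▸ (hcr c i h1).mp hcmem)
        have : ω' (c, i) = true := (hag c i (Or.inl hcS)).symm.trans h1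
        exact ⟨hcS, hxb.tail ⟨i, Or.inr ⟨this, h2⟩⟩⟩

/-! ### the set of vertices not connected to the boundary -/

/-- the event `0 ↔ ∂Λ_n` -/
def Aev (d n : ℕ) (σ : Conf d n) : Prop := ∃ y ∈ bdryBox d n, conn d (ext d n σ) 0 y

noncomputable def Sset (d n : ℕ) (σ : Conf d n) : Finset (Fin d → ℤ) :=
  (box d n).filter fun x => ¬ ∃ y ∈ bdryBox d n, conn d (ext d n σ) x y

lemma mem_Sset {d n : ℕ} {σ : Conf d n} {x : Fin d → ℤ} :
    x ∈ Sset d n σ ↔ x ∈ box d n ∧ ¬ ∃ y ∈ bdryBox d n, conn d (ext d n σ) x y :=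
  Finset.mem_filter

lemma Sset_subset {d n : ℕ} (σ : Conf d n) : Sset d n σ ⊆ box d n :=
  Finset.filter_subset _ _

lemma zero_mem_box (d n : ℕ) : (0 : Fin d → ℤ) ∈ box d n := by
  simp only [box, Fintype.mem_piFinset]
  intro i
  simp only [Pi.zero_apply, Finset.mem_Icc]
  constructor <;> [exact neg_nonpos.mpr (Int.ofNat_nonneg n); exact Int.ofNat_nonneg n]

lemma zero_mem_Sset_iff {d n : ℕ} (σ : Conf d n) :
    (0 : Fin d → ℤ) ∈ Sset d n σ ↔ ¬ Aev d n σ := by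
  rw [mem_Sset]
  simp [Aev, zero_mem_box]

lemma bdry_not_mem_Sset {d n : ℕ} (σ : Conf d n) {y : Fin d → ℤ} (hy : y ∈ bdryBox d n) :
    y ∉ Sset d n σ := by
  rw [mem_Sset]
  rintro ⟨-, hno⟩
  exact hno ⟨y, hy, Relation.ReflTransGen.refl⟩

lemma mem_boxEdges {d n : ℕ} {e : Edge d} :
    e ∈ boxEdges d n ↔ e.1 ∈ box d n ∧ e.1 + unit d e.2 ∈ box d n := by
  simp [boxEdges, Finset.mem_filter, Finset.mem_product]

lemma mem_sEdges {d : ℕ} {S : Finset (Fin d → ℤ)} {e : Edge d} :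
    e ∈ sEdges d S ↔ e.1 ∈ S ∧ e.1 + unit d e.2 ∈ S := by
  simp [sEdges, Finset.mem_filter, Finset.mem_product]

/-- no open edge crosses `Sset σ` -/
lemma Sset_no_cross {d n : ℕ} (σ : Conf d n) (a : Fin d → ℤ) (i : Fin d)
    (hopen : ext d n σ (a, i) = true) : (a ∈ Sset d n σ ↔ a + unit d i ∈ Sset d n σ) := by
  have hbe : (a, i) ∈ boxEdges d n := by
    by_contra h
    simp [ext, h] at hopen
  have hadj : adj d (ext d n σ) a (a + unit d i) := ⟨i, Or.inl ⟨hopen, rfl⟩⟩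
  obtain ⟨ha, hb⟩ := mem_boxEdges.mp hbe
  simp only [mem_Sset, ha, hb, true_and]
  constructor
  · intro hno ⟨y, hy, hc⟩
    exact hno ⟨y, hy, Relation.ReflTransGen.head hadj hc⟩
  · intro hno ⟨y, hy, hc⟩
    exact hno ⟨y, hy, Relation.ReflTransGen.head (adj_symm hadj) hc⟩


/-! ### Sset is determined by the edges outside it -/

lemma Sset_determined {d n : ℕ} {σ σ' : Conf d n}
    (hag : ∀ (f : Edge d) (h : f ∈ boxEdges d n),
      f ∉ sEdges d (Sset d n σ) → σ ⟨f, h⟩ = σ' ⟨f, h⟩) :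
    Sset d n σ' = Sset d n σ := by
  set S := Sset d n σ with hS
  have hagw : ∀ (a : Fin d → ℤ) (i : Fin d), (a ∉ S ∨ a + unit d i ∉ S) →
      ext d n σ (a, i) = ext d n σ' (a, i) := by
    intro a i hd
    by_cases hbe : (a, i) ∈ boxEdges d n
    · simp only [ext, dif_pos hbe]
      refine hag _ hbe fun hmem => ?_
      obtain ⟨h1, h2⟩ := mem_sEdges.mp hmem
      rcases hd with h | h
      · exact h h1
      · exact h h2
    · simp [ext, hbe]
  have hcr : ∀ (a : Fin d → ℤ) (i : Fin d), ext d n σ (a, i) = true →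
      (a ∈ S ↔ a + unit d i ∈ S) := fun a i h => Sset_no_cross σ a i h
  have hcr' : ∀ (a : Fin d → ℤ) (i : Fin d), ext d n σ' (a, i) = true →
      (a ∈ S ↔ a + unit d i ∈ S) := by
    intro a i h
    by_contra hiff
    have hd : a ∉ S ∨ a + unit d i ∉ S := by tauto
    have := (hagw a i hd).trans h
    exact hiff (hcr a i this)
  ext x
  by_cases hxb : x ∈ box d n
  · constructor
    · intro hx'
      by_contra hxS
      have hex : ∃ y ∈ bdryBox d n, conn d (ext d n σ) x y := by
        by_contra hno
        exact hxS (mem_Sset.mpr ⟨hxb, hno⟩)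
      obtain ⟨y, hy, hc⟩ := hex
      obtain ⟨-, hc'⟩ := conn_transfer hcr hagw hxS hc
      exact (mem_Sset.mp hx').2 ⟨y, hy, hc'⟩
    · intro hxS
      refine mem_Sset.mpr ⟨hxb, ?_⟩
      rintro ⟨y, hy, hc⟩
      have hyS : y ∉ S := bdry_not_mem_Sset σ hy
      obtain ⟨hxnS, -⟩ := conn_transfer hcr'
        (fun a i hd => (hagw a i hd).symm) hyS (conn_symm hc)
      exact hxnS hxS
  · constructor
    · intro h; exact absurd (Sset_subset σ' h) hxb
    · intro h; exact absurd (Sset_subset σ h) hxb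

/-! ### factorization over inside/outside edges -/

section Factor

variable {d n : ℕ} {S : Finset (Fin d → ℤ)}

lemma sEdges_subset_boxEdges (hSb : S ⊆ box d n) {e : Edge d} (he : e ∈ sEdges d S) :
    e ∈ boxEdges d n := by
  obtain ⟨h1, h2⟩ := mem_sEdges.mp he
  exact mem_boxEdges.mpr ⟨hSb h1, hSb h2⟩

noncomputable def resIn (d n : ℕ) (S : Finset (Fin d → ℤ)) (σ : Conf d n) :
    {e // e ∈ sEdges d S} → Bool :=
  fun f => if h : (f : Edge d) ∈ boxEdges d n then σ ⟨f, h⟩ else false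

lemma extS_resIn_le (σ : Conf d n) (f : Edge d)
    (h : extS d S (resIn d n S σ) f = true) : ext d n σ f = true := by
  simp only [extS] at h
  split at h
  · simp only [resIn] at h
    split at h
    · simpa [ext, *] using h
    · exact absurd h (by simp)
  · exact absurd h (by simp)

noncomputable def glue (τ : {e // e ∈ sEdges d S} → Bool)
    (ρ : {e : CE d n // (e : Edge d) ∉ sEdges d S} → Bool) : Conf d n :=
  fun e => if h : (e : Edge d) ∈ sEdges d S then τ ⟨e, h⟩ else ρ ⟨e, h⟩

lemma resIn_glue (hSb : S ⊆ box d n) (τ : {e // e ∈ sEdges d S} → Bool)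
    (ρ : {e : CE d n // (e : Edge d) ∉ sEdges d S} → Bool) :
    resIn d n S (glue τ ρ) = τ := by
  funext f
  have hb : (f : Edge d) ∈ boxEdges d n := sEdges_subset_boxEdges hSb f.2
  simp only [resIn, dif_pos hb, glue]
  rw [dif_pos f.2]

noncomputable def eqSum (hSb : S ⊆ box d n) :
    ({e // e ∈ sEdges d S} ⊕ {e : CE d n // (e : Edge d) ∉ sEdges d S}) ≃ CE d n where
  toFun := Sum.elim (fun f => ⟨f.1, sEdges_subset_boxEdges hSb f.2⟩) Subtype.val
  invFun e := if h : (e : Edge d) ∈ sEdges d S then Sum.inl ⟨e, h⟩ else Sum.inr ⟨e, h⟩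
  left_inv s := by
    rcases s with f | f
    · simp only [Sum.elim_inl]
      first | rfl | exact dif_pos f.2
    · simp only [Sum.elim_inr]
      first | rfl | exact dif_neg f.2
  right_inv e := by
    by_cases h : (e : Edge d) ∈ sEdges d S
    · simp only [dif_pos h, Sum.elim_inl]
    · simp only [dif_neg h, Sum.elim_inr]

lemma glue_eqSum_inl (hSb : S ⊆ box d n) (τ : {e // e ∈ sEdges d S} → Bool)
    (ρ : {e : CE d n // (e : Edge d) ∉ sEdges d S} → Bool) (f : {e // e ∈ sEdges d S}) :
    glue τ ρ (eqSum hSb (Sum.inl f)) = τ f := by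
  simp only [eqSum, Equiv.coe_fn_mk, Sum.elim_inl, glue]
  exact dif_pos f.2

lemma glue_eqSum_inr (hSb : S ⊆ box d n) (τ : {e // e ∈ sEdges d S} → Bool)
    (ρ : {e : CE d n // (e : Edge d) ∉ sEdges d S} → Bool)
    (f : {e : CE d n // (e : Edge d) ∉ sEdges d S}) :
    glue τ ρ (eqSum hSb (Sum.inr f)) = ρ f := by
  simp only [eqSum, Equiv.coe_fn_mk, Sum.elim_inr, glue]
  exact dif_neg f.2

lemma wgt_glue (hSb : S ⊆ box d n) (p : ℝ) (τ : {e // e ∈ sEdges d S} → Bool)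
    (ρ : {e : CE d n // (e : Edge d) ∉ sEdges d S} → Bool) :
    wgt p (glue τ ρ) = wgt p τ * wgt p ρ := by
  rw [wgt, ← Equiv.prod_comp (eqSum hSb) (fun e => val p (glue τ ρ e)),
    Fintype.prod_sum_type]
  simp only [glue_eqSum_inl, glue_eqSum_inr]
  rfl

noncomputable def confEquiv (hSb : S ⊆ box d n) :
    (({e // e ∈ sEdges d S} → Bool) × ({e : CE d n // (e : Edge d) ∉ sEdges d S} → Bool))
      ≃ Conf d n where
  toFun x := glue x.1 x.2
  invFun σ := (fun f => σ ⟨f.1, sEdges_subset_boxEdges hSb f.2⟩, fun f => σ f.1)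
  left_inv x := by
    obtain ⟨τ, ρ⟩ := x
    refine Prod.ext (funext fun f => ?_) (funext fun f => ?_)
    · simp only [glue]
      rw [dif_pos f.2]
    · simp only [glue]
      rw [dif_neg f.2]
  right_inv σ := by
    funext e
    simp only [glue]
    by_cases h : (e : Edge d) ∈ sEdges d S
    · rw [dif_pos h]
    · rw [dif_neg h]


lemma Sset_glue_congr (hSb : S ⊆ box d n) {τ τ' : {e // e ∈ sEdges d S} → Bool}
    {ρ : {e : CE d n // (e : Edge d) ∉ sEdges d S} → Bool}
    (h : Sset d n (glue τ ρ) = S) : Sset d n (glue τ' ρ) = S := by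
  have : Sset d n (glue τ' ρ) = Sset d n (glue τ ρ) := by
    apply Sset_determined
    intro f hf hmem
    rw [h] at hmem
    simp only [glue]
    rw [dif_neg hmem, dif_neg hmem]
  rw [this, h]

lemma factor_sum (hSb : S ⊆ box d n) (p : ℝ) (h : ({e // e ∈ sEdges d S} → Bool) → ℝ) :
    ∑ σ : Conf d n, (if Sset d n σ = S then (1:ℝ) else 0) * h (resIn d n S σ) * wgt p σ
    = (∑ ρ : {e : CE d n // (e : Edge d) ∉ sEdges d S} → Bool,
        (if Sset d n (glue (fun _ : {e // e ∈ sEdges d S} => false) ρ) = S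
          then (1:ℝ) else 0) * wgt p ρ) *
      (∑ τ : {e // e ∈ sEdges d S} → Bool, h τ * wgt p τ) := by
  have key : ∀ (τ : {e // e ∈ sEdges d S} → Bool)
      (ρ : {e : CE d n // (e : Edge d) ∉ sEdges d S} → Bool),
      (if Sset d n (glue τ ρ) = S then (1:ℝ) else 0) =
      (if Sset d n (glue (fun _ : {e // e ∈ sEdges d S} => false) ρ) = S
        then (1:ℝ) else 0) := by
    intro τ ρ
    by_cases hc : Sset d n (glue τ ρ) = S
    · rw [if_pos hc, if_pos (Sset_glue_congr hSb hc)]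
    · rw [if_neg hc, if_neg fun hc' => hc (Sset_glue_congr hSb hc')]
  rw [← Equiv.sum_comp (confEquiv hSb)
      (fun σ => (if Sset d n σ = S then (1:ℝ) else 0) * h (resIn d n S σ) * wgt p σ),
    Fintype.sum_prod_type, Finset.sum_mul_sum, Finset.sum_comm]
  refine Finset.sum_congr rfl fun ρ _ => Finset.sum_congr rfl fun τ _ => ?_
  show (if Sset d n (glue τ ρ) = S then (1:ℝ) else 0) *
      h (resIn d n S (glue τ ρ)) * wgt p (glue τ ρ) = _
  rw [key τ ρ, resIn_glue hSb, wgt_glue hSb]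
  ring

noncomputable def QS (d n : ℕ) (S : Finset (Fin d → ℤ)) (p : ℝ) : ℝ :=
  ∑ ρ : {e : CE d n // (e : Edge d) ∉ sEdges d S} → Bool,
    (if Sset d n (glue (fun _ : {e // e ∈ sEdges d S} => false) ρ) = S
      then (1:ℝ) else 0) * wgt p ρ

lemma QS_nonneg {p : ℝ} (h0 : 0 ≤ p) (h1 : p ≤ 1) : 0 ≤ QS d n S p :=
  Finset.sum_nonneg fun ρ _ =>
    mul_nonneg (by split <;> norm_num) (wgt_nonneg h0 h1 ρ)

lemma thetaS_eq (p : ℝ) (x : Fin d → ℤ) :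
    thetaS d S p x =
      ∑ τ : {e // e ∈ sEdges d S} → Bool,
        (if conn d (extS d S τ) 0 x then wgt p τ else 0) := by
  rw [thetaS]
  refine Finset.sum_congr rfl fun τ _ => ?_
  split <;> simp [bwS_eq_wgt]

lemma sum_ind_wgt (hSb : S ⊆ box d n) (p : ℝ) :
    ∑ σ : Conf d n, (if Sset d n σ = S then (1:ℝ) else 0) * wgt p σ = QS d n S p := by
  have h := factor_sum hSb p (fun _ => (1:ℝ))
  simp only [mul_one, one_mul] at h
  rw [sum_wgt, mul_one] at h
  rw [h, QS]

noncomputable def PhiP {d : ℕ} (S : Finset (Fin d → ℤ)) (p : ℝ) : ℝ :=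
  ∑ x ∈ S, ∑ i : Fin d,
    ((if x + unit d i ∉ S then thetaS d S p x else 0) +
      (if x - unit d i ∉ S then thetaS d S p x else 0))

lemma phiS_eq_PhiP (p : ℝ) : phiS d p S = p * PhiP S p := by simp only [phiS, PhiP]

noncomputable def hL (d : ℕ) (S : Finset (Fin d → ℤ))
    (τ : {e // e ∈ sEdges d S} → Bool) : ℝ :=
  ∑ x ∈ S, ∑ i : Fin d,
    ((if x + unit d i ∉ S then (if conn d (extS d S τ) 0 x then (1:ℝ) else 0) else 0) +
      (if x - unit d i ∉ S then (if conn d (extS d S τ) 0 x then (1:ℝ) else 0) else 0))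

lemma sum_hL_wgt (p : ℝ) :
    ∑ τ : {e // e ∈ sEdges d S} → Bool, hL d S τ * wgt p τ = PhiP S p := by
  simp only [hL, Finset.sum_mul, add_mul, ite_mul, zero_mul]
  rw [Finset.sum_comm]
  refine Finset.sum_congr rfl fun x _ => ?_
  rw [Finset.sum_comm]
  refine Finset.sum_congr rfl fun i _ => ?_
  rw [Finset.sum_add_distrib]
  congr 1
  · by_cases c1 : x + unit d i ∉ S
    · simp only [if_pos c1, one_mul]
      exact (thetaS_eq p x).symm
    · simp [c1]
  · by_cases c2 : x - unit d i ∉ S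
    · simp only [if_pos c2, one_mul]
      exact (thetaS_eq p x).symm
    · simp [c2]

lemma perS (hSb : S ⊆ box d n) (p : ℝ) :
    ∑ σ : Conf d n, (if Sset d n σ = S then (1:ℝ) else 0) * hL d S (resIn d n S σ) * wgt p σ
      = QS d n S p * PhiP S p := by
  rw [factor_sum hSb p (hL d S), sum_hL_wgt, QS]

end Factor


/-! ### the derivative of theta -/

noncomputable def nOpen {ι : Type*} [Fintype ι] (g : ι → Bool) : ℕ :=
  (Finset.univ.filter fun i => g i = true).card

noncomputable def nClosed {ι : Type*} [Fintype ι] (g : ι → Bool) : ℕ :=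
  (Finset.univ.filter fun i => g i = false).card

lemma hasDerivAt_pair (a b : ℕ) (p : ℝ) :
    HasDerivAt (fun q : ℝ => q ^ a * (1 - q) ^ b)
      ((a : ℝ) * p ^ (a - 1) * (1 - p) ^ b - (b : ℝ) * (1 - p) ^ (b - 1) * p ^ a) p := by
  have h1 : HasDerivAt (fun q : ℝ => q ^ a) ((a : ℝ) * p ^ (a - 1)) p := hasDerivAt_pow a p
  have hb : HasDerivAt (fun q : ℝ => (1 : ℝ) - q) (-1) p := (hasDerivAt_id p).const_sub 1
  have h2 : HasDerivAt (fun q : ℝ => (1 - q) ^ b) ((b : ℝ) * (1 - p) ^ (b - 1) * (-1)) p :=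
    (hasDerivAt_pow b (1 - p)).comp p hb
  have := h1.fun_mul h2
  exact this.congr_deriv (by ring)

noncomputable def thetaD (d n : ℕ) (p : ℝ) : ℝ :=
  ∑ σ : Conf d n, if Aev d n σ then
    ((nOpen σ : ℝ) * p ^ (nOpen σ - 1) * (1 - p) ^ nClosed σ
      - (nClosed σ : ℝ) * (1 - p) ^ (nClosed σ - 1) * p ^ nOpen σ) else 0

lemma theta_eq (d n : ℕ) (q : ℝ) :
    theta d n q = ∑ σ : Conf d n,
      if Aev d n σ then q ^ nOpen σ * (1 - q) ^ nClosed σ else 0 := by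
  rw [theta]
  exact Finset.sum_congr rfl fun σ _ => if_congr Iff.rfl rfl rfl

lemma hasDerivAt_theta (d n : ℕ) (p : ℝ) : HasDerivAt (theta d n) (thetaD d n p) p := by
  have : (theta d n) = fun q => ∑ σ : Conf d n,
      if Aev d n σ then q ^ nOpen σ * (1 - q) ^ nClosed σ else 0 := by
    funext q; exact theta_eq d n q
  rw [this, thetaD]
  apply HasDerivAt.fun_sum
  intro σ _
  by_cases h : Aev d n σ
  · simp only [if_pos h]
    exact hasDerivAt_pair _ _ p
  · simp only [if_neg h]
    exact hasDerivAt_const p 0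

/-! ### rewriting the derivative as a sum over edges -/

noncomputable def cval (p : ℝ) (b : Bool) : ℝ := if b then 1 / p else -(1 / (1 - p))

lemma cval_true (p : ℝ) : cval p true = 1 / p := rfl
lemma cval_false (p : ℝ) : cval p false = -(1 / (1 - p)) := rfl
lemma val_true (p : ℝ) : val p true = p := rfl
lemma val_false (p : ℝ) : val p false = 1 - p := rfl

lemma sum_cval {ι : Type*} [DecidableEq ι] [Fintype ι] (p : ℝ) (g : ι → Bool) :
    ∑ i, cval p (g i) = (nOpen g : ℝ) * (1 / p) - (nClosed g : ℝ) * (1 / (1 - p)) := by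
  rw [show (fun i => cval p (g i)) = fun i => if g i = true then 1/p else -(1/(1-p)) by
    funext i; cases h : g i <;> simp [cval, h]]
  rw [Finset.sum_ite, Finset.sum_const, Finset.sum_const, nOpen, nClosed]
  have : (Finset.univ.filter fun i => ¬ g i = true) = Finset.univ.filter fun i => g i = false := by
    apply Finset.filter_congr; intro i _; simp
  rw [this, nsmul_eq_mul, nsmul_eq_mul]
  ring

lemma coef_shift (a : ℕ) (x : ℝ) (hx : x ≠ 0) :
    (a : ℝ) * x ^ (a - 1) = (a : ℝ) * (1 / x) * x ^ a := by
  cases a with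
  | zero => simp
  | succ k =>
      simp only [Nat.add_sub_cancel, pow_succ, Nat.cast_succ]
      field_simp

lemma thetaD_eq_sum_edges (d n : ℕ) {p : ℝ} (hp0 : p ≠ 0) (hp1 : (1:ℝ) - p ≠ 0) :
    thetaD d n p = ∑ e : CE d n, ∑ σ : Conf d n,
      (if Aev d n σ then cval p (σ e) * wgt p σ else 0) := by
  rw [thetaD, Finset.sum_comm]
  refine Finset.sum_congr rfl fun σ _ => ?_
  by_cases h : Aev d n σ
  · simp only [if_pos h]
    rw [← Finset.sum_mul, sum_cval p σ, wgt_eq_pow]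
    rw [show p ^ (Finset.univ.filter fun e : CE d n => σ e = true).card = p ^ nOpen σ from rfl]
    rw [show (1-p) ^ (Finset.univ.filter fun e : CE d n => σ e = false).card
        = (1-p) ^ nClosed σ from rfl]
    rw [coef_shift (nOpen σ) p hp0, coef_shift (nClosed σ) (1-p) hp1]
    ring
  · simp [if_neg h]

/-! ### pairing: opening/closing one edge -/

noncomputable def R (p : ℝ) {d n : ℕ} (e : CE d n) (σ : Conf d n) : ℝ :=
  ∏ f ∈ Finset.univ.erase e, val p (σ f)

lemma R_nonneg {d n : ℕ} {p : ℝ} (h0 : 0 ≤ p) (h1 : p ≤ 1) (e : CE d n) (σ : Conf d n) :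
    0 ≤ R p e σ :=
  Finset.prod_nonneg fun f _ => by cases σ f <;> simp [val] <;> linarith

lemma wgt_eq_val_mul_R {d n : ℕ} (p : ℝ) (e : CE d n) (σ : Conf d n) :
    wgt p σ = val p (σ e) * R p e σ := by
  rw [wgt, R, ← Finset.mul_prod_erase Finset.univ _ (Finset.mem_univ e)]

lemma R_update {d n : ℕ} (p : ℝ) (e : CE d n) (σ : Conf d n) (b : Bool) :
    R p e (Function.update σ e b) = R p e σ := by
  refine Finset.prod_congr rfl fun f hf => ?_
  rw [Function.update_of_ne (Finset.ne_of_mem_erase hf)]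

lemma pairing {d n : ℕ} {p : ℝ} (hp0 : p ≠ 0) (hp1 : (1:ℝ) - p ≠ 0) (e : CE d n) :
    ∑ σ : Conf d n, (if Aev d n σ then cval p (σ e) * wgt p σ else 0)
      = ∑ σ : Conf d n, (if σ e = false then
          ((if Aev d n (Function.update σ e true) then (1:ℝ) else 0)
            - (if Aev d n σ then (1:ℝ) else 0)) * R p e σ else 0) := by
  classical
  rw [← Finset.sum_filter_add_sum_filter_not Finset.univ (fun σ : Conf d n => σ e = false)
      (fun σ => if Aev d n σ then cval p (σ e) * wgt p σ else 0),
    ← Finset.sum_filter_add_sum_filter_not Finset.univ (fun σ : Conf d n => σ e = false)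
      (fun σ => if σ e = false then
          ((if Aev d n (Function.update σ e true) then (1:ℝ) else 0)
            - (if Aev d n σ then (1:ℝ) else 0)) * R p e σ else 0)]
  have hzero : ∑ σ ∈ Finset.univ.filter (fun σ : Conf d n => ¬ σ e = false),
      (if σ e = false then
          ((if Aev d n (Function.update σ e true) then (1:ℝ) else 0)
            - (if Aev d n σ then (1:ℝ) else 0)) * R p e σ else 0) = 0 := by
    refine Finset.sum_eq_zero fun σ hσ => ?_
    rw [if_neg (Finset.mem_filter.mp hσ).2]
  rw [hzero, add_zero]
  have hbij : ∑ σ ∈ Finset.univ.filter (fun σ : Conf d n => ¬ σ e = false),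
      (if Aev d n σ then cval p (σ e) * wgt p σ else 0)
      = ∑ σ ∈ Finset.univ.filter (fun σ : Conf d n => σ e = false),
        (if Aev d n (Function.update σ e true) then (1:ℝ) else 0) * R p e σ := by
    apply Finset.sum_nbij' (i := fun σ => Function.update σ e false)
      (j := fun σ => Function.update σ e true)
    · intro σ hσ
      simp only [Finset.mem_filter, Finset.mem_univ, true_and, Function.update_self]
    · intro σ hσ
      simp only [Finset.mem_filter, Finset.mem_univ, true_and, Function.update_self]
      simp
    · intro σ hσ
      simp only [Finset.mem_filter, Finset.mem_univ, true_and, Bool.not_eq_false] at hσ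
      rw [Function.update_idem, ← hσ, Function.update_eq_self]
    · intro σ hσ
      simp only [Finset.mem_filter, Finset.mem_univ, true_and] at hσ
      rw [Function.update_idem, ← hσ, Function.update_eq_self]
    · intro σ hσ
      simp only [Finset.mem_filter, Finset.mem_univ, true_and, Bool.not_eq_false] at hσ
      have hupd : Function.update (Function.update σ e false) e true = σ := by
        rw [Function.update_idem, ← hσ, Function.update_eq_self]
      rw [hupd, R_update]
      by_cases hA : Aev d n σ
      · rw [if_pos hA, if_pos hA, wgt_eq_val_mul_R p e σ, hσ, cval_true, val_true]
        field_simp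
      · rw [if_neg hA, if_neg hA, zero_mul]
  rw [hbij, ← Finset.sum_add_distrib]
  refine Finset.sum_congr rfl fun σ hσ => ?_
  have hf : σ e = false := (Finset.mem_filter.mp hσ).2
  rw [if_pos hf]
  by_cases hA : Aev d n σ
  · rw [if_pos hA, if_pos hA, wgt_eq_val_mul_R p e σ, hf, cval_false, val_false]
    have h2 : -(1/(1-p)) * ((1-p) * R p e σ) = -R p e σ := by
      field_simp
    rw [h2]
    ring
  · rw [if_neg hA, if_neg hA, zero_add, sub_zero]


/-! ### pivotal edges -/

lemma ext_update_ge {d n : ℕ} (σ : Conf d n) (E : CE d n) (f : Edge d)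
    (h : ext d n σ f = true) : ext d n (Function.update σ E true) f = true := by
  simp only [ext] at h ⊢
  split at h
  · rename_i hb
    rw [dif_pos hb, Function.update_apply]
    split
    · rfl
    · exact h
  · exact absurd h (by simp)

lemma Aev_mono {d n : ℕ} {σ : Conf d n} (E : CE d n) (h : Aev d n σ) :
    Aev d n (Function.update σ E true) := by
  obtain ⟨y, hy, hc⟩ := h
  exact ⟨y, hy, conn_mono (ext_update_ge σ E) hc⟩

noncomputable def pivSet (d n : ℕ) (σ : Conf d n) : Finset (CE d n) :=
  Finset.univ.filter fun e =>
    σ e = false ∧ ¬ Aev d n σ ∧ Aev d n (Function.update σ e true)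

lemma sum_pivR {d n : ℕ} {p : ℝ} (hp1 : (1:ℝ) - p ≠ 0) (σ : Conf d n) :
    ∑ e : CE d n, (if σ e = false ∧ ¬ Aev d n σ ∧ Aev d n (Function.update σ e true)
        then R p e σ else 0)
      = ((pivSet d n σ).card : ℝ) * ((1 / (1 - p)) * wgt p σ) := by
  have h1 : ∀ e : CE d n,
      (if σ e = false ∧ ¬ Aev d n σ ∧ Aev d n (Function.update σ e true)
        then R p e σ else 0)
      = (if σ e = false ∧ ¬ Aev d n σ ∧ Aev d n (Function.update σ e true)
        then (1 / (1 - p)) * wgt p σ else 0) := by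
    intro e
    by_cases hc : σ e = false ∧ ¬ Aev d n σ ∧ Aev d n (Function.update σ e true)
    · rw [if_pos hc, if_pos hc, wgt_eq_val_mul_R p e σ, hc.1, val_false]
      field_simp
    · rw [if_neg hc, if_neg hc]
  simp only [h1]
  rw [Finset.sum_ite, Finset.sum_const, Finset.sum_const_zero, add_zero, nsmul_eq_mul, pivSet]

/-! ### neighbors of points of Sset stay in the box -/

lemma mem_bdryBox {d n : ℕ} {x : Fin d → ℤ} :
    x ∈ bdryBox d n ↔ x ∈ box d n ∧
      ∃ i : Fin d, x + unit d i ∉ box d n ∨ x - unit d i ∉ box d n := Finset.mem_filter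

lemma Sset_neighbors_in_box {d n : ℕ} {σ : Conf d n} {x : Fin d → ℤ}
    (hx : x ∈ Sset d n σ) (i : Fin d) :
    x + unit d i ∈ box d n ∧ x - unit d i ∈ box d n := by
  have hxb : x ∈ box d n := Sset_subset σ hx
  by_contra h
  push_neg at h
  have : x ∈ bdryBox d n := mem_bdryBox.mpr ⟨hxb, i, by tauto⟩
  exact bdry_not_mem_Sset σ this hx

lemma escape {d n : ℕ} {σ : Conf d n} {y : Fin d → ℤ} (hyb : y ∈ box d n)
    (hyS : y ∉ Sset d n σ) : ∃ z ∈ bdryBox d n, conn d (ext d n σ) y z := by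
  by_contra h
  exact hyS (mem_Sset.mpr ⟨hyb, h⟩)

/-! ### the injection from boundary connections into pivotal edges -/

noncomputable def Tset (d n : ℕ) (S : Finset (Fin d → ℤ))
    (τ : {e // e ∈ sEdges d S} → Bool) : Finset ((Fin d → ℤ) × (Fin d × Bool)) :=
  (S ×ˢ ((Finset.univ : Finset (Fin d)) ×ˢ (Finset.univ : Finset Bool))).filter
    fun z => (if z.2.2 then z.1 + unit d z.2.1 ∉ S else z.1 - unit d z.2.1 ∉ S) ∧
      conn d (extS d S τ) 0 z.1

lemma hL_eq_card (d n : ℕ) (S : Finset (Fin d → ℤ)) (τ : {e // e ∈ sEdges d S} → Bool) :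
    hL d S τ = ((Tset d n S τ).card : ℝ) := by
  classical
  rw [Tset, Finset.card_filter]
  push_cast
  rw [Finset.sum_product]
  rw [hL]
  refine Finset.sum_congr rfl fun x hx => ?_
  rw [Finset.sum_product]
  refine Finset.sum_congr rfl fun i hi => ?_
  rw [show (Finset.univ : Finset Bool) = {true, false} by rfl]
  rw [Finset.sum_insert (by simp), Finset.sum_singleton]
  simp only [if_true, if_false]
  by_cases hc : conn d (extS d S τ) 0 x
  · simp [hc]
  · simp [hc]


lemma exists_CE {d n : ℕ} (hd : 1 ≤ d) (hn : 1 ≤ n) :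
    ((0 : Fin d → ℤ), (⟨0, hd⟩ : Fin d)) ∈ boxEdges d n := by
  have hn' : (1:ℤ) ≤ (n:ℤ) := by exact_mod_cast hn
  refine mem_boxEdges.mpr ⟨zero_mem_box d n, ?_⟩
  simp only [box, Fintype.mem_piFinset]
  intro j
  simp only [Pi.add_apply, Pi.zero_apply, zero_add, unit, Finset.mem_Icc]
  split <;> omega

/-- the edge associated to a boundary triple -/
noncomputable def tEdge (d : ℕ) (z : (Fin d → ℤ) × (Fin d × Bool)) : Edge d :=
  if z.2.2 then (z.1, z.2.1) else (z.1 - unit d z.2.1, z.2.1)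

lemma card_T_le {d n : ℕ} (hd : 1 ≤ d) (hn : 1 ≤ n) (σ : Conf d n)
    (hA : ¬ Aev d n σ) :
    (Tset d n (Sset d n σ) (resIn d n (Sset d n σ) σ)).card ≤ (pivSet d n σ).card := by
  classical
  set S := Sset d n σ with hSdef
  set τ := resIn d n S σ with hτdef
  have he0 : ((0 : Fin d → ℤ), (⟨0, hd⟩ : Fin d)) ∈ boxEdges d n := exists_CE hd hn
  -- basic facts for elements of Tset
  have hfacts : ∀ z ∈ Tset d n S τ, ∃ hbe : tEdge d z ∈ boxEdges d n,
      (⟨tEdge d z, hbe⟩ : CE d n) ∈ pivSet d n σ ∧ z.1 ∈ S ∧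
      (if z.2.2 then z.1 + unit d z.2.1 ∉ S else z.1 - unit d z.2.1 ∉ S) := by
    intro z hz
    have h1 := Finset.mem_filter.mp hz
    have hzmem := h1.1
    have hcond := h1.2.1
    have hconn := h1.2.2
    have hx : z.1 ∈ S := (Finset.mem_product.mp hzmem).1
    obtain ⟨x, i, b⟩ := z
    simp only at hx hcond hconn ⊢
    -- the two endpoints of the candidate edge
    have hnbr := Sset_neighbors_in_box (hSdef ▸ hx) i
    -- case distinction on the direction b
    cases b with
    | true =>
        simp only [if_true] at hcond ⊢
        have hy : x + unit d i ∉ S := hcond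
        have hybox : x + unit d i ∈ box d n := hnbr.1
        have hbe : tEdge d (x, i, true) ∈ boxEdges d n := by
          rw [tEdge]
          simp only [if_true]
          exact mem_boxEdges.mpr ⟨Sset_subset σ (hSdef ▸ hx), hybox⟩
        refine ⟨hbe, ?_, hx, hy⟩
        -- pivotality
        have hedge : (tEdge d (x, i, true)) = (x, i) := by rw [tEdge]; simp
        have hcl : σ ⟨tEdge d (x, i, true), hbe⟩ = false := by
          by_contra hop
          have hop' : ext d n σ (tEdge d (x, i, true)) = true := by
            simp only [ext, dif_pos hbe]
            simpa using hop
          rw [hedge] at hop'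
          have := Sset_no_cross σ x i hop'
          rw [← hSdef] at this
          exact hy (this.mp hx)
        refine Finset.mem_filter.mpr ⟨Finset.mem_univ _, hcl, hA, ?_⟩
        -- opening the edge creates a connection to the boundary
        set E : CE d n := ⟨tEdge d (x, i, true), hbe⟩ with hE
        have hmono : ∀ f, extS d S τ f = true →
            ext d n (Function.update σ E true) f = true := fun f hf =>
          ext_update_ge σ E f (extS_resIn_le σ f hf)
        have hpath1 : conn d (ext d n (Function.update σ E true)) 0 x :=
          conn_mono hmono hconn
        have hEopen : ext d n (Function.update σ E true) (tEdge d (x, i, true)) = true := by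
          simp only [ext, dif_pos hbe]
          have : (⟨tEdge d (x, i, true), hbe⟩ : CE d n) = E := rfl
          rw [this, Function.update_self]
        have hadj : adj d (ext d n (Function.update σ E true)) x (x + unit d i) :=
          ⟨i, Or.inl ⟨by rw [← hedge]; exact hEopen, rfl⟩⟩
        obtain ⟨w, hw, hcw⟩ := escape hybox (hSdef ▸ hy)
        have hpath2 : conn d (ext d n (Function.update σ E true)) (x + unit d i) w :=
          conn_mono (fun f => ext_update_ge σ E f) hcw
        exact ⟨w, hw, (hpath1.tail hadj).trans hpath2⟩
    | false =>
        simp only [Bool.false_eq_true, if_false] at hcond ⊢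
        have hy : x - unit d i ∉ S := hcond
        have hybox : x - unit d i ∈ box d n := hnbr.2
        have harith : (x - unit d i) + unit d i = x := sub_add_cancel x (unit d i)
        have hbe : tEdge d (x, i, false) ∈ boxEdges d n := by
          rw [tEdge]
          simp only [Bool.false_eq_true, if_false]
          refine mem_boxEdges.mpr ⟨hybox, ?_⟩
          simpa [harith] using Sset_subset σ (hSdef ▸ hx)
        refine ⟨hbe, ?_, hx, hy⟩
        have hedge : (tEdge d (x, i, false)) = (x - unit d i, i) := by
          rw [tEdge]; simp
        have hcl : σ ⟨tEdge d (x, i, false), hbe⟩ = false := by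
          by_contra hop
          have hop' : ext d n σ (tEdge d (x, i, false)) = true := by
            simp only [ext, dif_pos hbe]
            simpa using hop
          rw [hedge] at hop'
          have := Sset_no_cross σ (x - unit d i) i hop'
          rw [harith, ← hSdef] at this
          exact hy (this.mpr hx)
        refine Finset.mem_filter.mpr ⟨Finset.mem_univ _, hcl, hA, ?_⟩
        set E : CE d n := ⟨tEdge d (x, i, false), hbe⟩ with hE
        have hmono : ∀ f, extS d S τ f = true →
            ext d n (Function.update σ E true) f = true := fun f hf =>
          ext_update_ge σ E f (extS_resIn_le σ f hf)
        have hpath1 : conn d (ext d n (Function.update σ E true)) 0 x :=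
          conn_mono hmono hconn
        have hEopen : ext d n (Function.update σ E true) (tEdge d (x, i, false)) = true := by
          simp only [ext, dif_pos hbe]
          have : (⟨tEdge d (x, i, false), hbe⟩ : CE d n) = E := rfl
          rw [this, Function.update_self]
        have hadj : adj d (ext d n (Function.update σ E true)) x (x - unit d i) :=
          ⟨i, Or.inr ⟨by rw [hedge] at hEopen; exact hEopen, harith.symm⟩⟩
        obtain ⟨w, hw, hcw⟩ := escape hybox (hSdef ▸ hy)
        have hpath2 : conn d (ext d n (Function.update σ E true)) (x - unit d i) w :=
          conn_mono (fun f => ext_update_ge σ E f) hcw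
        exact ⟨w, hw, (hpath1.tail hadj).trans hpath2⟩
  -- now the injection
  apply Finset.card_le_card_of_injOn
    (f := fun z => if h : tEdge d z ∈ boxEdges d n then (⟨tEdge d z, h⟩ : CE d n)
      else ⟨_, he0⟩)
  · intro z hz
    obtain ⟨hbe, hpiv, -, -⟩ := hfacts z hz
    simp only [dif_pos hbe]
    exact hpiv
  · intro z hz z' hz' heq
    obtain ⟨hbe, -, hxS, hside⟩ := hfacts z (Finset.mem_coe.mp hz)
    obtain ⟨hbe', -, hxS', hside'⟩ := hfacts z' (Finset.mem_coe.mp hz')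
    simp only [dif_pos hbe, dif_pos hbe'] at heq
    have heq' : tEdge d z = tEdge d z' := congrArg Subtype.val heq
    obtain ⟨x, i, b⟩ := z
    obtain ⟨x', i', b'⟩ := z'
    simp only at hxS hxS' hside hside'
    cases b with
    | true => cases b' with
      | true =>
          simp only [tEdge, if_true] at heq'
          have h1 : x = x' := (Prod.ext_iff.mp heq').1
          have h2 : i = i' := (Prod.ext_iff.mp heq').2
          subst h1; subst h2; rfl
      | false =>
          simp only [tEdge, if_true, Bool.false_eq_true, if_false] at heq'
          have h1 : x = x' - unit d i' := (Prod.ext_iff.mp heq').1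
          have h2 : i = i' := (Prod.ext_iff.mp heq').2
          simp only [if_true] at hside
          simp only [Bool.false_eq_true, if_false] at hside'
          exfalso
          apply hside
          rw [h1, h2, sub_add_cancel]
          exact hxS'
    | false => cases b' with
      | true =>
          simp only [tEdge, Bool.false_eq_true, if_false, if_true] at heq'
          have h1 : x - unit d i = x' := (Prod.ext_iff.mp heq').1
          have h2 : i = i' := (Prod.ext_iff.mp heq').2
          simp only [Bool.false_eq_true, if_false] at hside
          simp only [if_true] at hside'
          exfalso
          apply hside'
          rw [← h1, ← h2, sub_add_cancel]
          exact hxS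
      | false =>
          simp only [tEdge, Bool.false_eq_true, if_false] at heq'
          have h1 : x - unit d i = x' - unit d i' := (Prod.ext_iff.mp heq').1
          have h2 : i = i' := (Prod.ext_iff.mp heq').2
          have h3 : x = x' := by
            have h4 := h1
            rw [h2] at h4
            exact sub_left_inj.mp h4
          subst h3; subst h2; rfl


/-! ### nonnegativity and the infimum -/

lemma thetaS_nonneg {d : ℕ} (S : Finset (Fin d → ℤ)) {p : ℝ} (h0 : 0 ≤ p) (h1 : p ≤ 1)
    (x : Fin d → ℤ) : 0 ≤ thetaS d S p x :=
  Finset.sum_nonneg fun τ _ => by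
    split
    · rw [bwS_eq_wgt]; exact wgt_nonneg h0 h1 τ
    · exact le_refl 0

lemma phiS_nonneg {d : ℕ} (S : Finset (Fin d → ℤ)) {p : ℝ} (h0 : 0 ≤ p) (h1 : p ≤ 1) :
    0 ≤ phiS d p S := by
  rw [phiS]
  refine mul_nonneg h0 (Finset.sum_nonneg fun x _ => Finset.sum_nonneg fun i _ =>
    add_nonneg ?_ ?_) <;>
  · split
    · exact thetaS_nonneg S h0 h1 x
    · exact le_refl 0

lemma infPhi_le {d n : ℕ} {p : ℝ} (h0 : 0 ≤ p) (h1 : p ≤ 1) {S : Finset (Fin d → ℤ)}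
    (hS0 : (0 : Fin d → ℤ) ∈ S) (hSb : S ⊆ box d n) : infPhi d n p ≤ phiS d p S := by
  apply csInf_le
  · refine ⟨0, fun r hr => ?_⟩
    obtain ⟨T, hT0, hTb, rfl⟩ := hr
    exact phiS_nonneg T h0 h1
  · exact ⟨S, hS0, hSb, rfl⟩

lemma theta_wgt (d n : ℕ) (p : ℝ) :
    theta d n p = ∑ σ : Conf d n, if Aev d n σ then wgt p σ else 0 := by
  rw [theta]
  exact Finset.sum_congr rfl fun σ _ => if_congr Iff.rfl (bw_eq_wgt d n p σ) rfl

/-! ### fiberwise decomposition over Sset -/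

lemma fiber_sum (d n : ℕ) (F : Finset (Fin d → ℤ) → Conf d n → ℝ) :
    ∑ σ : Conf d n, (if ¬ Aev d n σ then F (Sset d n σ) σ else 0)
      = ∑ S ∈ ((box d n).powerset).filter (fun S => (0 : Fin d → ℤ) ∈ S),
          ∑ σ ∈ Finset.univ.filter (fun σ : Conf d n => Sset d n σ = S), F S σ := by
  classical
  rw [← Finset.sum_filter]
  have hmaps : ∀ σ ∈ Finset.univ.filter (fun σ : Conf d n => ¬ Aev d n σ),
      Sset d n σ ∈ ((box d n).powerset).filter (fun S => (0 : Fin d → ℤ) ∈ S) := by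
    intro σ hσ
    have hA : ¬ Aev d n σ := (Finset.mem_filter.mp hσ).2
    exact Finset.mem_filter.mpr ⟨Finset.mem_powerset.mpr (Sset_subset σ),
      (zero_mem_Sset_iff σ).mpr hA⟩
  rw [← Finset.sum_fiberwise_of_maps_to hmaps (fun σ => F (Sset d n σ) σ)]
  refine Finset.sum_congr rfl fun S hS => ?_
  have hS0 : (0 : Fin d → ℤ) ∈ S := (Finset.mem_filter.mp hS).2
  have hdom : (Finset.univ.filter (fun σ : Conf d n => ¬ Aev d n σ)).filter
      (fun σ => Sset d n σ = S) = Finset.univ.filter (fun σ : Conf d n => Sset d n σ = S) := by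
    rw [Finset.filter_filter]
    refine Finset.filter_congr fun σ _ => ?_
    constructor
    · exact fun h => h.2
    · intro h
      refine ⟨?_, h⟩
      rw [← zero_mem_Sset_iff σ, h]
      exact hS0
  rw [hdom]
  refine Finset.sum_congr rfl fun σ hσ => ?_
  have hc : Sset d n σ = S := (Finset.mem_filter.mp hσ).2
  rw [hc]

lemma sum_QS (d n : ℕ) (p : ℝ) :
    ∑ S ∈ ((box d n).powerset).filter (fun S => (0 : Fin d → ℤ) ∈ S), QS d n S p
      = 1 - theta d n p := by
  classical
  have h1 : ∀ S ∈ ((box d n).powerset).filter (fun S => (0 : Fin d → ℤ) ∈ S),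
      QS d n S p = ∑ σ ∈ Finset.univ.filter (fun σ : Conf d n => Sset d n σ = S), wgt p σ := by
    intro S hS
    have hSb : S ⊆ box d n := Finset.mem_powerset.mp (Finset.mem_filter.mp hS).1
    rw [← sum_ind_wgt hSb p, Finset.sum_filter]
    refine Finset.sum_congr rfl fun σ _ => ?_
    by_cases hc : Sset d n σ = S
    · rw [if_pos hc, if_pos hc, one_mul]
    · rw [if_neg hc, if_neg hc, zero_mul]
  rw [Finset.sum_congr rfl h1, ← fiber_sum d n (fun _ σ => wgt p σ)]
  have h2 : ∀ σ : Conf d n, (if ¬ Aev d n σ then wgt p σ else 0)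
      = wgt p σ - (if Aev d n σ then wgt p σ else 0) := by
    intro σ
    by_cases hA : Aev d n σ
    · rw [if_neg (not_not_intro hA), if_pos hA, sub_self]
    · rw [if_pos hA, if_neg hA, sub_zero]
  rw [Finset.sum_congr rfl fun σ _ => h2 σ, Finset.sum_sub_distrib, sum_wgt,
    ← theta_wgt d n p]


/-- Differential inequality for the one-arm probabilities (mean-field lemma):
`θ_n'(p) ≥ (1/(p(1-p))) ⬝ inf_{0 ∈ S ⊆ Λ_n} φ_p(S) ⬝ (1 - θ_n(p))`. -/
theorem mean_field_differential_inequality (d n : ℕ) (hd : 1 ≤ d) (hn : 1 ≤ n)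
    (p : ℝ) (hp : p ∈ Set.Ioo (0 : ℝ) 1) :
    (1 / (p * (1 - p))) * infPhi d n p * (1 - theta d n p) ≤ deriv (theta d n) p := by
  classical
  obtain ⟨hp0, hp1⟩ := hp
  have hpne : p ≠ 0 := ne_of_gt hp0
  have hq0 : (0:ℝ) < 1 - p := by linarith
  have hq : (1:ℝ) - p ≠ 0 := ne_of_gt hq0
  have h0p : (0:ℝ) ≤ p := le_of_lt hp0
  have hple : p ≤ 1 := le_of_lt hp1
  rw [(hasDerivAt_theta d n p).deriv]
  -- Step 1: express the derivative via the pairing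
  have step1 : thetaD d n p = ∑ e : CE d n, ∑ σ : Conf d n,
      (if σ e = false then
        ((if Aev d n (Function.update σ e true) then (1:ℝ) else 0)
          - (if Aev d n σ then (1:ℝ) else 0)) * R p e σ else 0) := by
    rw [thetaD_eq_sum_edges d n hpne hq]
    exact Finset.sum_congr rfl fun e _ => pairing hpne hq e
  -- Step 2: lower bound by pivotal contributions
  have step2 : ∑ e : CE d n, ∑ σ : Conf d n,
      (if σ e = false ∧ ¬ Aev d n σ ∧ Aev d n (Function.update σ e true)
        then R p e σ else 0) ≤ thetaD d n p := by
    rw [step1]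
    refine Finset.sum_le_sum fun e _ => Finset.sum_le_sum fun σ _ => ?_
    by_cases hc : σ e = false ∧ ¬ Aev d n σ ∧ Aev d n (Function.update σ e true)
    · rw [if_pos hc, if_pos hc.1, if_pos hc.2.2, if_neg hc.2.1, sub_zero, one_mul]
    · rw [if_neg hc]
      by_cases hf : σ e = false
      · rw [if_pos hf]
        refine mul_nonneg ?_ (R_nonneg h0p hple e σ)
        by_cases hA : Aev d n σ
        · rw [if_pos hA, if_pos (Aev_mono e hA)]
          norm_num
        · rw [if_neg hA, sub_zero]
          split <;> norm_num
      · rw [if_neg hf]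
  -- Step 3: rewrite pivotal contributions via pivotal counts
  have step3 : ∑ e : CE d n, ∑ σ : Conf d n,
      (if σ e = false ∧ ¬ Aev d n σ ∧ Aev d n (Function.update σ e true)
        then R p e σ else 0)
      = ∑ σ : Conf d n, ((pivSet d n σ).card : ℝ) * ((1 / (1 - p)) * wgt p σ) := by
    rw [Finset.sum_comm]
    exact Finset.sum_congr rfl fun σ _ => sum_pivR hq σ
  -- the quantity counting boundary connections
  set T1 : ℝ := ∑ σ : Conf d n,
    (if ¬ Aev d n σ then hL d (Sset d n σ) (resIn d n (Sset d n σ) σ) * wgt p σ else 0)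
    with hT1
  -- Step 4: T1 is dominated by the pivotal counts
  have step4 : (1 / (1 - p)) * T1
      ≤ ∑ σ : Conf d n, ((pivSet d n σ).card : ℝ) * ((1 / (1 - p)) * wgt p σ) := by
    rw [hT1, Finset.mul_sum]
    refine Finset.sum_le_sum fun σ _ => ?_
    by_cases hA : ¬ Aev d n σ
    · rw [if_pos hA]
      have hcount : hL d (Sset d n σ) (resIn d n (Sset d n σ) σ)
          ≤ ((pivSet d n σ).card : ℝ) := by
        rw [hL_eq_card d n (Sset d n σ) (resIn d n (Sset d n σ) σ)]
        exact_mod_cast card_T_le hd hn σ hA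
      calc (1 / (1 - p)) * (hL d (Sset d n σ) (resIn d n (Sset d n σ) σ) * wgt p σ)
          = hL d (Sset d n σ) (resIn d n (Sset d n σ) σ) * ((1 / (1 - p)) * wgt p σ) := by
            ring
        _ ≤ ((pivSet d n σ).card : ℝ) * ((1 / (1 - p)) * wgt p σ) :=
            mul_le_mul_of_nonneg_right hcount
              (mul_nonneg (by positivity) (wgt_nonneg h0p hple σ))
    · rw [if_neg hA, mul_zero]
      exact mul_nonneg (Nat.cast_nonneg _)
        (mul_nonneg (by positivity) (wgt_nonneg h0p hple σ))
  have key1 : (1 / (1 - p)) * T1 ≤ thetaD d n p := by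
    refine le_trans step4 ?_
    rw [← step3]
    exact step2
  -- Step 6: decompose T1 over the possible values of Sset
  have step6 : T1 = ∑ S ∈ ((box d n).powerset).filter (fun S => (0 : Fin d → ℤ) ∈ S),
      QS d n S p * PhiP S p := by
    rw [hT1, fiber_sum d n (fun S σ => hL d S (resIn d n S σ) * wgt p σ)]
    refine Finset.sum_congr rfl fun S hS => ?_
    have hSb : S ⊆ box d n := Finset.mem_powerset.mp (Finset.mem_filter.mp hS).1
    rw [← perS hSb p, Finset.sum_filter]
    refine Finset.sum_congr rfl fun σ _ => ?_
    by_cases hc : Sset d n σ = S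
    · rw [if_pos hc, if_pos hc, one_mul]
    · rw [if_neg hc, if_neg hc, zero_mul, zero_mul]
  -- Step 7: bound PhiP from below by infPhi / p
  have step7 : (infPhi d n p / p) * ∑ S ∈ ((box d n).powerset).filter
        (fun S => (0 : Fin d → ℤ) ∈ S), QS d n S p
      ≤ ∑ S ∈ ((box d n).powerset).filter (fun S => (0 : Fin d → ℤ) ∈ S),
          QS d n S p * PhiP S p := by
    rw [Finset.mul_sum]
    refine Finset.sum_le_sum fun S hS => ?_
    have hSb : S ⊆ box d n := Finset.mem_powerset.mp (Finset.mem_filter.mp hS).1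
    have hS0 : (0 : Fin d → ℤ) ∈ S := (Finset.mem_filter.mp hS).2
    have h1 : infPhi d n p ≤ p * PhiP S p := by
      rw [← phiS_eq_PhiP]
      exact infPhi_le h0p hple hS0 hSb
    have h2 : infPhi d n p / p ≤ PhiP S p := by
      rw [div_le_iff₀ hp0]
      linarith [h1]
    calc infPhi d n p / p * QS d n S p = QS d n S p * (infPhi d n p / p) := by ring
      _ ≤ QS d n S p * PhiP S p :=
          mul_le_mul_of_nonneg_left h2 (QS_nonneg h0p hple)
  -- Step 8: total mass of QS
  have step8 : ∑ S ∈ ((box d n).powerset).filter (fun S => (0 : Fin d → ℤ) ∈ S), QS d n S p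
      = 1 - theta d n p := sum_QS d n p
  -- Conclusion
  have harith : (1 / (p * (1 - p))) * infPhi d n p * (1 - theta d n p)
      = (1 / (1 - p)) * ((infPhi d n p / p) * (1 - theta d n p)) := by
    rw [one_div, one_div, mul_inv, div_eq_mul_inv]
    ring
  calc (1 / (p * (1 - p))) * infPhi d n p * (1 - theta d n p)
      = (1 / (1 - p)) * ((infPhi d n p / p) * (1 - theta d n p)) := harith
    _ = (1 / (1 - p)) * ((infPhi d n p / p) * ∑ S ∈ ((box d n).powerset).filter
          (fun S => (0 : Fin d → ℤ) ∈ S), QS d n S p) := by rw [step8]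
    _ ≤ (1 / (1 - p)) * ∑ S ∈ ((box d n).powerset).filter
          (fun S => (0 : Fin d → ℤ) ∈ S), QS d n S p * PhiP S p :=
        mul_le_mul_of_nonneg_left step7 (by positivity)
    _ = (1 / (1 - p)) * T1 := by rw [step6]
    _ ≤ thetaD d n p := key1

end Stmt14
end

section
/- Sharp-threshold analysis lemma. Let x₀ > 0 and M > 0, and let (f_n)_{n≥0} be a pointwise convergent sequence of non-decreasing differentiable functions f_n : [0,x₀] → [0,M] with f_0(x) > 0 for all x, which satisfy, for all n ≥ 1 and all x ∈ [0,x₀], f_n'(x) ≥ (n/Σ_n(x)) · f_n(x), where Σ_n = ∑_{k=0}^{n−1} f_k. Then there exists x₁ ∈ [0,x₀] such that: (P1) for every x < x₁ there exists c_x > 0 such that f_n(x) ≤ exp(−c_x n) for all sufficiently large n; and (P2) for every x ∈ (x₁, x₀], the pointwise limit f = lim_{n→∞} f_n satisfies f(x) ≥ x − x₁. -/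
open scoped BigOperators

namespace Stmt15

/-- monotonicity-from-derivative helper on a closed interval -/
lemma mono_from_deriv {a b : ℝ} {g g' : ℝ → ℝ} (hab : a ≤ b)
    (hg : ∀ t ∈ Set.Icc a b, HasDerivWithinAt g (g' t) (Set.Icc a b) t)
    (h0 : ∀ t ∈ Set.Icc a b, 0 ≤ g' t) : g a ≤ g b := by
  have hD : Convex ℝ (Set.Icc a b) := convex_Icc a b
  have hc : ContinuousOn g (Set.Icc a b) := fun t ht => (hg t ht).continuousWithinAt
  have hmono := monotoneOn_of_hasDerivWithinAt_nonneg hD hc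
    (fun t ht => (hg t (interior_subset ht)).mono interior_subset)
    (fun t ht => h0 t (interior_subset ht))
  exact hmono (Set.left_mem_Icc.2 hab) (Set.right_mem_Icc.2 hab) hab

/-- telescoping sum over `Ico 1 n` -/
lemma telescope (g : ℕ → ℝ) {n : ℕ} (hn : 1 ≤ n) :
    ∑ k ∈ Finset.Ico 1 n, (g (k + 1) - g k) = g n - g 1 := by
  induction n with
  | zero => omega
  | succ m ih =>
    rcases Nat.lt_or_ge 1 (m+1) with h | h
    · have hm : 1 ≤ m := by omega
      rw [Finset.sum_Ico_succ_top (by omega : 1 ≤ m), ih hm]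
      ring
    · have : m = 0 := by omega
      subst this
      simp

/-- harmonic sum bound auxiliary -/
lemma harmonic_aux (m : ℕ) :
    ∑ k ∈ Finset.Ico 1 (m + 2), (1 : ℝ) / k ≤ 1 + Real.log (m + 1) := by
  induction m with
  | zero => simp
  | succ p ih =>
    rw [Finset.sum_Ico_succ_top (by omega : 1 ≤ p + 2)]
    have hp0 : (0:ℝ) < (p:ℝ) + 1 := by positivity
    have h1 : Real.log (((p:ℝ) + 1) / ((p:ℝ) + 2)) ≤ ((p:ℝ) + 1) / ((p:ℝ) + 2) - 1 :=
      Real.log_le_sub_one_of_pos (by positivity)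
    rw [Real.log_div (by positivity) (by positivity)] at h1
    have h2 : ((p:ℝ) + 1) / ((p:ℝ) + 2) - 1 = -(1 / ((p:ℝ) + 2)) := by
      field_simp
      ring
    rw [h2] at h1
    have h3 : (1:ℝ) / ((p:ℝ) + 2) ≤ Real.log ((p:ℝ) + 2) - Real.log ((p:ℝ) + 1) := by linarith
    have h4 : ((p:ℝ) + 2) = ((p:ℝ) + 1 + 1) := by ring
    rw [h4] at h3
    push_cast
    push_cast at ih
    simp only [one_div] at h3 ih ⊢
    ring_nf at h3 ih ⊢
    linarith

/-- harmonic sum bound: `∑_{k=1}^{n-1} 1/k ≤ 1 + log n` -/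
lemma harmonic_le (n : ℕ) (hn : 1 ≤ n) :
    ∑ k ∈ Finset.Ico 1 n, (1 : ℝ) / k ≤ 1 + Real.log n := by
  rcases Nat.lt_or_ge n 2 with h | h
  · interval_cases n
    simp
  · obtain ⟨m, rfl⟩ : ∃ m, n = m + 2 := ⟨n - 2, by omega⟩
    refine (harmonic_aux m).trans ?_
    have : Real.log ((m:ℝ) + 1) ≤ Real.log ((m:ℝ) + 2) :=
      Real.log_le_log (by positivity) (by linarith)
    push_cast
    linarith


/-- positivity of the partial sums -/
lemma Spos (x₀ M : ℝ) (f : ℕ → ℝ → ℝ)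
    (hrange : ∀ n, ∀ x ∈ Set.Icc 0 x₀, f n x ∈ Set.Icc 0 M)
    (hf0 : ∀ x ∈ Set.Icc 0 x₀, 0 < f 0 x)
    {t : ℝ} (ht : t ∈ Set.Icc 0 x₀) {n : ℕ} (hn : 1 ≤ n) :
    0 < ∑ k ∈ Finset.range n, f k t :=
  Finset.sum_pos' (fun i _ => (hrange i t ht).1) ⟨0, Finset.mem_range.2 hn, hf0 t ht⟩

/-- Lemma A : exponential decay step from the differential inequality -/
lemma decayA (x₀ M : ℝ) (hM : 0 < M) (f f' : ℕ → ℝ → ℝ)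
    (hmono : ∀ n, MonotoneOn (f n) (Set.Icc 0 x₀))
    (hrange : ∀ n, ∀ x ∈ Set.Icc 0 x₀, f n x ∈ Set.Icc 0 M)
    (hf0 : ∀ x ∈ Set.Icc 0 x₀, 0 < f 0 x)
    (hderiv : ∀ n, ∀ x ∈ Set.Icc 0 x₀, HasDerivWithinAt (f n) (f' n x) (Set.Icc 0 x₀) x)
    (hineq : ∀ n : ℕ, 1 ≤ n → ∀ x ∈ Set.Icc 0 x₀,
      (n : ℝ) / (∑ k ∈ Finset.range n, f k x) * f n x ≤ f' n x)
    {u v : ℝ} {n : ℕ} (hn : 1 ≤ n) (hu : 0 ≤ u) (huv : u ≤ v) (hv : v ≤ x₀) :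
    f n u ≤ M * Real.exp (-((n : ℝ) * (v - u)) / ∑ k ∈ Finset.range n, f k v) := by
  have hvIcc : v ∈ Set.Icc 0 x₀ := ⟨hu.trans huv, hv⟩
  have huIcc : u ∈ Set.Icc 0 x₀ := ⟨hu, huv.trans hv⟩
  set Sv := ∑ k ∈ Finset.range n, f k v with hSv
  have hSvpos : 0 < Sv := Spos x₀ M f hrange hf0 hvIcc hn
  rcases eq_or_lt_of_le (hrange n u huIcc).1 with h0 | hpos
  · rw [← h0]; positivity
  · have hsub : Set.Icc u v ⊆ Set.Icc 0 x₀ := Set.Icc_subset_Icc hu hv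
    have hfpos : ∀ t ∈ Set.Icc u v, 0 < f n t := fun t ht =>
      lt_of_lt_of_le hpos (hmono n huIcc (hsub ht) ht.1)
    have key : Real.log (f n u) - (n / Sv) * u ≤ Real.log (f n v) - (n / Sv) * v := by
      apply mono_from_deriv (g' := fun t => f' n t / f n t - (n : ℝ) / Sv) huv
      · intro t ht
        have h1 : HasDerivWithinAt (fun s => Real.log (f n s)) (f' n t / f n t)
            (Set.Icc u v) t :=
          ((hderiv n t (hsub ht)).mono hsub).log (ne_of_gt (hfpos t ht))
        have h2 : HasDerivWithinAt (fun s => ((n : ℝ) / Sv) * s) ((n : ℝ) / Sv)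
            (Set.Icc u v) t := by
          simpa using (hasDerivWithinAt_id t (Set.Icc u v)).const_mul ((n : ℝ) / Sv)
        exact h1.sub h2
      · intro t ht
        have htIcc := hsub ht
        have hStpos : 0 < ∑ k ∈ Finset.range n, f k t := Spos x₀ M f hrange hf0 htIcc hn
        have hStle : (∑ k ∈ Finset.range n, f k t) ≤ Sv :=
          Finset.sum_le_sum fun k _ => hmono k htIcc hvIcc ht.2
        have h1 := hineq n hn t htIcc
        have h2 : (n : ℝ) / Sv * f n t ≤ (n : ℝ) / (∑ k ∈ Finset.range n, f k t) * f n t := by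
          gcongr
          exact (hrange n t htIcc).1
        have h3 : (n : ℝ) / Sv ≤ f' n t / f n t :=
          (le_div_iff₀ (hfpos t ht)).2 (h2.trans h1)
        linarith
    have hfv : 0 < f n v := hfpos v (Set.right_mem_Icc.2 huv)
    calc f n u = Real.exp (Real.log (f n u)) := (Real.exp_log hpos).symm
      _ ≤ Real.exp (Real.log (f n v) + -((n : ℝ) * (v - u)) / Sv) := by
          apply Real.exp_le_exp.2
          have he : -((n : ℝ) * (v - u)) / Sv = (n / Sv) * u - (n / Sv) * v := by
            field_simp
            ring
          rw [he]
          linarith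
      _ = f n v * Real.exp (-((n : ℝ) * (v - u)) / Sv) := by
          rw [Real.exp_add, Real.exp_log hfv]
      _ ≤ M * Real.exp (-((n : ℝ) * (v - u)) / Sv) := by
          gcongr
          exact (hrange n v hvIcc).2

/-- Lemma B : lower bound for the weighted sums -/
lemma sumlogB (x₀ M : ℝ) (hM : 0 < M) (f f' : ℕ → ℝ → ℝ)
    (hmono : ∀ n, MonotoneOn (f n) (Set.Icc 0 x₀))
    (hrange : ∀ n, ∀ x ∈ Set.Icc 0 x₀, f n x ∈ Set.Icc 0 M)
    (hf0 : ∀ x ∈ Set.Icc 0 x₀, 0 < f 0 x)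
    (hderiv : ∀ n, ∀ x ∈ Set.Icc 0 x₀, HasDerivWithinAt (f n) (f' n x) (Set.Icc 0 x₀) x)
    (hineq : ∀ n : ℕ, 1 ≤ n → ∀ x ∈ Set.Icc 0 x₀,
      (n : ℝ) / (∑ k ∈ Finset.range n, f k x) * f n x ≤ f' n x)
    {y z : ℝ} {n : ℕ} (hn : 1 ≤ n) (h0 : 0 ≤ y) (hyz : y ≤ z) (hz : z ≤ x₀) :
    (z - y) * (Real.log (∑ k ∈ Finset.range n, f k y) - Real.log M) ≤
      (∑ k ∈ Finset.Ico 1 n, f k z / k) - ∑ k ∈ Finset.Ico 1 n, f k y / k := by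
  have hyIcc : y ∈ Set.Icc 0 x₀ := ⟨h0, hyz.trans hz⟩
  have hzIcc : z ∈ Set.Icc 0 x₀ := ⟨h0.trans hyz, hz⟩
  have hsub : Set.Icc y z ⊆ Set.Icc 0 x₀ := Set.Icc_subset_Icc h0 hz
  set c := Real.log (∑ k ∈ Finset.range n, f k y) - Real.log M with hc
  have key : (∑ k ∈ Finset.Ico 1 n, f k y / k) - c * y ≤
      (∑ k ∈ Finset.Ico 1 n, f k z / k) - c * z := by
    apply mono_from_deriv (g' := fun t => (∑ k ∈ Finset.Ico 1 n, f' k t / k) - c) hyz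
    · intro t ht
      have h1 : HasDerivWithinAt (fun s => ∑ k ∈ Finset.Ico 1 n, f k s / k)
          (∑ k ∈ Finset.Ico 1 n, f' k t / k) (Set.Icc y z) t :=
        HasDerivWithinAt.fun_sum fun k _ => ((hderiv k t (hsub ht)).mono hsub).div_const _
      have h2 : HasDerivWithinAt (fun s => c * s) c (Set.Icc y z) t := by
        simpa using (hasDerivWithinAt_id t (Set.Icc y z)).const_mul c
      exact h1.sub h2
    · intro t ht
      have htIcc := hsub ht
      have step : ∀ k ∈ Finset.Ico 1 n,
          Real.log (∑ j ∈ Finset.range (k + 1), f j t) -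
            Real.log (∑ j ∈ Finset.range k, f j t) ≤ f' k t / k := by
        intro k hk
        have hk1 : 1 ≤ k := (Finset.mem_Ico.1 hk).1
        have hkpos : (0 : ℝ) < k := by exact_mod_cast hk1
        have hSk : 0 < ∑ j ∈ Finset.range k, f j t := Spos x₀ M f hrange hf0 htIcc hk1
        have hSk1 : 0 < ∑ j ∈ Finset.range (k + 1), f j t :=
          Spos x₀ M f hrange hf0 htIcc (by omega)
        have hlog : Real.log (∑ j ∈ Finset.range (k + 1), f j t) -
            Real.log (∑ j ∈ Finset.range k, f j t) ≤
            f k t / (∑ j ∈ Finset.range k, f j t) := by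
          rw [← Real.log_div (ne_of_gt hSk1) (ne_of_gt hSk)]
          have := Real.log_le_sub_one_of_pos (div_pos hSk1 hSk)
          have hrw : (∑ j ∈ Finset.range (k + 1), f j t) / (∑ j ∈ Finset.range k, f j t) - 1
              = f k t / (∑ j ∈ Finset.range k, f j t) := by
            rw [Finset.sum_range_succ]
            field_simp
            ring
          linarith [hrw ▸ this]
        have h1 := hineq k hk1 t htIcc
        have h2 : f k t / (∑ j ∈ Finset.range k, f j t) ≤ f' k t / k := by
          rw [div_le_div_iff₀ hSk hkpos]
          calc f k t * k = ((k : ℝ) / (∑ j ∈ Finset.range k, f j t) * f k t) *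
                (∑ j ∈ Finset.range k, f j t) := by field_simp
            _ ≤ f' k t * (∑ j ∈ Finset.range k, f j t) := by gcongr
        linarith
      have hsum : Real.log (∑ j ∈ Finset.range n, f j t) - Real.log (f 0 t) ≤
          ∑ k ∈ Finset.Ico 1 n, f' k t / k := by
        have htel := telescope (fun m => Real.log (∑ j ∈ Finset.range m, f j t)) hn
        have := Finset.sum_le_sum step
        rw [htel] at this
        simpa [Finset.sum_range_one] using this
      have hmono1 : Real.log (∑ k ∈ Finset.range n, f k y) ≤
          Real.log (∑ j ∈ Finset.range n, f j t) := by
        apply Real.log_le_log (Spos x₀ M f hrange hf0 hyIcc hn)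
        exact Finset.sum_le_sum fun k _ => hmono k hyIcc htIcc ht.1
      have hlogM : Real.log (f 0 t) ≤ Real.log M :=
        Real.log_le_log (hf0 t htIcc) (hrange 0 t htIcc).2
      rw [hc]
      linarith
  nlinarith [key]


set_option maxHeartbeats 600000 in
/-- Sharp-threshold analysis lemma: a convergent sequence of non-decreasing
differentiable functions `f_n : [0,x₀] → [0,M]` satisfying
`f_n' ≥ (n/Σ_n) f_n` with `Σ_n = ∑_{k<n} f_k` admits a threshold `x₁` below which
`f_n` decays exponentially and above which the limit satisfies `f(x) ≥ x - x₁`. -/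
theorem sharp_threshold_lemma (x₀ M : ℝ) (hx₀ : 0 < x₀) (hM : 0 < M)
    (f f' : ℕ → ℝ → ℝ)
    (hmono : ∀ n, MonotoneOn (f n) (Set.Icc 0 x₀))
    (hrange : ∀ n, ∀ x ∈ Set.Icc 0 x₀, f n x ∈ Set.Icc 0 M)
    (hf0 : ∀ x ∈ Set.Icc 0 x₀, 0 < f 0 x)
    (hderiv : ∀ n, ∀ x ∈ Set.Icc 0 x₀, HasDerivWithinAt (f n) (f' n x) (Set.Icc 0 x₀) x)
    (hconv : ∀ x ∈ Set.Icc 0 x₀, ∃ L : ℝ,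
      Filter.Tendsto (fun n => f n x) Filter.atTop (nhds L))
    (hineq : ∀ n : ℕ, 1 ≤ n → ∀ x ∈ Set.Icc 0 x₀,
      (n : ℝ) / (∑ k ∈ Finset.range n, f k x) * f n x ≤ f' n x) :
    ∃ x₁ ∈ Set.Icc 0 x₀,
      (∀ x ∈ Set.Icc 0 x₀, x < x₁ → ∃ c > (0 : ℝ),
        ∀ᶠ n : ℕ in Filter.atTop, f n x ≤ Real.exp (-c * n)) ∧
      (∀ x ∈ Set.Icc 0 x₀, x₁ < x → ∀ L : ℝ,
        Filter.Tendsto (fun n => f n x) Filter.atTop (nhds L) → x - x₁ ≤ L) := by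
  classical
  set S : Set ℝ := {y | y ∈ Set.Icc 0 x₀ ∧ ∃ α : ℝ, α < 1 ∧
      ∀ᶠ n : ℕ in Filter.atTop, (∑ k ∈ Finset.range n, f k y) ≤ (n : ℝ) ^ α} with hSdef
  have hbdd : BddAbove (insert 0 S) := by
    refine ⟨x₀, ?_⟩
    rintro t (rfl | ht)
    · exact hx₀.le
    · exact ht.1.2
  set x₁ := sSup (insert 0 S) with hx₁def
  have hx₁0 : 0 ≤ x₁ := le_csSup hbdd (Set.mem_insert 0 S)
  have hx₁x₀ : x₁ ≤ x₀ := by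
    apply csSup_le ⟨0, Set.mem_insert _ _⟩
    rintro t (rfl | ht)
    · exact hx₀.le
    · exact ht.1.2
  refine ⟨x₁, ⟨hx₁0, hx₁x₀⟩, ?_, ?_⟩
  · -- P1 : exponential decay below the threshold
    intro x hx hlt
    obtain ⟨y, hyS, hxy⟩ := exists_lt_of_lt_csSup ⟨0, Set.mem_insert 0 S⟩ hlt
    rcases hyS with rfl | hyS
    · exact absurd hxy (not_lt.2 hx.1)
    obtain ⟨hyIcc, α, hα, hev⟩ := hyS
    set u := (x + y) / 2 with hu
    have hxu : x < u := by simp only [hu]; linarith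
    have huy : u < y := by simp only [hu]; linarith
    have huIcc : u ∈ Set.Icc 0 x₀ := ⟨by linarith [hx.1], by linarith [hyIcc.2]⟩
    have hdpos : (0:ℝ) < y - u := by linarith
    set r := 1 - α with hr
    have hrpos : 0 < r := by simp only [hr]; linarith
    -- Step A : stretched exponential decay at u
    have hA : ∀ᶠ n : ℕ in Filter.atTop,
        f n u ≤ M * Real.exp (-((y - u) * (n : ℝ) ^ r)) := by
      filter_upwards [hev, Filter.eventually_ge_atTop 1] with n hSg hn1
      have hd1 := decayA x₀ M hM f f' hmono hrange hf0 hderiv hineq hn1 huIcc.1 huy.le hyIcc.2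
      refine hd1.trans ?_
      have hnpos : (0:ℝ) < (n:ℝ) := by exact_mod_cast hn1
      have hSgpos : 0 < ∑ k ∈ Finset.range n, f k y := Spos x₀ M f hrange hf0 hyIcc hn1
      gcongr
      -- ⊢ -(n * (y - u)) / Σ ≤ -((y-u) * n ^ r)
      have hkey : (n:ℝ) ^ r * (∑ k ∈ Finset.range n, f k y) ≤ (n:ℝ) := by
        calc (n:ℝ) ^ r * (∑ k ∈ Finset.range n, f k y) ≤ (n:ℝ) ^ r * (n:ℝ) ^ α :=
              mul_le_mul_of_nonneg_left hSg (Real.rpow_nonneg hnpos.le r)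
          _ = (n:ℝ) ^ (r + α) := (Real.rpow_add hnpos r α).symm
          _ = (n:ℝ) := by rw [hr]; norm_num
      rw [neg_div, neg_le_neg_iff, le_div_iff₀ hSgpos]
      nlinarith [Real.rpow_pos_of_pos hnpos r]
    -- Step B : summability at u
    have hsum : Summable (fun k => f k u) := by
      have hlittle := isLittleO_log_rpow_atTop hrpos
      have h2 : ∀ᶠ s : ℝ in Filter.atTop, 2 * Real.log s ≤ ((y - u)/2) * s ^ r := by
        have hb := hlittle.def (show (0:ℝ) < (y - u)/8 by linarith)
        filter_upwards [hb, Filter.eventually_ge_atTop (1:ℝ)] with s hs hs1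
        have hls : 0 ≤ Real.log s := Real.log_nonneg hs1
        have hsr : 0 ≤ s ^ r := Real.rpow_nonneg (by linarith) r
        rw [Real.norm_eq_abs, Real.norm_eq_abs, abs_of_nonneg hls, abs_of_nonneg hsr] at hs
        nlinarith
      have h3 : ∀ᶠ s : ℝ in Filter.atTop, Real.log M ≤ ((y - u)/2) * s ^ r := by
        have := (tendsto_rpow_atTop hrpos).eventually_ge_atTop
          ((2/(y - u)) * Real.log M)
        filter_upwards [this] with s hs
        have hne : y - u ≠ 0 := ne_of_gt hdpos
        calc Real.log M = ((y-u)/2) * ((2/(y-u)) * Real.log M) := by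
              field_simp
          _ ≤ ((y-u)/2) * s ^ r := mul_le_mul_of_nonneg_left hs (by linarith)
      have hcast : Filter.Tendsto (fun k : ℕ => (k:ℝ)) Filter.atTop Filter.atTop :=
        tendsto_natCast_atTop_atTop
      have h4 : ∀ᶠ k : ℕ in Filter.atTop, f k u ≤ (k:ℝ) ^ (-2 : ℝ) := by
        filter_upwards [hA, hcast.eventually h2, hcast.eventually h3,
          Filter.eventually_ge_atTop 1] with k hk h2k h3k hk1
        have hkpos : (0:ℝ) < (k:ℝ) := by exact_mod_cast hk1
        calc f k u ≤ M * Real.exp (-((y - u) * (k:ℝ) ^ r)) := hk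
          _ = Real.exp (Real.log M + -((y - u) * (k:ℝ) ^ r)) := by
              rw [Real.exp_add, Real.exp_log hM]
          _ ≤ Real.exp ((-2) * Real.log k) := by
              apply Real.exp_le_exp.2
              have h2k' : 2 * Real.log (k:ℝ) ≤ ((y - u)/2) * (k:ℝ) ^ r := h2k
              have h3k' : Real.log M ≤ ((y - u)/2) * (k:ℝ) ^ r := h3k
              nlinarith [h2k', h3k']
          _ = (k:ℝ) ^ (-2:ℝ) := by
              rw [Real.rpow_def_of_pos hkpos]
              ring_nf
      have hs2 : Summable (fun k : ℕ => (k:ℝ) ^ (-2:ℝ)) :=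
        Real.summable_nat_rpow.2 (by norm_num)
      apply summable_of_isBigO_nat hs2
      apply Asymptotics.IsBigO.of_bound 1
      filter_upwards [h4, Filter.eventually_ge_atTop 1] with k hk hk1
      have hkpos : (0:ℝ) < (k:ℝ) := by exact_mod_cast hk1
      have hnn : 0 ≤ f k u := (hrange k u huIcc).1
      rw [Real.norm_eq_abs, Real.norm_eq_abs, abs_of_nonneg hnn,
        abs_of_nonneg (Real.rpow_nonneg hkpos.le _), one_mul]
      exact hk
    set C := ∑' k, f k u with hC
    have hCge : ∀ m : ℕ, (∑ k ∈ Finset.range m, f k u) ≤ C := fun m =>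
      Summable.sum_le_tsum (Finset.range m) (fun k _ => (hrange k u huIcc).1) hsum
    have hCpos : 0 < C :=
      lt_of_lt_of_le (by simpa [Finset.sum_range_one] using hf0 u huIcc) (hCge 1)
    refine ⟨(u - x)/(2*C), div_pos (by linarith) (by linarith), ?_⟩
    have htend : Filter.Tendsto (fun n : ℕ => (n:ℝ) * ((u - x)/(2*C)))
        Filter.atTop Filter.atTop :=
      Filter.Tendsto.atTop_mul_const (div_pos (by linarith) (by linarith))
        tendsto_natCast_atTop_atTop
    filter_upwards [Filter.eventually_ge_atTop 1, htend.eventually_ge_atTop (Real.log M)]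
      with n hn1 hnM
    have hd2 := decayA x₀ M hM f f' hmono hrange hf0 hderiv hineq hn1 hx.1 hxu.le huIcc.2
    refine hd2.trans ?_
    have hSgu : 0 < ∑ k ∈ Finset.range n, f k u := Spos x₀ M f hrange hf0 huIcc hn1
    have hnpos : (0:ℝ) < (n:ℝ) := by exact_mod_cast hn1
    have h5 : -((n:ℝ) * (u - x)) / (∑ k ∈ Finset.range n, f k u) ≤ -((n:ℝ) * (u - x)) / C := by
      rw [neg_div, neg_div, neg_le_neg_iff]
      gcongr
      · exact hCge n
    calc M * Real.exp (-((n:ℝ) * (u - x)) / ∑ k ∈ Finset.range n, f k u)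
        ≤ M * Real.exp (-((n:ℝ) * (u - x)) / C) := by gcongr
      _ = Real.exp (Real.log M + -((n:ℝ) * (u - x)) / C) := by
          rw [Real.exp_add, Real.exp_log hM]
      _ ≤ Real.exp (-((u - x)/(2*C)) * (n:ℝ)) := by
          apply Real.exp_le_exp.2
          have harith : -((u - x)/(2*C)) * (n:ℝ) - (-((n:ℝ) * (u - x)) / C)
              = (n:ℝ) * ((u - x)/(2*C)) := by field_simp; ring
          linarith [hnM, harith]
  · -- P2 : lower bound for the limit above the threshold
    intro x hx hlt L hL
    have hL0 : 0 ≤ L :=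
      ge_of_tendsto hL (Filter.Eventually.of_forall fun n => (hrange n x hx).1)
    have key : ∀ y, x₁ < y → y < x → x - y ≤ L := by
      intro y hy1 hyx
      have hyIcc : y ∈ Set.Icc 0 x₀ := ⟨hx₁0.trans hy1.le, hyx.le.trans hx.2⟩
      obtain ⟨L', hL'⟩ := hconv y hyIcc
      have hL'0 : 0 ≤ L' :=
        ge_of_tendsto hL' (Filter.Eventually.of_forall fun n => (hrange n y hyIcc).1)
      have hnotS : y ∉ S := fun hyS =>
        absurd (le_csSup hbdd (Set.mem_insert_of_mem _ hyS)) (not_le.2 hy1)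
      have hfreq : ∀ β : ℝ, β < 1 → ∃ᶠ n : ℕ in Filter.atTop,
          (n:ℝ) ^ β < ∑ k ∈ Finset.range n, f k y := by
        intro β hβ
        by_contra hcon
        rw [Filter.not_frequently] at hcon
        exact hnotS ⟨hyIcc, β, hβ, by
          filter_upwards [hcon] with n hn
          exact not_lt.1 hn⟩
      set D := L - L' with hD
      have hDtend : Filter.Tendsto (fun k => f k x - f k y) Filter.atTop (nhds D) :=
        hL.sub hL'
      have hD0 : 0 ≤ D :=
        ge_of_tendsto hDtend (Filter.Eventually.of_forall fun k =>
          sub_nonneg.2 (hmono k hyIcc hx hyx.le))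
      have hxypos : (0:ℝ) < x - y := by linarith
      have main : ∀ ε : ℝ, 0 < ε → x - y ≤ D + 2 * ε := by
        intro ε hε
        set β := 1 - ε / (4 * (x - y)) with hβdef
        have hβ1 : β < 1 := by
          simp only [hβdef]
          have : 0 < ε / (4 * (x - y)) := by positivity
          linarith
        obtain ⟨K0, hK0⟩ := Filter.eventually_atTop.1
          (hDtend.eventually (gt_mem_nhds (show D < D + ε/4 by linarith)))
        set K := max K0 1 with hK
        have hK1 : 1 ≤ K := le_max_right _ _
        set B := ∑ k ∈ Finset.Ico 1 K, (f k x - f k y) / k with hB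
        have hlogtend : Filter.Tendsto (fun n : ℕ => Real.log n) Filter.atTop Filter.atTop :=
          Real.tendsto_log_atTop.comp tendsto_natCast_atTop_atTop
        have hevents : ∀ᶠ n : ℕ in Filter.atTop, 2 ≤ n ∧ K ≤ n ∧
            B ≤ (ε/4) * Real.log n ∧ (x - y) * |Real.log M| ≤ (ε/4) * Real.log n ∧
            D + ε/4 ≤ (ε/4) * Real.log n := by
          have e1 := Filter.eventually_ge_atTop 2
          have e2 := Filter.eventually_ge_atTop K
          have e3 := hlogtend.eventually_ge_atTop ((4/ε) * B)
          have e4 := hlogtend.eventually_ge_atTop ((4/ε) * ((x - y) * |Real.log M|))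
          have e5 := hlogtend.eventually_ge_atTop ((4/ε) * (D + ε/4))
          have habs : ∀ b t : ℝ, 4 / ε * b ≤ t → b ≤ ε / 4 * t := by
            intro b t h
            have h' := mul_le_mul_of_nonneg_left h (show (0:ℝ) ≤ ε/4 by linarith)
            have hεne : ε ≠ 0 := ne_of_gt hε
            calc b = ε/4 * (4/ε * b) := by
                  field_simp
              _ ≤ ε/4 * t := h'
          filter_upwards [e1, e2, e3, e4, e5] with n h1 h2 h3 h4 h5
          exact ⟨h1, h2, habs _ _ h3, habs _ _ h4, habs _ _ h5⟩
        obtain ⟨n, hfreqn, h2n, hKn, hBn, hMn, hDn⟩ :=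
          ((hfreq β hβ1).and_eventually hevents).exists
        have hn1 : 1 ≤ n := by omega
        have hnpos : (0:ℝ) < (n:ℝ) := by exact_mod_cast hn1
        have hlogn : 0 < Real.log n :=
          Real.log_pos (by exact_mod_cast (by omega : 1 < n))
        have hLB := sumlogB x₀ M hM f f' hmono hrange hf0 hderiv hineq hn1
          hyIcc.1 hyx.le hx.2
        have hlogSg : β * Real.log n ≤ Real.log (∑ k ∈ Finset.range n, f k y) := by
          have := Real.log_le_log (Real.rpow_pos_of_pos hnpos β) hfreqn.le
          rwa [Real.log_rpow hnpos] at this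
        -- upper bound on the weighted sum difference
        have hUB : (∑ k ∈ Finset.Ico 1 n, f k x / k) - (∑ k ∈ Finset.Ico 1 n, f k y / k)
            ≤ B + (D + ε/4) * (1 + Real.log n) := by
          have hsplit : (∑ k ∈ Finset.Ico 1 n, f k x / k) - (∑ k ∈ Finset.Ico 1 n, f k y / k)
              = ∑ k ∈ Finset.Ico 1 n, (f k x - f k y) / k := by
            rw [← Finset.sum_sub_distrib]
            exact Finset.sum_congr rfl fun k _ => (sub_div _ _ _).symm
          rw [hsplit, ← Finset.sum_Ico_consecutive _ hK1 hKn]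
          have htail : ∑ k ∈ Finset.Ico K n, (f k x - f k y) / k
              ≤ (D + ε/4) * (1 + Real.log n) := by
            calc ∑ k ∈ Finset.Ico K n, (f k x - f k y) / k
                ≤ ∑ k ∈ Finset.Ico K n, (D + ε/4) * (1 / k) := by
                  apply Finset.sum_le_sum
                  intro k hk
                  have hk' := Finset.mem_Ico.1 hk
                  have hkK0 : K0 ≤ k := le_trans (le_max_left _ _) hk'.1
                  have hkpos : (0:ℝ) < (k:ℝ) := by
                    exact_mod_cast lt_of_lt_of_le Nat.one_pos (hK1.trans hk'.1)
                  rw [mul_one_div]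
                  exact (div_le_div_iff_of_pos_right hkpos).2 (hK0 k hkK0).le
              _ = (D + ε/4) * ∑ k ∈ Finset.Ico K n, (1 : ℝ) / k := by
                  rw [Finset.mul_sum]
              _ ≤ (D + ε/4) * ∑ k ∈ Finset.Ico 1 n, (1 : ℝ) / k := by
                  refine mul_le_mul_of_nonneg_left ?_ (by linarith)
                  apply Finset.sum_le_sum_of_subset_of_nonneg
                  · exact Finset.Ico_subset_Ico hK1 le_rfl
                  · intro k _ _
                    positivity
              _ ≤ (D + ε/4) * (1 + Real.log n) :=
                  mul_le_mul_of_nonneg_left (harmonic_le n hn1) (by linarith)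
          linarith
        -- combine
        have hchain : (x - y) * (β * Real.log n - Real.log M) ≤
            B + (D + ε/4) * (1 + Real.log n) := by
          have h6 : (x - y) * (β * Real.log n - Real.log M) ≤
              (x - y) * (Real.log (∑ k ∈ Finset.range n, f k y) - Real.log M) := by
            apply mul_le_mul_of_nonneg_left _ hxypos.le
            linarith
          exact le_trans h6 (le_trans hLB hUB)
        have hβx : (x - y) * β = (x - y) - ε/4 := by
          rw [hβdef]
          field_simp
        have hMabs : (x - y) * Real.log M ≤ (ε/4) * Real.log n := by
          calc (x - y) * Real.log M ≤ (x - y) * |Real.log M| :=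
                mul_le_mul_of_nonneg_left (le_abs_self _) hxypos.le
            _ ≤ (ε/4) * Real.log n := hMn
        have hrewrite : (x - y) * (β * Real.log n - Real.log M)
            = ((x - y) - ε/4) * Real.log n - (x - y) * Real.log M := by
          rw [← hβx]; ring
        rw [hrewrite] at hchain
        have hfin : (x - y) * Real.log n ≤ (D + 2*ε) * Real.log n := by nlinarith
        exact le_of_mul_le_mul_right (by linarith [hfin]) hlogn
      -- from main, conclude x - y ≤ D ≤ L
      have hxyD : x - y ≤ D := by
        by_contra hcon
        push_neg at hcon
        have := main ((x - y - D)/4) (by linarith)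
        linarith
      linarith
    by_contra hcon
    push_neg at hcon
    set y := x₁ + min ((x - x₁)/2) ((x - x₁ - L)/2) with hy
    have hmin1 : (0:ℝ) < min ((x - x₁)/2) ((x - x₁ - L)/2) := by
      apply lt_min <;> linarith
    have hy1 : x₁ < y := by simp only [hy]; linarith
    have hyx : y < x := by
      have := min_le_left ((x - x₁)/2) ((x - x₁ - L)/2)
      simp only [hy]; linarith
    have hkey := key y hy1 hyx
    have := min_le_right ((x - x₁)/2) ((x - x₁ - L)/2)
    simp only [hy] at hkey
    linarith

end Stmt15
end

section
/- OSSS inequality for Bernoulli percolation. Let E be a finite set, p ∈ [0,1], and ℙ_p the product Bernoulli(p) measure on {0,1}^E. Let f : {0,1}^E → [0,1] be an increasing function and T any decision tree on E. Then Var_p(f) ≤ 2 · ∑_{e∈E} δ_e(f,T) · Cov_p(f, ω_e), where δ_e(f,T) is the revealment of e and Var_p, Cov_p are the variance and covariance under ℙ_p. -/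
open scoped BigOperators Classical

namespace Stmt16

variable {E : Type} [Fintype E] [DecidableEq E]

/-- Bernoulli(p) product weight of a configuration. -/
noncomputable def bern (p : ℝ) (ω : E → Bool) : ℝ := ∏ e : E, if ω e then p else 1 - p

/-- Expectation under the Bernoulli(p) product measure. -/
noncomputable def Ep (p : ℝ) (g : (E → Bool) → ℝ) : ℝ := ∑ ω : E → Bool, g ω * bern p ω

/-- Probability of an event under the Bernoulli(p) product measure. -/
noncomputable def Pp (p : ℝ) (A : (E → Bool) → Prop) : ℝ :=
  ∑ ω : E → Bool, if A ω then bern p ω else 0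

/-- Variance under the Bernoulli(p) product measure. -/
noncomputable def Var (p : ℝ) (g : (E → Bool) → ℝ) : ℝ :=
  Ep p (fun ω => g ω * g ω) - Ep p g * Ep p g

/-- Covariance under the Bernoulli(p) product measure. -/
noncomputable def Cov (p : ℝ) (g h : (E → Bool) → ℝ) : ℝ :=
  Ep p (fun ω => g ω * h ω) - Ep p g * Ep p h

/-- The history of the first `t` queries of the decision tree `T` run on input `ω`:
a decision tree is given by the map `T` producing the next queried coordinate from
the list of previously queried coordinates together with their revealed values. -/
def hist (T : List (E × Bool) → E) (ω : E → Bool) : ℕ → List (E × Bool)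
  | 0 => []
  | t + 1 => hist T ω t ++ [(T (hist T ω t), ω (T (hist T ω t)))]

/-- The `(t+1)`-st coordinate queried by the decision tree `T` on input `ω`. -/
def query (T : List (E × Bool) → E) (ω : E → Bool) (t : ℕ) : E := T (hist T ω t)

/-- `τ(ω)`: the first time at which the revealed coordinates determine `f`. -/
noncomputable def tau (T : List (E × Bool) → E) (f : (E → Bool) → ℝ) (ω : E → Bool) : ℕ :=
  sInf {t : ℕ | ∀ ω' : E → Bool,
    (∀ s : ℕ, s < t → ω' (query T ω s) = ω (query T ω s)) → f ω' = f ω}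

/-- The revealment `δ_e(f,T)`: the probability that `e` is queried before time `τ`. -/
noncomputable def revealment (p : ℝ) (T : List (E × Bool) → E) (f : (E → Bool) → ℝ)
    (e : E) : ℝ :=
  Pp p fun ω => ∃ t : ℕ, t < tau T f ω ∧ query T ω t = e

def Distinct (T : List (E × Bool) → E) : Prop :=
  ∀ ω : E → Bool, ∀ s t : ℕ, s < t → t < Fintype.card E → query T ω s ≠ query T ω t

variable (T : List (E × Bool) → E) (f : (E → Bool) → ℝ)

/-- `f` is determined by the values revealed at times `< t`. -/
def det (a : E → Bool) (t : ℕ) : Prop :=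
  ∀ ω' : E → Bool, (∀ s, s < t → ω' (query T a s) = a (query T a s)) → f ω' = f a

lemma tau_def (a : E → Bool) : tau T f a = sInf {t | det T f a t} := rfl

lemma det_mono {a : E → Bool} {s t : ℕ} (h : det T f a s) (hst : s ≤ t) : det T f a t :=
  fun ω' hω' => h ω' (fun u hu => hω' u (lt_of_lt_of_le hu hst))

lemma hist_congr {a a' : E → Bool} {u : ℕ}
    (h : ∀ s, s < u → a' (query T a s) = a (query T a s)) :
    ∀ s, s ≤ u → hist T a' s = hist T a s := by
  intro s
  induction s with
  | zero => intro _; rfl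
  | succ s ih =>
    intro hs
    have ihs := ih (le_trans (Nat.le_succ s) hs)
    show hist T a' s ++ _ = hist T a s ++ _
    rw [ihs]
    have : a' (T (hist T a s)) = a (T (hist T a s)) := h s (Nat.lt_of_succ_le hs)
    rw [this]

lemma query_congr {a a' : E → Bool} {u : ℕ}
    (h : ∀ s, s < u → a' (query T a s) = a (query T a s)) :
    ∀ s, s ≤ u → query T a' s = query T a s := by
  intro s hs
  unfold query
  rw [hist_congr T h s hs]

lemma det_congr_of {a a' : E → Bool} {u : ℕ}
    (h : ∀ s, s < u → a' (query T a s) = a (query T a s)) {t : ℕ} (ht : t ≤ u)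
    (hd : det T f a t) : det T f a' t := by
  intro ω' hω'
  have hq : ∀ s, s < t → query T a' s = query T a s := fun s hs =>
    query_congr T h s (le_of_lt (lt_of_lt_of_le hs ht))
  have h1 : f ω' = f a := by
    apply hd
    intro s hs
    rw [← hq s hs]
    rw [hω' s hs, hq s hs]
    exact h s (lt_of_lt_of_le hs ht)
  have h2 : f a' = f a := hd a' (fun s hs => h s (lt_of_lt_of_le hs ht))
  rw [h1, h2]

lemma det_congr {a a' : E → Bool} {u : ℕ}
    (h : ∀ s, s < u → a' (query T a s) = a (query T a s)) {t : ℕ} (ht : t ≤ u) :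
    det T f a' t ↔ det T f a t := by
  have h' : ∀ s, s < u → a (query T a' s) = a' (query T a' s) := by
    intro s hs
    rw [query_congr T h s (le_of_lt hs)]
    exact (h s hs).symm
  exact ⟨fun hd => det_congr_of T f h' ht hd, fun hd => det_congr_of T f h ht hd⟩

lemma det_card (hT : Distinct T) (a : E → Bool) :
    det T f a (Fintype.card E) := by
  intro ω' hω'
  have hinj : Function.Injective (fun s : Fin (Fintype.card E) => query T a s) := by
    intro s t hst
    by_contra hne
    rcases lt_or_gt_of_ne (fun h => hne (Fin.ext h)) with h | h
    · exact hT a s t h t.2 hst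
    · exact hT a t s h s.2 hst.symm
  have hsurj : Function.Surjective (fun s : Fin (Fintype.card E) => query T a s) := by
    have := (Fintype.bijective_iff_injective_and_card
      (fun s : Fin (Fintype.card E) => query T a s)).mpr ⟨hinj, by simp⟩
    exact this.2
  have : ω' = a := by
    funext x
    obtain ⟨s, hs⟩ := hsurj x
    rw [← hs]
    exact hω' s s.2
  rw [this]

lemma tau_le_card (hT : Distinct T) (a : E → Bool) :
    tau T f a ≤ Fintype.card E :=
  Nat.sInf_le (det_card T f hT a)

lemma det_tau (hT : Distinct T) (a : E → Bool) :
    det T f a (tau T f a) :=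
  Nat.sInf_mem (⟨Fintype.card E, det_card T f hT a⟩ : Set.Nonempty {t | det T f a t})

lemma tau_le_iff (hT : Distinct T) {a : E → Bool} {t : ℕ} :
    tau T f a ≤ t ↔ det T f a t :=
  ⟨fun h => det_mono T f (det_tau T f hT a) h, fun h => Nat.sInf_le h⟩

section Mix

/-- revealed coordinates before time `min t τ`. -/
def rev (a : E → Bool) (t : ℕ) (x : E) : Prop :=
  ∃ s, s < min t (tau T f a) ∧ query T a s = x

noncomputable def mix (a b : E → Bool) (t : ℕ) : E → Bool :=
  fun x => if rev T f a t x then b x else a x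

noncomputable def comix (a b : E → Bool) (t : ℕ) : E → Bool :=
  fun x => if rev T f a t x then a x else b x

lemma comix_agree (a b : E → Bool) (t : ℕ) :
    ∀ s, s < min t (tau T f a) → comix T f a b t (query T a s) = a (query T a s) := by
  intro s hs
  unfold comix
  rw [if_pos ⟨s, hs, rfl⟩]

lemma min_tau_congr (hT : Distinct T) {a a' : E → Bool} {t : ℕ}
    (h : ∀ s, s < min t (tau T f a) → a' (query T a s) = a (query T a s)) :
    min t (tau T f a') = min t (tau T f a) := by
  rcases le_or_gt t (tau T f a) with hle | hlt
  · rw [min_eq_left hle]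
    have h' : ∀ s, s < t → a' (query T a s) = a (query T a s) := by
      intro s hs; exact h s (by omega)
    rw [min_eq_left]
    by_contra hc
    push_neg at hc
    have hdet : det T f a' (tau T f a') := det_tau T f hT a'
    have : det T f a (tau T f a') := by
      rw [← det_congr T f h' (le_of_lt hc)]
      exact hdet
    have h3 : tau T f a ≤ tau T f a' := Nat.sInf_le this
    omega
  · rw [min_eq_right (le_of_lt hlt)]
    have h' : ∀ s, s < tau T f a → a' (query T a s) = a (query T a s) := by
      intro s hs; exact h s (by omega)
    have htaueq : tau T f a' = tau T f a := by
      have hdet : det T f a (tau T f a) := det_tau T f hT a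
      have h1 : det T f a' (tau T f a) := (det_congr T f h' le_rfl).mpr hdet
      have hle1 : tau T f a' ≤ tau T f a := Nat.sInf_le h1
      by_contra hc
      have hlt1 : tau T f a' < tau T f a := lt_of_le_of_ne hle1 hc
      have hdet' : det T f a' (tau T f a') := det_tau T f hT a'
      have : det T f a (tau T f a') := (det_congr T f h' (le_of_lt hlt1)).mp hdet'
      have h3 : tau T f a ≤ tau T f a' := Nat.sInf_le this
      omega
    rw [htaueq]
    exact min_eq_right (le_of_lt hlt)

lemma query_congr_of_agree {a a' : E → Bool} {t : ℕ}
    (h : ∀ s, s < min t (tau T f a) → a' (query T a s) = a (query T a s)) :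
    ∀ s, s ≤ min t (tau T f a) → query T a' s = query T a s :=
  fun s hs => query_congr T h s hs

lemma rev_congr (hT : Distinct T) {a a' : E → Bool} {t : ℕ}
    (h : ∀ s, s < min t (tau T f a) → a' (query T a s) = a (query T a s)) (x : E) :
    rev T f a' t x ↔ rev T f a t x := by
  unfold rev
  rw [min_tau_congr T f hT h]
  constructor
  · rintro ⟨s, hs, hq⟩
    exact ⟨s, hs, by rw [← query_congr_of_agree T f h s (le_of_lt hs)]; exact hq⟩
  · rintro ⟨s, hs, hq⟩
    exact ⟨s, hs, by rw [query_congr_of_agree T f h s (le_of_lt hs)]; exact hq⟩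

lemma rev_comix (hT : Distinct T) (a b : E → Bool) (t : ℕ) (x : E) :
    rev T f (comix T f a b t) t x ↔ rev T f a t x :=
  rev_congr T f hT (comix_agree T f a b t) x

lemma psi_inv (hT : Distinct T) (a b : E → Bool) (t : ℕ) :
    comix T f (comix T f a b t) (mix T f a b t) t = a ∧
    mix T f (comix T f a b t) (mix T f a b t) t = b := by
  constructor <;> funext x <;>
  · simp only [comix, mix, rev_comix T f hT]
    by_cases h : rev T f a t x <;> simp [h]

end Mix

section Measure

variable {p : ℝ}

lemma bern_nonneg (hp : p ∈ Set.Icc (0:ℝ) 1) (a : E → Bool) : 0 ≤ bern p a := by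
  apply Finset.prod_nonneg
  intro x _
  by_cases h : a x <;> simp [h] <;> [exact hp.1; linarith [hp.2]]

lemma sum_bern : ∑ a : E → Bool, bern p a = 1 := by
  unfold bern
  have := Finset.sum_prod_piFinset (Finset.univ : Finset Bool)
    (fun (_ : E) (b : Bool) => if b then p else 1 - p)
  rw [Fintype.piFinset_univ] at this
  rw [this]
  simp

/-- weight of one coordinate value. -/
noncomputable def w (p : ℝ) (c : Bool) : ℝ := if c then p else 1 - p

lemma bern_split (e : E) (a : E → Bool) :
    bern p a = w p (a e) * ∏ x ∈ Finset.univ.erase e, w p (a x) := by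
  unfold bern w
  exact (Finset.mul_prod_erase Finset.univ _ (Finset.mem_univ e)).symm

lemma prod_erase_update (e : E) (a : E → Bool) (c : Bool) :
    ∏ x ∈ Finset.univ.erase e, w p ((Function.update a e c) x)
      = ∏ x ∈ Finset.univ.erase e, w p (a x) := by
  apply Finset.prod_congr rfl
  intro x hx
  rw [Function.update_of_ne (Finset.ne_of_mem_erase hx)]

lemma sum_coord_invariant {e : E} {h : (E → Bool) → ℝ}
    (hh : ∀ a c, h (Function.update a e c) = h a) (c : Bool) :
    ∑ a : E → Bool, (if a e = c then h a * bern p a else 0)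
      = w p c * ∑ a : E → Bool, h a * bern p a := by
  set q : (E → Bool) → ℝ := fun a => ∏ x ∈ Finset.univ.erase e, w p (a x) with hq
  have hqup : ∀ a c', q (Function.update a e c') = q a := fun a c' => prod_erase_update e a c'
  set K : Bool → ℝ := fun c' => ∑ a : E → Bool, (if a e = c' then h a * q a else 0) with hK
  have hflip : K true = K false := by
    have hinv : Function.Involutive (fun a : E → Bool => Function.update a e (! a e)) := by
      intro a
      simp only [Function.update_self]
      rw [Function.update_idem, Bool.not_not, Function.update_eq_self]
    have := Equiv.sum_comp hinv.toPerm
      (fun a : E → Bool => if a e = true then h a * q a else 0)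
    show (∑ a : E → Bool, if a e = true then h a * q a else 0)
      = ∑ a : E → Bool, if a e = false then h a * q a else 0
    rw [← this]
    apply Finset.sum_congr rfl
    intro a _
    simp only [Function.Involutive.coe_toPerm, Function.update_self]
    by_cases hae : a e
    · simp [hae]
    · simp only [hae, Bool.not_false, if_true, Bool.false_eq_true, if_false]
      rw [hh, hqup]
  have hKc : ∀ c', K c' = K c := by
    intro c'
    cases c <;> cases c' <;> simp [hflip]
  have hLHS : ∑ a : E → Bool, (if a e = c then h a * bern p a else 0) = w p c * K c := by
    rw [hK, Finset.mul_sum]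
    apply Finset.sum_congr rfl
    intro a _
    by_cases hae : a e = c
    · rw [if_pos hae, if_pos hae, bern_split e a, hae]
      ring
    · simp [hae]
  have hRHS : ∑ a : E → Bool, h a * bern p a = K c := by
    have : ∀ a : E → Bool, h a * bern p a
        = (if a e = true then h a * q a else 0) * w p true
          + (if a e = false then h a * q a else 0) * w p false := by
      intro a
      cases hae : a e
      · simp only [hae, Bool.false_eq_true, if_false, if_true, zero_mul, zero_add]
        rw [bern_split e a, hae]
        ring
      · simp only [hae, if_true, Bool.true_eq_false, if_false, zero_mul, add_zero]
        rw [bern_split e a, hae]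
        ring
    rw [Finset.sum_congr rfl (fun a _ => this a), Finset.sum_add_distrib,
      ← Finset.sum_mul, ← Finset.sum_mul]
    have e1 : (∑ i : E → Bool, if i e = true then h i * q i else 0) = K true := rfl
    have e2 : (∑ i : E → Bool, if i e = false then h i * q i else 0) = K false := rfl
    rw [e1, e2, hKc true, hKc false]
    simp only [w]
    norm_num
    ring
  rw [hLHS, hRHS]

lemma sum_coord_update {e : E} (F : (E → Bool) → ℝ) (c : Bool) :
    ∑ a : E → Bool, (if a e = c then F a * bern p a else 0)
      = w p c * ∑ a : E → Bool, F (Function.update a e c) * bern p a := by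
  have hh : ∀ a c', (fun a => F (Function.update a e c)) (Function.update a e c')
      = F (Function.update a e c) := by
    intro a c'
    simp only [Function.update_idem]
  have := sum_coord_invariant (p := p) (e := e) (h := fun a => F (Function.update a e c)) hh c
  rw [← this]
  apply Finset.sum_congr rfl
  intro a _
  by_cases hae : a e = c
  · rw [if_pos hae, if_pos hae, ← hae, Function.update_eq_self]
  · simp [hae]

end Measure

section Main

variable (T : List (E × Bool) → E) (f : (E → Bool) → ℝ) {p : ℝ}

/-- product weight is preserved by the mix/comix swap. -/
lemma bern_pair (a b : E → Bool) (t : ℕ) :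
    bern p (comix T f a b t) * bern p (mix T f a b t) = bern p a * bern p b := by
  unfold bern
  rw [← Finset.prod_mul_distrib, ← Finset.prod_mul_distrib]
  apply Finset.prod_congr rfl
  intro x _
  unfold comix mix
  by_cases h : rev T f a t x
  · simp only [h, if_pos]
  · simp only [h, if_neg, if_false]
    ring

/-- change of variables by the involution `ψ_t`. -/
lemma sum_psi (hT : Distinct T) (t : ℕ) (F : (E → Bool) → (E → Bool) → ℝ) :
    ∑ a : E → Bool, ∑ b : E → Bool, F a b
      = ∑ a : E → Bool, ∑ b : E → Bool, F (comix T f a b t) (mix T f a b t) := by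
  have hinv : Function.Involutive
      (fun q : (E → Bool) × (E → Bool) => (comix T f q.1 q.2 t, mix T f q.1 q.2 t)) := by
    intro q
    have := psi_inv T f hT q.1 q.2 t
    simp only [this.1, this.2]
  have key := Equiv.sum_comp hinv.toPerm (fun q : (E → Bool) × (E → Bool) => F q.1 q.2)
  have h1 : ∑ q : (E → Bool) × (E → Bool), F q.1 q.2
      = ∑ a : E → Bool, ∑ b : E → Bool, F a b := Fintype.sum_prod_type _
  have h2 : ∑ q : (E → Bool) × (E → Bool), F (comix T f q.1 q.2 t) (mix T f q.1 q.2 t)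
      = ∑ a : E → Bool, ∑ b : E → Bool, F (comix T f a b t) (mix T f a b t) :=
    Fintype.sum_prod_type _
  rw [← h1, ← h2, ← key]
  rfl

lemma lt_tau_query_congr (hT : Distinct T) {a a' : E → Bool} {t : ℕ} {e : E}
    (h : ∀ s, s < min t (tau T f a) → a' (query T a s) = a (query T a s)) :
    (t < tau T f a' ∧ query T a' t = e) ↔ (t < tau T f a ∧ query T a t = e) := by
  rcases lt_or_ge t (tau T f a) with hlt | hle
  · have hu : min t (tau T f a) = t := min_eq_left (le_of_lt hlt)
    rw [hu] at h
    have hdet : det T f a' t ↔ det T f a t := det_congr T f h le_rfl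
    have hq : query T a' t = query T a t := query_congr T h t le_rfl
    have h1 : t < tau T f a' := by
      by_contra hc
      push_neg at hc
      have : det T f a' t := det_mono T f (det_tau T f hT a') hc
      have : det T f a t := hdet.mp this
      have : tau T f a ≤ t := Nat.sInf_le this
      omega
    constructor
    · rintro ⟨_, hqe⟩; exact ⟨hlt, by rw [← hq]; exact hqe⟩
    · rintro ⟨_, hqe⟩; exact ⟨h1, by rw [hq]; exact hqe⟩
  · have hu : min t (tau T f a) = tau T f a := min_eq_right hle
    rw [hu] at h
    have hdet : det T f a' (tau T f a) ↔ det T f a (tau T f a) := det_congr T f h le_rfl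
    have : det T f a' (tau T f a) := hdet.mpr (det_tau T f hT a)
    have h2 : tau T f a' ≤ tau T f a := Nat.sInf_le this
    constructor
    · rintro ⟨h3, _⟩; omega
    · rintro ⟨h3, _⟩; omega

/-- `e` (the t-th query, when `t < τ`) is not revealed before time `t`. -/
lemma not_rev_query (hT : Distinct T) {a : E → Bool} {t : ℕ} (h1 : t < tau T f a)
    (hcard : tau T f a ≤ Fintype.card E) :
    ¬ rev T f a t (query T a t) := by
  rintro ⟨s, hs, hq⟩
  have hmin : min t (tau T f a) = t := min_eq_left (le_of_lt h1)
  rw [hmin] at hs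
  exact hT a s t hs (by omega) hq

lemma A_update_of (hT : Distinct T) {a : E → Bool} {t : ℕ} {e : E}
    (hA : t < tau T f a ∧ query T a t = e) (c : Bool) :
    t < tau T f (Function.update a e c) ∧ query T (Function.update a e c) t = e := by
  apply (lt_tau_query_congr T f hT (a := a) (t := t) (e := e) ?_).mpr hA
  intro s hs
  apply Function.update_of_ne
  rw [min_eq_left (le_of_lt hA.1)] at hs
  rw [← hA.2]
  exact hT a s t hs (by
    have := tau_le_card T f hT a
    omega)

lemma A_update_iff (hT : Distinct T) (a : E → Bool) (t : ℕ) (e : E) (c : Bool) :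
    (t < tau T f (Function.update a e c) ∧ query T (Function.update a e c) t = e)
      ↔ (t < tau T f a ∧ query T a t = e) := by
  constructor
  · intro hA
    have := A_update_of T f hT hA (a e)
    rwa [Function.update_idem, Function.update_eq_self] at this
  · intro hA
    exact A_update_of T f hT hA c

lemma step4 (hT : Distinct T) (t : ℕ) (e : E) :
    ∑ a : E → Bool, ∑ b : E → Bool,
      (if t < tau T f a ∧ query T a t = e ∧ a e ≠ b e
        then (f (Function.update (mix T f a b t) e true)
              - f (Function.update (mix T f a b t) e false)) * (bern p a * bern p b)
        else 0)
    = 2 * (p * (1 - p)) * Pp p (fun a => t < tau T f a ∧ query T a t = e)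
        * ∑ b : E → Bool,
            (f (Function.update b e true) - f (Function.update b e false)) * bern p b := by
  set g : (E → Bool) → ℝ :=
    fun b => f (Function.update b e true) - f (Function.update b e false) with hg
  set A : (E → Bool) → Prop := fun a => t < tau T f a ∧ query T a t = e with hA
  set G : ℝ := ∑ b : E → Bool, g b * bern p b with hG
  -- Step (i): change of variables
  rw [sum_psi T f hT t]
  have hpoint : ∀ a b : E → Bool,
      (if t < tau T f (comix T f a b t) ∧ query T (comix T f a b t) t = e
            ∧ (comix T f a b t) e ≠ (mix T f a b t) e
        then (f (Function.update (mix T f (comix T f a b t) (mix T f a b t) t) e true)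
              - f (Function.update (mix T f (comix T f a b t) (mix T f a b t) t) e false))
            * (bern p (comix T f a b t) * bern p (mix T f a b t))
        else 0)
      = (if A a ∧ a e ≠ b e then g b * (bern p a * bern p b) else 0) := by
    intro a b
    have hiff : (t < tau T f (comix T f a b t) ∧ query T (comix T f a b t) t = e)
        ↔ (t < tau T f a ∧ query T a t = e) :=
      lt_tau_query_congr T f hT (comix_agree T f a b t)
    by_cases hAa : A a
    · have hnr : ¬ rev T f a t e := by
        rw [← hAa.2]
        exact not_rev_query T f hT hAa.1 (tau_le_card T f hT a)
      have hce : comix T f a b t e = b e := by unfold comix; rw [if_neg hnr]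
      have hme : mix T f a b t e = a e := by unfold mix; rw [if_neg hnr]
      have hmm : mix T f (comix T f a b t) (mix T f a b t) t = b := (psi_inv T f hT a b t).2
      rw [hmm, hce, hme]
      by_cases hne : a e ≠ b e
      · obtain ⟨x1, x2⟩ := hiff.mpr ⟨hAa.1, hAa.2⟩
        rw [if_pos ⟨x1, x2, fun hc => hne hc.symm⟩, if_pos ⟨hAa, hne⟩, bern_pair]
      · rw [if_neg (fun hc => hne (Ne.symm hc.2.2)), if_neg (fun hc => hne hc.2)]
    · rw [if_neg (fun hc => hAa (hiff.mp ⟨hc.1, hc.2.1⟩)), if_neg (fun hc => hAa hc.1)]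
  rw [Finset.sum_congr rfl (fun a _ => Finset.sum_congr rfl (fun b _ => hpoint a b))]
  -- Step (iv): decouple the two sums
  have hinner : ∀ a : E → Bool,
      ∑ b : E → Bool, (if A a ∧ a e ≠ b e then g b * (bern p a * bern p b) else 0)
      = if A a then w p (! (a e)) * G * bern p a else 0 := by
    intro a
    by_cases hAa : A a
    · rw [if_pos hAa]
      have h1 : ∀ b : E → Bool, (if A a ∧ a e ≠ b e then g b * (bern p a * bern p b) else 0)
          = bern p a * (if b e = ! (a e) then g b * bern p b else 0) := by
        intro b
        by_cases hne : a e ≠ b e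
        · have hb : b e = ! (a e) := by
            cases hab : a e <;> cases hbb : b e <;> simp_all
          rw [if_pos ⟨hAa, hne⟩, if_pos hb]
          ring
        · push_neg at hne
          have hb : ¬ (b e = ! (a e)) := by
            rw [← hne]; cases hab : a e <;> simp [hab]
          rw [if_neg (fun hc => hc.2 hne), mul_comm, if_neg hb, zero_mul]
      rw [Finset.sum_congr rfl (fun b _ => h1 b), ← Finset.mul_sum]
      have h2 : ∑ b : E → Bool, (if b e = ! (a e) then g b * bern p b else 0)
          = w p (! (a e)) * G := by
        rw [sum_coord_update (p := p) g (! (a e)), hG]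
        congr 1
        apply Finset.sum_congr rfl
        intro b _
        congr 1
        simp only [hg, Function.update_idem]
      rw [h2]
      ring
    · rw [if_neg hAa]
      apply Finset.sum_eq_zero
      intro b _
      rw [if_neg (fun hc => hAa hc.1)]
  rw [Finset.sum_congr rfl (fun a _ => hinner a)]
  -- Step (v): compute ∑_a (if A a then w (!a e) * G * bern a else 0)
  have hAup : ∀ (a : E → Bool) (c : Bool), A (Function.update a e c) ↔ A a := by
    intro a c
    exact A_update_iff T f hT a t e c
  have hsplit : ∀ a : E → Bool,
      (if A a then w p (! (a e)) * G * bern p a else 0)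
      = (if a e = true then (if A a then w p false * G else 0) * bern p a else 0)
        + (if a e = false then (if A a then w p true * G else 0) * bern p a else 0) := by
    intro a
    by_cases hAa : A a
    · rw [if_pos hAa]
      cases hae : a e
      · rw [if_neg (by simp : ¬ (false = true)), if_pos rfl, if_pos hAa]
        simp only [Bool.not_false]
        ring
      · rw [if_pos rfl, if_neg (by simp : ¬ (true = false)), if_pos hAa]
        simp only [Bool.not_true]
        ring
    · rw [if_neg hAa, if_neg hAa, if_neg hAa]
      simp
  rw [Finset.sum_congr rfl (fun a _ => hsplit a), Finset.sum_add_distrib]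
  have hc1 : ∑ a : E → Bool, (if a e = true then (if A a then w p false * G else 0) * bern p a else 0)
      = w p true * ∑ a : E → Bool, (if A a then w p false * G else 0) * bern p a := by
    exact sum_coord_invariant (h := fun a => if A a then w p false * G else 0)
      (fun a c => by
        show (if A (Function.update a e c) then w p false * G else 0)
          = (if A a then w p false * G else 0)
        by_cases hAa : A a
        · rw [if_pos hAa, if_pos ((hAup a c).mpr hAa)]
        · rw [if_neg (fun hc => hAa ((hAup a c).mp hc)), if_neg hAa]) true
  have hc2 : ∑ a : E → Bool, (if a e = false then (if A a then w p true * G else 0) * bern p a else 0)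
      = w p false * ∑ a : E → Bool, (if A a then w p true * G else 0) * bern p a := by
    exact sum_coord_invariant (h := fun a => if A a then w p true * G else 0)
      (fun a c => by
        show (if A (Function.update a e c) then w p true * G else 0)
          = (if A a then w p true * G else 0)
        by_cases hAa : A a
        · rw [if_pos hAa, if_pos ((hAup a c).mpr hAa)]
        · rw [if_neg (fun hc => hAa ((hAup a c).mp hc)), if_neg hAa]) false
  rw [hc1, hc2]
  have hP : ∀ k : ℝ, ∑ a : E → Bool, (if A a then k else 0) * bern p a = k * Pp p A := by
    intro k
    unfold Pp
    rw [Finset.mul_sum]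
    apply Finset.sum_congr rfl
    intro a _
    by_cases hAa : A a <;> simp [hAa]
  rw [hP, hP]
  simp only [w, if_true, if_false]
  norm_num
  ring

lemma mix_zero (a b : E → Bool) : mix T f a b 0 = a := by
  funext x
  unfold mix
  rw [if_neg]
  rintro ⟨s, hs, _⟩
  simp at hs

lemma mix_succ_of_ge {a : E → Bool} (b : E → Bool) {t : ℕ} (h : ¬ t < tau T f a) :
    mix T f a b (t + 1) = mix T f a b t := by
  funext x
  unfold mix rev
  have : min (t+1) (tau T f a) = min t (tau T f a) := by omega
  rw [this]

lemma mix_succ_of_lt {a : E → Bool} (b : E → Bool) {t : ℕ} (hT : Distinct T)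
    (h : t < tau T f a) :
    mix T f a b (t + 1)
      = Function.update (mix T f a b t) (query T a t) (b (query T a t)) := by
  have hm1 : min (t+1) (tau T f a) = t + 1 := by omega
  have hm0 : min t (tau T f a) = t := by omega
  funext x
  rcases eq_or_ne x (query T a t) with hx | hx
  · subst hx
    have hrev : rev T f a (t+1) (query T a t) := ⟨t, by omega, rfl⟩
    unfold mix
    rw [if_pos hrev, Function.update_self]
  · rw [Function.update_of_ne hx]
    unfold mix rev
    rw [hm1, hm0]
    have hiff : (∃ s, s < t + 1 ∧ query T a s = x) ↔ (∃ s, s < t ∧ query T a s = x) := by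
      constructor
      · rintro ⟨s, hs, hq⟩
        rcases Nat.lt_succ_iff_lt_or_eq.mp hs with hs' | hs'
        · exact ⟨s, hs', hq⟩
        · subst hs'; exact absurd hq (Ne.symm hx)
      · rintro ⟨s, hs, hq⟩; exact ⟨s, by omega, hq⟩
    by_cases hq : ∃ s, s < t ∧ query T a s = x
    · rw [if_pos (hiff.mpr hq), if_pos hq]
    · rw [if_neg (fun hc => hq (hiff.mp hc)), if_neg hq]

lemma mix_query_eq {a : E → Bool} (b : E → Bool) {t : ℕ} (hT : Distinct T)
    (h : t < tau T f a) : mix T f a b t (query T a t) = a (query T a t) := by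
  unfold mix
  rw [if_neg (not_rev_query T f hT h (tau_le_card T f hT a))]

lemma f_comix_card (hT : Distinct T) (a b : E → Bool) :
    f (comix T f a b (Fintype.card E)) = f a := by
  apply det_tau T f hT a
  intro s hs
  have := comix_agree T f a b (Fintype.card E) s
  apply this
  rw [min_eq_right (tau_le_card T f hT a)]
  exact hs

/-- Step 1 : variance as a double sum. -/
lemma var_eq (hT : Distinct T) :
    Var p f = ∑ a : E → Bool, ∑ b : E → Bool,
      (f a * f a - f a * f (mix T f a b (Fintype.card E))) * (bern p a * bern p b) := by
  have h1 : Ep p (fun ω => f ω * f ω)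
      = ∑ a : E → Bool, ∑ b : E → Bool, (f a * f a) * (bern p a * bern p b) := by
    unfold Ep
    rw [← mul_one (∑ ω : E → Bool, (f ω * f ω) * bern p ω), ← sum_bern (E := E) (p := p),
      Finset.sum_mul_sum]
    apply Finset.sum_congr rfl; intro a _
    apply Finset.sum_congr rfl; intro b _
    ring
  have h2 : Ep p f * Ep p f
      = ∑ a : E → Bool, ∑ b : E → Bool,
          (f a * f (mix T f a b (Fintype.card E))) * (bern p a * bern p b) := by
    unfold Ep
    rw [Finset.sum_mul_sum]
    rw [sum_psi T f hT (Fintype.card E)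
      (fun a b => f a * bern p a * (f b * bern p b))]
    apply Finset.sum_congr rfl; intro a _
    apply Finset.sum_congr rfl; intro b _
    rw [f_comix_card T f hT a b]
    have := bern_pair T f (p := p) a b (Fintype.card E)
    linear_combination (f a * f (mix T f a b (Fintype.card E))) * this
  unfold Var
  rw [h1, h2, ← Finset.sum_sub_distrib]
  apply Finset.sum_congr rfl; intro a _
  rw [← Finset.sum_sub_distrib]
  apply Finset.sum_congr rfl; intro b _
  ring

/-- Step 3 : pointwise bound on one step of the telescope. -/
lemma step3 (hT : Distinct T)
    (hfinc : ∀ ω ω' : E → Bool, (∀ e : E, ω e ≤ ω' e) → f ω ≤ f ω')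
    (a b : E → Bool) (t : ℕ) :
    |f (mix T f a b t) - f (mix T f a b (t + 1))|
      ≤ ∑ e : E, (if t < tau T f a ∧ query T a t = e ∧ a e ≠ b e
          then f (Function.update (mix T f a b t) e true)
              - f (Function.update (mix T f a b t) e false)
          else 0) := by
  have hgap : ∀ (η : E → Bool) (e : E),
      f (Function.update η e false) ≤ f (Function.update η e true) := by
    intro η e
    apply hfinc
    intro x
    rcases eq_or_ne x e with hx | hx
    · subst hx; rw [Function.update_self, Function.update_self]; exact Bool.false_le _
    · rw [Function.update_of_ne hx, Function.update_of_ne hx]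
  by_cases h : t < tau T f a
  · have hsum : ∑ e : E, (if t < tau T f a ∧ query T a t = e ∧ a e ≠ b e
          then f (Function.update (mix T f a b t) e true)
              - f (Function.update (mix T f a b t) e false)
          else 0)
        = (if a (query T a t) ≠ b (query T a t)
          then f (Function.update (mix T f a b t) (query T a t) true)
              - f (Function.update (mix T f a b t) (query T a t) false)
          else 0) := by
      have hzero : ∀ e ∈ Finset.univ, e ≠ query T a t →
          (if t < tau T f a ∧ query T a t = e ∧ a e ≠ b e
            then f (Function.update (mix T f a b t) e true)
                - f (Function.update (mix T f a b t) e false)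
            else 0) = 0 := by
        intro e _ hne
        apply if_neg
        rintro ⟨_, hq, _⟩
        exact hne hq.symm
      rw [Finset.sum_eq_single_of_mem (query T a t) (Finset.mem_univ _) hzero]
      by_cases hne : a (query T a t) ≠ b (query T a t)
      · rw [if_pos ⟨h, rfl, hne⟩, if_pos hne]
      · rw [if_neg (fun hc => hne hc.2.2), if_neg hne]
    rw [hsum, mix_succ_of_lt T f b hT h]
    have hmixq : mix T f a b t (query T a t) = a (query T a t) := mix_query_eq T f b hT h
    by_cases hne : a (query T a t) ≠ b (query T a t)
    · rw [if_pos hne]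
      have hb : b (query T a t) = ! (a (query T a t)) := by
        cases hab : a (query T a t) <;> cases hbb : b (query T a t) <;> simp_all
      cases hae : a (query T a t)
      · have hbe : b (query T a t) = true := by rw [hb, hae]; rfl
        rw [hbe]
        have hfix : mix T f a b t = Function.update (mix T f a b t) (query T a t) false := by
          rw [← hae, ← hmixq, Function.update_eq_self]
        rw [abs_sub_comm]
        nth_rewrite 2 [hfix]
        rw [abs_of_nonneg (by linarith [hgap (mix T f a b t) (query T a t)])]
      · have hbe : b (query T a t) = false := by rw [hb, hae]; rfl
        rw [hbe]
        have hfix : mix T f a b t = Function.update (mix T f a b t) (query T a t) true := by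
          rw [← hae, ← hmixq, Function.update_eq_self]
        nth_rewrite 1 [hfix]
        rw [abs_of_nonneg (by linarith [hgap (mix T f a b t) (query T a t)])]
    · rw [if_neg hne]
      push_neg at hne
      have hup : Function.update (mix T f a b t) (query T a t) (b (query T a t))
          = mix T f a b t := by
        rw [← hne, ← hmixq, Function.update_eq_self]
      rw [hup, sub_self, abs_zero]
  · rw [mix_succ_of_ge T f b h, sub_self, abs_zero]
    apply Finset.sum_nonneg
    intro e _
    rw [if_neg (fun hc => h hc.1)]

/-- Step 5 : additivity of the revealment. -/
lemma step5 (hT : Distinct T) (e : E) :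
    ∑ t ∈ Finset.range (Fintype.card E),
        Pp p (fun a => t < tau T f a ∧ query T a t = e)
      = Pp p (fun a => ∃ t, t < tau T f a ∧ query T a t = e) := by
  unfold Pp
  rw [Finset.sum_comm]
  apply Finset.sum_congr rfl
  intro a _
  by_cases h : ∃ t, t < tau T f a ∧ query T a t = e
  · obtain ⟨t0, ht0, hq0⟩ := h
    have htn : t0 < Fintype.card E := by
      have := tau_le_card T f hT a
      omega
    rw [if_pos ⟨t0, ht0, hq0⟩]
    rw [Finset.sum_eq_single_of_mem t0 (Finset.mem_range.mpr htn)]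
    · rw [if_pos ⟨ht0, hq0⟩]
    · intro t ht hne
      rw [if_neg]
      rintro ⟨ht1, hq1⟩
      rcases lt_or_gt_of_ne hne with hlt | hlt
      · exact hT a t t0 hlt htn (hq1.trans hq0.symm)
      · have : t < Fintype.card E := Finset.mem_range.mp ht
        exact hT a t0 t hlt this (hq0.trans hq1.symm)
  · rw [if_neg h]
    apply Finset.sum_eq_zero
    intro t _
    rw [if_neg (fun hc => h ⟨t, hc⟩)]

/-- Covariance with a coordinate. -/
lemma cov_chi (e : E) :
    Cov p f (fun ω => if ω e then 1 else 0)
      = p * (1 - p) * ∑ b : E → Bool,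
          (f (Function.update b e true) - f (Function.update b e false)) * bern p b := by
  set X : ℝ := ∑ b : E → Bool, f (Function.update b e true) * bern p b with hX
  set Y : ℝ := ∑ b : E → Bool, f (Function.update b e false) * bern p b with hY
  have h1 : Ep p (fun ω => f ω * (if ω e then 1 else 0)) = p * X := by
    unfold Ep
    have : ∀ a : E → Bool, f a * (if a e then (1:ℝ) else 0) * bern p a
        = (if a e = true then f a * bern p a else 0) := by
      intro a
      cases hae : a e <;> simp [hae]
    rw [Finset.sum_congr rfl (fun a _ => this a), sum_coord_update f true]
    simp [w, hX]
  have h2 : Ep p (fun ω => if ω e then (1:ℝ) else 0) = p := by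
    unfold Ep
    have : ∀ a : E → Bool, (if a e then (1:ℝ) else 0) * bern p a
        = (if a e = true then (fun _ : E → Bool => (1:ℝ)) a * bern p a else 0) := by
      intro a
      cases hae : a e <;> simp [hae]
    rw [Finset.sum_congr rfl (fun a _ => this a),
      sum_coord_update (fun _ : E → Bool => (1:ℝ)) true]
    simp only [one_mul, w, if_true]
    rw [sum_bern, mul_one]
  have h3 : Ep p f = p * X + (1 - p) * Y := by
    unfold Ep
    have : ∀ a : E → Bool, f a * bern p a
        = (if a e = true then f a * bern p a else 0)
          + (if a e = false then f a * bern p a else 0) := by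
      intro a
      cases hae : a e <;> simp [hae]
    rw [Finset.sum_congr rfl (fun a _ => this a), Finset.sum_add_distrib,
      sum_coord_update f true, sum_coord_update f false]
    simp [w, hX, hY]
  have hsub : ∑ b : E → Bool,
      (f (Function.update b e true) - f (Function.update b e false)) * bern p b
      = X - Y := by
    rw [hX, hY, ← Finset.sum_sub_distrib]
    apply Finset.sum_congr rfl
    intro b _
    ring
  unfold Cov
  rw [h1, h2, h3, hsub]
  ring

theorem osss_main (hp : p ∈ Set.Icc (0 : ℝ) 1)
    (hf01 : ∀ ω, f ω ∈ Set.Icc (0 : ℝ) 1)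
    (hfinc : ∀ ω ω' : E → Bool, (∀ e : E, ω e ≤ ω' e) → f ω ≤ f ω')
    (hT : Distinct T) :
    Var p f ≤ 2 * ∑ e : E,
      Pp p (fun ω => ∃ t : ℕ, t < tau T f ω ∧ query T ω t = e)
        * Cov p f (fun ω => if ω e then 1 else 0) := by
  have hb : ∀ a : E → Bool, 0 ≤ bern p a := bern_nonneg hp
  set n := Fintype.card E with hn
  set D : ℕ → E → (E → Bool) → (E → Bool) → ℝ := fun t e a b =>
    if t < tau T f a ∧ query T a t = e ∧ a e ≠ b e
      then (f (Function.update (mix T f a b t) e true)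
            - f (Function.update (mix T f a b t) e false)) * (bern p a * bern p b)
      else 0 with hD
  have step2 : Var p f ≤ ∑ a : E → Bool, ∑ b : E → Bool,
      ∑ t ∈ Finset.range n, ∑ e : E, D t e a b := by
    rw [var_eq T f hT]
    apply Finset.sum_le_sum; intro a _
    apply Finset.sum_le_sum; intro b _
    have htel : f a - f (mix T f a b n)
        = ∑ t ∈ Finset.range n, (f (mix T f a b t) - f (mix T f a b (t+1))) := by
      rw [Finset.sum_range_sub' (fun t => f (mix T f a b t))]
      rw [mix_zero]
    have hW : (0:ℝ) ≤ bern p a * bern p b := mul_nonneg (hb a) (hb b)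
    calc (f a * f a - f a * f (mix T f a b n)) * (bern p a * bern p b)
        ≤ (∑ t ∈ Finset.range n, |f (mix T f a b t) - f (mix T f a b (t+1))|)
            * (bern p a * bern p b) := by
          apply mul_le_mul_of_nonneg_right _ hW
          calc f a * f a - f a * f (mix T f a b n)
              = f a * (f a - f (mix T f a b n)) := by ring
            _ ≤ |f a * (f a - f (mix T f a b n))| := le_abs_self _
            _ = |f a| * |f a - f (mix T f a b n)| := abs_mul _ _
            _ ≤ 1 * |f a - f (mix T f a b n)| := by
                apply mul_le_mul_of_nonneg_right _ (abs_nonneg _)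
                rw [abs_of_nonneg (hf01 a).1]
                exact (hf01 a).2
            _ = |∑ t ∈ Finset.range n, (f (mix T f a b t) - f (mix T f a b (t+1)))| := by
                rw [one_mul, htel]
            _ ≤ ∑ t ∈ Finset.range n, |f (mix T f a b t) - f (mix T f a b (t+1))| :=
                Finset.abs_sum_le_sum_abs _ _
      _ = ∑ t ∈ Finset.range n, |f (mix T f a b t) - f (mix T f a b (t+1))|
            * (bern p a * bern p b) := Finset.sum_mul _ _ _
      _ ≤ ∑ t ∈ Finset.range n, ∑ e : E, D t e a b := by
          apply Finset.sum_le_sum; intro t _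
          calc |f (mix T f a b t) - f (mix T f a b (t+1))| * (bern p a * bern p b)
              ≤ (∑ e : E, (if t < tau T f a ∧ query T a t = e ∧ a e ≠ b e
                  then f (Function.update (mix T f a b t) e true)
                      - f (Function.update (mix T f a b t) e false)
                  else 0)) * (bern p a * bern p b) :=
                mul_le_mul_of_nonneg_right (step3 T f hT hfinc a b t) hW
            _ = ∑ e : E, D t e a b := by
                rw [Finset.sum_mul]
                apply Finset.sum_congr rfl
                intro e _
                rw [ite_mul, zero_mul]
  have swap : ∑ a : E → Bool, ∑ b : E → Bool, ∑ t ∈ Finset.range n, ∑ e : E, D t e a b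
      = ∑ t ∈ Finset.range n, ∑ e : E, ∑ a : E → Bool, ∑ b : E → Bool, D t e a b := by
    rw [Finset.sum_congr rfl (fun a _ => Finset.sum_comm)]
    rw [Finset.sum_comm]
    rw [Finset.sum_congr rfl (fun t _ => Finset.sum_congr rfl
      (fun a _ => Finset.sum_comm))]
    rw [Finset.sum_congr rfl (fun t _ => Finset.sum_comm)]
  have step4' : ∀ t ∈ Finset.range n, ∀ e : E,
      ∑ a : E → Bool, ∑ b : E → Bool, D t e a b
        = 2 * (p * (1 - p)) * Pp p (fun a => t < tau T f a ∧ query T a t = e)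
          * ∑ b : E → Bool,
              (f (Function.update b e true) - f (Function.update b e false)) * bern p b :=
    fun t _ e => step4 T f hT t e
  have hfinal : Var p f ≤ ∑ e : E,
      2 * (p * (1 - p))
        * (∑ b : E → Bool,
            (f (Function.update b e true) - f (Function.update b e false)) * bern p b)
        * Pp p (fun a => ∃ t : ℕ, t < tau T f a ∧ query T a t = e) := by
    refine le_trans step2 (le_of_eq ?_)
    rw [swap]
    rw [Finset.sum_congr rfl (fun t ht => Finset.sum_congr rfl (fun e _ => step4' t ht e))]
    rw [Finset.sum_comm]
    apply Finset.sum_congr rfl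
    intro e _
    rw [← step5 T f hT e, Finset.mul_sum]
    apply Finset.sum_congr rfl
    intro t _
    ring
  refine le_trans hfinal (le_of_eq ?_)
  rw [Finset.mul_sum]
  apply Finset.sum_congr rfl
  intro e _
  rw [cov_chi]
  ring

end Main

/-- The OSSS inequality for Bernoulli percolation:
`Var_p(f) ≤ 2 ∑_e δ_e(f,T) Cov_p(f, ω_e)` for every increasing `f : {0,1}^E → [0,1]`
and every decision tree `T` (whose queries are all distinct). -/
theorem osss_bernoulli (p : ℝ) (hp : p ∈ Set.Icc (0 : ℝ) 1)
    (f : (E → Bool) → ℝ) (hf01 : ∀ ω, f ω ∈ Set.Icc (0 : ℝ) 1)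
    (hfinc : ∀ ω ω' : E → Bool, (∀ e : E, ω e ≤ ω' e) → f ω ≤ f ω')
    (T : List (E × Bool) → E)
    (hT : ∀ ω : E → Bool, ∀ s t : ℕ, s < t → t < Fintype.card E →
      query T ω s ≠ query T ω t) :
    Var p f ≤ 2 * ∑ e : E,
      revealment p T f e * Cov p f (fun ω => if ω e then 1 else 0) := by
  exact osss_main T f hp hf01 hfinc hT

end Stmt16
end
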